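/- arXiv:1808.01214 — 5 statements merged into one kernel-verified Lean document; each statement's English description precedes it below -/
import Mathlib

section
/- Every loopless multigraph with maximum degree at most 3 admits an incidence coloring with at most 6 colors. -/
/-- An incidence of a loopless multigraph given by `ends : E → Sym2 V` is a pair
`(v, e)` with `v` an endpoint of `e`. -/
def Incidence {V E : Type*} (ends : E → Sym2 V) : Type _ :=
  {p : V × E // p.1 ∈ ends p.2}

/-- Two distinct incidences are adjacent if they share the vertex, share the edge,
or the edge `vw` joining their vertices is one of the two edges. -/
def IncAdj {V E : Type*} (ends : E → Sym2 V) (p q : Incidence ends) : Prop :=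
  p ≠ q ∧ (p.1.1 = q.1.1 ∨ p.1.2 = q.1.2 ∨
    ends p.1.2 = s(p.1.1, q.1.1) ∨ ends q.1.2 = s(p.1.1, q.1.1))

set_option linter.unusedSectionVars false
set_option maxHeartbeats 1000000

namespace IncProof

open Finset
open scoped Classical

variable {V E : Type*} [Fintype V] [Fintype E] [DecidableEq V] (ends : E → Sym2 V)

/-- degree of a vertex w.r.t. an edge set -/
noncomputable def deg (S : Finset E) (v : V) : ℕ := #(S.filter fun e => v ∈ ends e)

lemma deg_mono {S T : Finset E} (h : S ⊆ T) (v : V) : deg ends S v ≤ deg ends T v :=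
  card_le_card (filter_subset_filter _ h)

lemma deg_union_le (S T : Finset E) (v : V) :
    deg ends (S ∪ T) v ≤ deg ends S v + deg ends T v := by
  classical
  rw [deg, filter_union]
  exact card_union_le _ _

lemma deg_union_eq {S T : Finset E} (h : Disjoint S T) (v : V) :
    deg ends (S ∪ T) v = deg ends S v + deg ends T v := by
  rw [deg, filter_union, card_union_of_disjoint (disjoint_filter_filter h)]; rfl

lemma deg_insert_of_mem {S : Finset E} {e : E} (he : e ∉ S) {v : V} (hv : v ∈ ends e) :
    deg ends (insert e S) v = deg ends S v + 1 := by
  rw [deg, filter_insert, if_pos hv, card_insert_of_notMem (fun h => he (mem_filter.1 h).1)]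
  rfl

lemma deg_insert_le (S : Finset E) (e : E) (v : V) :
    deg ends (insert e S) v ≤ deg ends S v + 1 := by
  classical
  rw [deg, filter_insert]
  split
  · exact card_insert_le _ _
  · exact Nat.le_succ_of_le le_rfl

lemma deg_insert_of_not_mem_ends {S : Finset E} {e : E} {v : V} (hv : v ∉ ends e) :
    deg ends (insert e S) v = deg ends S v := by
  rw [deg, filter_insert, if_neg hv]; rfl

lemma deg_erase_of_mem {S : Finset E} {e : E} (he : e ∈ S) {v : V} (hv : v ∈ ends e) :
    deg ends (S.erase e) v = deg ends S v - 1 := by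
  rw [deg, filter_erase, card_erase_of_mem (mem_filter.2 ⟨he, hv⟩)]; rfl

lemma deg_erase_of_not_mem_ends {S : Finset E} {e : E} {v : V} (hv : v ∉ ends e) :
    deg ends (S.erase e) v = deg ends S v := by
  rw [deg, deg, filter_erase]
  congr 1
  exact erase_eq_of_notMem (fun h => hv (mem_filter.1 h).2)

lemma deg_erase_le (S : Finset E) (e : E) (v : V) :
    deg ends (S.erase e) v ≤ deg ends S v := deg_mono ends (erase_subset _ _) v

/-- an edge of `S` at `v`, if `deg ≥ 1` -/
lemma exists_edge_of_deg_pos {S : Finset E} {v : V} (h : 1 ≤ deg ends S v) :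
    ∃ e ∈ S, v ∈ ends e := by
  obtain ⟨e, he⟩ := card_pos.1 h
  exact ⟨e, (mem_filter.1 he).1, (mem_filter.1 he).2⟩

lemma unique_edge_of_deg_le_one {S : Finset E} {v : V} (h : deg ends S v ≤ 1)
    {e f : E} (he : e ∈ S) (hve : v ∈ ends e) (hf : f ∈ S) (hvf : v ∈ ends f) : e = f := by
  exact card_le_one.1 h e (mem_filter.2 ⟨he, hve⟩) f (mem_filter.2 ⟨hf, hvf⟩)

/-- endpoints of a loopless edge -/
lemma sym2_exists (z : Sym2 V) : ∃ a b, z = s(a, b) := Sym2.ind (fun a b => ⟨a, b, rfl⟩) z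

lemma exists_ends (e : E) (hl : ¬ (ends e).IsDiag) : ∃ a b, a ≠ b ∧ ends e = s(a, b) := by
  obtain ⟨a, b, hab⟩ := sym2_exists (ends e)
  refine ⟨a, b, ?_, hab⟩
  rintro rfl
  rw [hab] at hl
  exact hl (Sym2.mk_isDiag_iff.2 rfl)

lemma other_end {e : E} {v : V} (hv : v ∈ ends e) : ∃ w, ends e = s(v, w) := by
  exact ⟨Sym2.Mem.other hv, (Sym2.other_spec hv).symm⟩

lemma sum_deg (W : Finset V) (S : Finset E) :
    ∑ v ∈ W, deg ends S v = ∑ e ∈ S, #(W.filter (· ∈ ends e)) := by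
  simp only [deg, card_filter]
  rw [Finset.sum_comm]

/-- membership pair filter card is two when both distinct endpoints are in W -/
lemma card_filter_ends_eq_two {e : E} {a b : V} (hab : a ≠ b) (he : ends e = s(a, b))
    {W : Finset V} (ha : a ∈ W) (hb : b ∈ W) : #(W.filter (· ∈ ends e)) = 2 := by
  have : W.filter (· ∈ ends e) = {a, b} := by
    ext x
    simp only [mem_filter, he, Sym2.mem_iff, mem_insert, mem_singleton]
    constructor
    · rintro ⟨_, h | h⟩ <;> simp [h]
    · rintro (rfl | rfl) <;> simp [ha, hb]
  rw [this, card_insert_of_notMem (by simp [hab]), card_singleton]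

lemma card_filter_ends_eq_zero {e : E} {a b : V} (he : ends e = s(a, b))
    {W : Finset V} (ha : a ∉ W) (hb : b ∉ W) : #(W.filter (· ∈ ends e)) = 0 := by
  rw [card_eq_zero, filter_eq_empty_iff]
  intro x hx hxe
  rw [he, Sym2.mem_iff] at hxe
  rcases hxe with rfl | rfl
  · exact ha hx
  · exact hb hx


/-! ### Connectivity -/

def estep (S : Finset E) (x y : V) : Prop := ∃ e ∈ S, ends e = s(x, y)

def Con (S : Finset E) : V → V → Prop := Relation.ReflTransGen (estep ends S)

lemma estep_symm {S : Finset E} {x y : V} (h : estep ends S x y) : estep ends S y x := by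
  obtain ⟨e, he, hxy⟩ := h
  exact ⟨e, he, by rw [hxy, Sym2.eq_swap]⟩

lemma con_symm {S : Finset E} {x y : V} (h : Con ends S x y) : Con ends S y x := by
  induction h with
  | refl => exact .refl
  | tail _ hstep ih => exact Relation.ReflTransGen.trans (.single (estep_symm ends hstep)) ih

lemma con_mono {S T : Finset E} (hST : S ⊆ T) {x y : V} (h : Con ends S x y) : Con ends T x y := by
  refine Relation.ReflTransGen.mono ?_ _ _ h
  rintro a b ⟨e, he, hab⟩
  exact ⟨e, hST he, hab⟩

/-- if no `S`-edge touches `u`, then `u` reaches only itself -/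
lemma con_trap0 {S : Finset E} {u : V} (h : ∀ g ∈ S, u ∉ ends g) {z : V}
    (hcon : Con ends S u z) : z = u := by
  induction hcon with
  | refl => rfl
  | tail _ hstep ih =>
    obtain ⟨e, heS, hee⟩ := hstep
    subst ih
    exact absurd (by rw [hee]; exact Sym2.mem_mk_left _ _) (h e heS)

/-- if the only `S`-edge at `u` and at `x` is `f = s(u,x)`, then `u` reaches only `u, x` -/
lemma con_trap2 {S : Finset E} {u x : V} {f : E} (hf : ends f = s(u, x))
    (hu : ∀ g ∈ S, u ∈ ends g → g = f) (hx : ∀ g ∈ S, x ∈ ends g → g = f) {z : V}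
    (hcon : Con ends S u z) : z = u ∨ z = x := by
  induction hcon with
  | refl => exact Or.inl rfl
  | tail hub hstep ih =>
    obtain ⟨e, heS, hee⟩ := hstep
    rename_i b c
    have hbe : b ∈ ends e := by rw [hee]; exact Sym2.mem_mk_left _ _
    have hef : e = f := by
      rcases ih with rfl | rfl
      · exact hu e heS hbe
      · exact hx e heS hbe
    subst hef
    have h2 : s(u, x) = s(b, c) := by rw [← hf, hee]
    rw [Sym2.eq_iff] at h2
    rcases h2 with ⟨rfl, rfl⟩ | ⟨rfl, rfl⟩
    · exact Or.inr rfl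
    · exact Or.inl rfl

/-- a reached vertex other than the start is touched by an edge of `S` -/
lemma con_touch {S : Finset E} {u z : V} (h : Con ends S u z) (hne : z ≠ u) :
    ∃ e ∈ S, z ∈ ends e := by
  induction h with
  | refl => exact absurd rfl hne
  | tail _ hstep _ =>
    obtain ⟨e, heS, hee⟩ := hstep
    exact ⟨e, heS, by rw [hee]; exact Sym2.mem_mk_right _ _⟩

/-! ### Parity / bridge lemma -/

/-- 2-regular-on-support predicate -/
def Reg2 (S : Finset E) : Prop := ∀ e ∈ S, ∀ v ∈ ends e, 2 ≤ deg ends S v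

/-- key parity lemma: in a 2-regular (on support) edge set, removing one edge leaves
its endpoints connected. -/
lemma bridge (hl : ∀ e : E, ¬ (ends e).IsDiag) {T : Finset E}
    (hT : ∀ e ∈ T, ∀ v ∈ ends e, deg ends T v = 2) {e : E} (he : e ∈ T)
    {u v : V} (hev : ends e = s(u, v)) : Con ends (T.erase e) u v := by
  by_contra hcon
  have huv : u ≠ v := by
    rintro rfl
    exact hl e (hev ▸ Sym2.mk_isDiag_iff.2 rfl)
  set W : Finset V := univ.filter (fun z => Con ends (T.erase e) u z) with hW
  have huW : u ∈ W := mem_filter.2 ⟨mem_univ _, .refl⟩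
  have hvW : v ∉ W := fun h => hcon (mem_filter.1 h).2
  -- closure of W
  have hclosed : ∀ g ∈ T.erase e, ∀ a ∈ ends g, a ∈ W → ∀ b ∈ ends g, b ∈ W := by
    intro g hg a ha haW b hb
    obtain ⟨a', b', hab⟩ := sym2_exists (ends g)
    have hcona : Con ends (T.erase e) u a := (mem_filter.1 haW).2
    refine mem_filter.2 ⟨mem_univ _, ?_⟩
    rw [hab, Sym2.mem_iff] at ha hb
    rcases ha with rfl | rfl <;> rcases hb with rfl | rfl
    · exact hcona
    · exact hcona.tail ⟨g, hg, hab⟩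
    · exact hcona.tail ⟨g, hg, by rw [hab, Sym2.eq_swap]⟩
    · exact hcona
  -- sum of degrees over W is even
  have heven : Even (∑ z ∈ W, deg ends (T.erase e) z) := by
    rw [sum_deg]
    refine Finset.even_sum _ (fun g hg => ?_)
    obtain ⟨a, b, hab, hge⟩ := exists_ends ends g (hl g)
    by_cases haW : a ∈ W
    · have hbW : b ∈ W := hclosed g hg a (by rw [hge]; exact Sym2.mem_mk_left _ _) haW b
        (by rw [hge]; exact Sym2.mem_mk_right _ _)
      rw [card_filter_ends_eq_two ends hab hge haW hbW]
      exact ⟨1, rfl⟩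
    · by_cases hbW : b ∈ W
      · exact absurd (hclosed g hg b (by rw [hge]; exact Sym2.mem_mk_right _ _) hbW a
          (by rw [hge]; exact Sym2.mem_mk_left _ _)) haW
      · rw [card_filter_ends_eq_zero ends hge haW hbW]
        exact ⟨0, rfl⟩
  -- pointwise: the sum is odd
  have hpt : ∀ z ∈ W, deg ends (T.erase e) z = if z = u then 1 else 2 := by
    intro z hzW
    by_cases hzu : z = u
    · subst hzu
      rw [if_pos rfl, deg_erase_of_mem ends he (by rw [hev]; exact Sym2.mem_mk_left _ _),
        hT e he z (by rw [hev]; exact Sym2.mem_mk_left _ _)]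
    · rw [if_neg hzu]
      have hcz : Con ends (T.erase e) u z := (mem_filter.1 hzW).2
      obtain ⟨g, hg, hzg⟩ := con_touch ends hcz hzu
      have hzv : z ≠ v := by rintro rfl; exact hvW hzW
      have hznotine : z ∉ ends e := by
        rw [hev, Sym2.mem_iff]
        rintro (rfl | rfl)
        · exact hzu rfl
        · exact hzv rfl
      rw [deg_erase_of_not_mem_ends ends hznotine]
      exact hT g (mem_of_mem_erase hg) z hzg
  rw [Finset.sum_congr rfl hpt] at heven
  rw [← Finset.insert_erase huW, Finset.sum_insert (notMem_erase _ _), if_pos rfl] at heven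
  have h2 : ∑ z ∈ W.erase u, (if z = u then 1 else 2) = 2 * #(W.erase u) := by
    rw [Finset.sum_congr rfl (fun z hz => if_neg (Finset.ne_of_mem_erase hz)),
      Finset.sum_const, smul_eq_mul, mul_comm]
  rw [h2] at heven
  obtain ⟨k, hk⟩ := heven
  omega

/-! ### Core -/

noncomputable def core (S : Finset E) : Finset E :=
  S.filter (fun e => ∃ T ⊆ S, Reg2 ends T ∧ e ∈ T)

lemma core_subset (S : Finset E) : core ends S ⊆ S := filter_subset _ _

lemma core_mono {S S' : Finset E} (h : S ⊆ S') : core ends S ⊆ core ends S' := by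
  intro g hg
  obtain ⟨hgS, T, hTS, hT2, hgT⟩ := mem_filter.1 hg
  exact mem_filter.2 ⟨h hgS, T, hTS.trans h, hT2, hgT⟩

lemma witness_sub_core {S T : Finset E} (hTS : T ⊆ S) (hT2 : Reg2 ends T) :
    T ⊆ core ends S := fun g hg => mem_filter.2 ⟨hTS hg, T, hTS, hT2, hg⟩

lemma core_reg2 (S : Finset E) : Reg2 ends (core ends S) := by
  intro g hg v hv
  obtain ⟨hgS, T, hTS, hT2, hgT⟩ := mem_filter.1 hg
  exact le_trans (hT2 g hgT v hv) (deg_mono ends (witness_sub_core ends hTS hT2) v)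

/-- adding a bridge does not create cores -/
lemma core_insert_bridge (hl : ∀ e : E, ¬ (ends e).IsDiag) {S : Finset E} {e : E}
    {u v : V} (hev : ends e = s(u, v))
    (hS2 : ∀ w, deg ends S w ≤ 2)
    (h2 : ∀ w ∈ ends e, deg ends (insert e S) w ≤ 2)
    (hcon : ¬ Con ends S u v) : core ends (insert e S) ⊆ core ends S := by
  intro g hg
  obtain ⟨hgS, T, hTS, hT2, hgT⟩ := mem_filter.1 hg
  have hTS' : T.erase e ⊆ S := by
    intro f hf
    rcases mem_insert.1 (hTS (mem_of_mem_erase hf)) with rfl | h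
    · exact absurd rfl (ne_of_mem_erase hf)
    · exact h
  by_cases heT : e ∈ T
  · exfalso
    have hTdeg : ∀ f ∈ T, ∀ w ∈ ends f, deg ends T w = 2 := by
      intro f hf w hw
      refine le_antisymm ?_ (hT2 f hf w hw)
      calc deg ends T w ≤ deg ends (insert e S) w := deg_mono ends hTS w
        _ ≤ 2 := by
          by_cases hwe : w ∈ ends e
          · exact h2 w hwe
          · rw [deg_insert_of_not_mem_ends ends hwe]; exact hS2 w
    exact hcon (con_mono ends hTS' (bridge ends hl hTdeg heT hev))
  · have hTS'' : T ⊆ S := by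
      intro f hf
      exact hTS' (mem_erase.2 ⟨fun h => heT (h ▸ hf), hf⟩)
    exact mem_filter.2 ⟨hTS'' hgT, T, hTS'', hT2, hgT⟩


/-! ### Initial partition into two max-degree-2 classes -/

lemma ends_eq_of_two_mem {e : E} {x y : V} (hx : x ∈ ends e) (hy : y ∈ ends e)
    (hxy : x ≠ y) : ends e = s(x, y) := by
  obtain ⟨a, b, hab⟩ := sym2_exists (ends e)
  rw [hab, Sym2.mem_iff] at hx hy
  rw [hab]
  rcases hx with rfl | rfl <;> rcases hy with rfl | rfl
  · exact absurd rfl hxy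
  · rfl
  · exact Sym2.eq_swap
  · exact absurd rfl hxy

lemma exists_partition (hl : ∀ e : E, ¬ (ends e).IsDiag) (D : Finset E)
    (hD3 : ∀ v, deg ends D v ≤ 3) :
    ∃ A B : Finset E, Disjoint A B ∧ A ∪ B = D ∧
      (∀ v, deg ends A v ≤ 2) ∧ (∀ v, deg ends B v ≤ 2) := by
  classical
  -- maximal matching
  set IsMatch : Finset E → Prop :=
    fun M => M ⊆ D ∧ ∀ e ∈ M, ∀ f ∈ M, e ≠ f → ∀ v ∈ ends e, v ∉ ends f with hIsMatch
  have hne : ((univ : Finset (Finset E)).filter IsMatch).Nonempty :=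
    ⟨∅, mem_filter.2 ⟨mem_univ _, empty_subset _, by simp⟩⟩
  obtain ⟨M, hMmem, hMmax⟩ := Finset.exists_max_image _ card hne
  obtain ⟨hMD, hMmatch⟩ : IsMatch M := (mem_filter.1 hMmem).2
  -- unmatched vertices
  set unm : V → Prop := fun v => ∀ e ∈ M, v ∉ ends e with hunm
  -- independence of unmatched vertices
  have hindep : ∀ u w : V, unm u → unm w → ∀ e ∈ D, ends e ≠ s(u, w) := by
    intro u w hu hw e heD hew
    have heM : e ∉ M := fun h => hu e h (by rw [hew]; exact Sym2.mem_mk_left _ _)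
    have : IsMatch (insert e M) := by
      constructor
      · exact insert_subset heD hMD
      · intro a ha b hb hab v hva
        rcases mem_insert.1 ha with rfl | haM <;> rcases mem_insert.1 hb with rfl | hbM
        · exact absurd rfl hab
        · intro hvb
          rw [hew, Sym2.mem_iff] at hva
          rcases hva with rfl | rfl
          · exact hu b hbM hvb
          · exact hw b hbM hvb
        · intro hvb
          rw [hew, Sym2.mem_iff] at hvb
          rcases hvb with rfl | rfl
          · exact hu a haM hva
          · exact hw a haM hva
        · exact hMmatch a haM b hbM hab v hva
    have hcard := hMmax _ (mem_filter.2 ⟨mem_univ _, this⟩)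
    rw [card_insert_of_notMem heM] at hcard
    omega
  -- the deficient set U and neighborhoods
  set U : Finset V := univ.filter (fun v => deg ends D v = 3 ∧ unm v) with hU
  set N : V → Finset V := fun v => univ.filter (fun w => ∃ e ∈ D, ends e = s(v, w)) with hN
  -- Hall condition
  have hall : ∀ s : Finset {x // x ∈ U}, #s ≤ #(s.biUnion (fun x => N x.1)) := by
    intro s
    set sv : Finset V := s.image Subtype.val with hsv
    have hsvcard : #sv = #s := card_image_of_injective _ Subtype.val_injective
    set B : Finset V := s.biUnion (fun x => N x.1) with hB
    have hsvU : ∀ v ∈ sv, v ∈ U := by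
      rintro v hv
      obtain ⟨x, _, rfl⟩ := mem_image.1 hv
      exact x.2
    -- each edge has at most one endpoint in sv, and then at least one in B
    have hkey : ∀ e ∈ D, #(sv.filter (· ∈ ends e)) ≤ #(B.filter (· ∈ ends e)) := by
      intro e heD
      have h1 : #(sv.filter (· ∈ ends e)) ≤ 1 := by
        refine card_le_one.2 ?_
        intro a ha b hb
        by_contra hab
        have haU := hsvU a (mem_filter.1 ha).1
        have hbU := hsvU b (mem_filter.1 hb).1
        exact hindep a b (mem_filter.1 haU).2.2 (mem_filter.1 hbU).2.2 e heD
          (ends_eq_of_two_mem ends (mem_filter.1 ha).2 (mem_filter.1 hb).2 hab)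
      rcases Nat.eq_zero_or_pos #(sv.filter (· ∈ ends e)) with h0 | hpos
      · omega
      · obtain ⟨v, hv⟩ := card_pos.1 hpos
        obtain ⟨hvs, hve⟩ := mem_filter.1 hv
        obtain ⟨w, hw⟩ := other_end ends hve
        obtain ⟨x, hxs, hxv⟩ := mem_image.1 hvs
        have hwB : w ∈ B := by
          refine mem_biUnion.2 ⟨x, hxs, ?_⟩
          exact mem_filter.2 ⟨mem_univ _, e, heD, by rw [hxv]; exact hw⟩
        have : w ∈ B.filter (· ∈ ends e) :=
          mem_filter.2 ⟨hwB, by rw [hw]; exact Sym2.mem_mk_right _ _⟩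
        have := card_pos.2 ⟨w, this⟩
        omega
    have hleft : 3 * #s = ∑ v ∈ sv, deg ends D v := by
      rw [Finset.sum_congr rfl (fun v hv => (mem_filter.1 (hsvU v hv)).2.1), Finset.sum_const,
        smul_eq_mul, hsvcard, mul_comm]
    have hright : ∑ w ∈ B, deg ends D w ≤ 3 * #B := by
      calc ∑ w ∈ B, deg ends D w ≤ ∑ _w ∈ B, 3 := Finset.sum_le_sum (fun w _ => hD3 w)
        _ = 3 * #B := by rw [Finset.sum_const, smul_eq_mul, mul_comm]
    have hmid : ∑ v ∈ sv, deg ends D v ≤ ∑ w ∈ B, deg ends D w := by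
      rw [sum_deg, sum_deg]
      exact Finset.sum_le_sum hkey
    omega
  -- apply Hall
  obtain ⟨f, hfinj, hfmem⟩ :=
    (Finset.all_card_le_biUnion_card_iff_exists_injective (fun x : {x // x ∈ U} => N x.1)).1 hall
  -- pick edges
  have hpk : ∀ x : {x // x ∈ U}, ∃ e ∈ D, ends e = s(x.1, f x) := by
    intro x
    have := hfmem x
    rw [hN] at this
    exact (mem_filter.1 this).2
  set pk : {x // x ∈ U} → E := fun x => (hpk x).choose with hpkdef
  have hpkD : ∀ x, pk x ∈ D := fun x => (hpk x).choose_spec.1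
  have hpkends : ∀ x, ends (pk x) = s(x.1, f x) := fun x => (hpk x).choose_spec.2
  -- f x is matched
  have hfxmatched : ∀ x : {x // x ∈ U}, ¬ unm (f x) := by
    intro x hunmfx
    exact hindep x.1 (f x) (mem_filter.1 x.2).2.2 hunmfx (pk x) (hpkD x) (hpkends x)
  set P : Finset E := (univ : Finset {x // x ∈ U}).image pk with hP
  set B₀ : Finset E := M ∪ P with hB₀
  have hPdeg : ∀ z, deg ends P z ≤ 1 := by
    intro z
    refine card_le_one.2 ?_
    intro e₁ h₁ e₂ h₂
    obtain ⟨he₁, hz₁⟩ := mem_filter.1 h₁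
    obtain ⟨he₂, hz₂⟩ := mem_filter.1 h₂
    obtain ⟨x₁, _, rfl⟩ := mem_image.1 he₁
    obtain ⟨x₂, _, rfl⟩ := mem_image.1 he₂
    rw [hpkends x₁, Sym2.mem_iff] at hz₁
    rw [hpkends x₂, Sym2.mem_iff] at hz₂
    have hx12 : x₁ = x₂ := by
      rcases hz₁ with rfl | rfl <;> rcases hz₂ with h | h
      · exact Subtype.ext h
      · exact absurd (mem_filter.1 x₁.2).2.2 (h ▸ hfxmatched x₂)
      · exact absurd (mem_filter.1 x₂.2).2.2 (h.symm ▸ hfxmatched x₁)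
      · exact hfinj h
    rw [hx12]
  have hMdeg : ∀ z, deg ends M z ≤ 1 := by
    intro z
    refine card_le_one.2 ?_
    intro e₁ h₁ e₂ h₂
    by_contra hne'
    exact hMmatch e₁ (mem_filter.1 h₁).1 e₂ (mem_filter.1 h₂).1 hne' z (mem_filter.1 h₁).2
      (mem_filter.1 h₂).2
  have hB₀deg : ∀ z, deg ends B₀ z ≤ 2 := by
    intro z
    calc deg ends B₀ z ≤ deg ends M z + deg ends P z := deg_union_le ends M P z
      _ ≤ 2 := by have := hPdeg z; have := hMdeg z; omega
  have hB₀D : B₀ ⊆ D := by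
    refine union_subset hMD ?_
    intro e he
    obtain ⟨x, _, rfl⟩ := mem_image.1 he
    exact hpkD x
  refine ⟨D \ B₀, B₀, sdiff_disjoint, sdiff_union_of_subset hB₀D, ?_, hB₀deg⟩
  intro v
  have hsplit : deg ends D v = deg ends (D \ B₀) v + deg ends B₀ v := by
    rw [← deg_union_eq ends sdiff_disjoint, sdiff_union_of_subset hB₀D]
  rcases Nat.lt_or_ge (deg ends D v) 3 with h3 | h3
  · omega
  · have hv3 : deg ends D v = 3 := le_antisymm (hD3 v) h3
    have hB₀pos : 1 ≤ deg ends B₀ v := by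
      by_cases hvm : unm v
      · have hvU : v ∈ U := mem_filter.2 ⟨mem_univ _, hv3, hvm⟩
        refine card_pos.2 ⟨pk ⟨v, hvU⟩, mem_filter.2 ⟨?_, ?_⟩⟩
        · exact mem_union_right _ (mem_image.2 ⟨⟨v, hvU⟩, mem_univ _, rfl⟩)
        · rw [hpkends ⟨v, hvU⟩]; exact Sym2.mem_mk_left _ _
      · simp only [hunm, not_forall] at hvm
        obtain ⟨g, hgM, hgv⟩ := hvm
        rw [not_not] at hgv
        exact card_pos.2 ⟨g, mem_filter.2 ⟨mem_union_left _ hgM, hgv⟩⟩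
    omega


/-! ### Acyclification -/

lemma filter_eq_of_deg {T A : Finset E} (hTA : T ⊆ A) {z : V}
    (h2 : 2 ≤ deg ends T z) (hA2 : deg ends A z ≤ 2) :
    A.filter (z ∈ ends ·) = T.filter (z ∈ ends ·) :=
  (eq_of_subset_of_card_le (filter_subset_filter _ hTA) (le_trans hA2 h2)).symm

/-- the one-edge move: `e₀` is a core edge of `A` whose endpoints are not `B`-connected -/
lemma move1 (hl : ∀ e : E, ¬ (ends e).IsDiag) {D A B : Finset E}
    (hd : Disjoint A B) (hAB : A ∪ B = D)
    (hA2 : ∀ v, deg ends A v ≤ 2) (hB2 : ∀ v, deg ends B v ≤ 2)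
    {e₀ : E} (he₀ : e₀ ∈ core ends A) {a b : V} (hev : ends e₀ = s(a, b))
    (hcon : ¬ Con ends B a b) (hdega : deg ends B a ≤ 1) (hdegb : deg ends B b ≤ 1) :
    ∃ A' B' : Finset E, Disjoint A' B' ∧ A' ∪ B' = D ∧
      (∀ v, deg ends A' v ≤ 2) ∧ (∀ v, deg ends B' v ≤ 2) ∧
      #(core ends A') + #(core ends B') < #(core ends A) + #(core ends B) := by
  classical
  have heA : e₀ ∈ A := core_subset ends A he₀
  have heB : e₀ ∉ B := fun h => (Finset.disjoint_left.1 hd) heA h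
  refine ⟨A.erase e₀, insert e₀ B, ?_, ?_, ?_, ?_, ?_⟩
  · rw [Finset.disjoint_insert_right]
    exact ⟨notMem_erase _ _, Finset.disjoint_of_subset_left (erase_subset _ _) hd⟩
  · rw [Finset.union_insert, ← Finset.insert_union, insert_erase heA, hAB]
  · exact fun v => le_trans (deg_erase_le ends A e₀ v) (hA2 v)
  · intro w
    by_cases hw : w ∈ ends e₀
    · rw [deg_insert_of_mem ends heB hw]
      rw [hev, Sym2.mem_iff] at hw
      rcases hw with rfl | rfl
      · omega
      · omega
    · rw [deg_insert_of_not_mem_ends ends hw]; exact hB2 w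
  · have hcA : core ends (A.erase e₀) ⊆ (core ends A).erase e₀ := by
      intro g hg
      obtain ⟨hgA, T, hTA, hT2, hgT⟩ := mem_filter.1 hg
      refine mem_erase.2 ⟨?_, core_mono ends (erase_subset _ _) hg⟩
      exact ne_of_mem_erase (hTA hgT)
    have h2 : ∀ w ∈ ends e₀, deg ends (insert e₀ B) w ≤ 2 := by
      intro w hw
      rw [deg_insert_of_mem ends heB hw]
      rw [hev, Sym2.mem_iff] at hw
      rcases hw with rfl | rfl
      · omega
      · omega
    have hcB : core ends (insert e₀ B) ⊆ core ends B :=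
      core_insert_bridge ends hl hev hB2 h2 hcon
    have h1 : #(core ends (A.erase e₀)) ≤ #((core ends A).erase e₀) := card_le_card hcA
    rw [card_erase_of_mem he₀] at h1
    have h2' : #(core ends (insert e₀ B)) ≤ #(core ends B) := card_le_card hcB
    have : 1 ≤ #(core ends A) := card_pos.2 ⟨e₀, he₀⟩
    omega

lemma improve (hl : ∀ e : E, ¬ (ends e).IsDiag) {D A B : Finset E}
    (htrip : ∀ e₁ ∈ D, ∀ e₂ ∈ D, ∀ e₃ ∈ D, e₁ ≠ e₂ → e₁ ≠ e₃ → e₂ ≠ e₃ →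
      ends e₁ = ends e₂ → ends e₁ = ends e₃ → False)
    (hd : Disjoint A B) (hAB : A ∪ B = D)
    (hA2 : ∀ v, deg ends A v ≤ 2) (hB2 : ∀ v, deg ends B v ≤ 2)
    (hD3 : ∀ v, deg ends D v ≤ 3)
    (hne : (core ends A).Nonempty) :
    ∃ A' B' : Finset E, Disjoint A' B' ∧ A' ∪ B' = D ∧
      (∀ v, deg ends A' v ≤ 2) ∧ (∀ v, deg ends B' v ≤ 2) ∧
      #(core ends A') + #(core ends B') < #(core ends A) + #(core ends B) := by
  classical
  have hsum : ∀ v, deg ends A v + deg ends B v ≤ 3 := by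
    intro v
    rw [← deg_union_eq ends hd, hAB]
    exact hD3 v
  have hAD : A ⊆ D := hAB ▸ subset_union_left
  have hBD : B ⊆ D := hAB ▸ subset_union_right
  obtain ⟨e, heK⟩ := hne
  have heA : e ∈ A := core_subset ends A heK
  obtain ⟨u, v, huv, hev⟩ := exists_ends ends e (hl e)
  have hue : u ∈ ends e := by rw [hev]; exact Sym2.mem_mk_left _ _
  have hve : v ∈ ends e := by rw [hev]; exact Sym2.mem_mk_right _ _
  have hKreg := core_reg2 ends A
  have hAu : deg ends A u = 2 :=
    le_antisymm (hA2 u) (le_trans (hKreg e heK u hue) (deg_mono ends (core_subset ends A) u))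
  have hAv : deg ends A v = 2 :=
    le_antisymm (hA2 v) (le_trans (hKreg e heK v hve) (deg_mono ends (core_subset ends A) v))
  have hBu : deg ends B u ≤ 1 := by have := hsum u; omega
  have hBv : deg ends B v ≤ 1 := by have := hsum v; omega
  by_cases hcon : Con ends B u v
  case neg =>
    exact move1 ends hl hd hAB hA2 hB2 heK hev hcon hBu hBv
  case pos =>
    -- the unique B-edge at u
    have hBu1 : 1 ≤ deg ends B u := by
      rcases (Relation.ReflTransGen.cases_head hcon) with h | ⟨c, ⟨g', hg', hge⟩, _⟩
      · exact absurd h huv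
      · exact card_pos.2 ⟨g', mem_filter.2 ⟨hg', by rw [hge]; exact Sym2.mem_mk_left _ _⟩⟩
    obtain ⟨f, hfB, huf⟩ := exists_edge_of_deg_pos ends hBu1
    have hufuniq : ∀ g ∈ B, u ∈ ends g → g = f :=
      fun g hg hug => unique_edge_of_deg_le_one ends hBu hg hug hfB huf
    obtain ⟨x, hfx⟩ := other_end ends huf
    have hxu : x ≠ u := by
      rintro rfl
      exact hl f (hfx ▸ Sym2.mk_isDiag_iff.2 rfl)
    -- the unique B-edge at v
    have hBv1 : 1 ≤ deg ends B v := by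
      rcases (Relation.ReflTransGen.cases_head (con_symm ends hcon)) with h | ⟨c, ⟨g', hg', hge⟩, _⟩
      · exact absurd h.symm huv
      · exact card_pos.2 ⟨g', mem_filter.2 ⟨hg', by rw [hge]; exact Sym2.mem_mk_left _ _⟩⟩
    by_cases hxv : x = v
    case pos =>
      subst hxv
      -- CASE 2a : f is parallel to e; move the second core edge at u
      have hvf : x ∈ ends f := by rw [hfx]; exact Sym2.mem_mk_right _ _
      have hvfuniq : ∀ g ∈ B, x ∈ ends g → g = f :=
        fun g hg hvg => unique_edge_of_deg_le_one ends hBv hg hvg hfB hvf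
      -- second core edge at u
      have h2u : 1 < #((core ends A).filter (u ∈ ends ·)) := hKreg e heK u hue
      obtain ⟨e'', he''mem, he''ne⟩ := Finset.exists_mem_ne h2u e
      obtain ⟨he''K, hue''⟩ := mem_filter.1 he''mem
      obtain ⟨w, he''w⟩ := other_end ends hue''
      have hwu : w ≠ u := by
        rintro rfl
        exact hl e'' (he''w ▸ Sym2.mk_isDiag_iff.2 rfl)
      have he''A : e'' ∈ A := core_subset ends A he''K
      have hfe : f ≠ e := fun h => (Finset.disjoint_left.1 hd) heA (h ▸ hfB)
      have hfe'' : f ≠ e'' := fun h => (Finset.disjoint_left.1 hd) he''A (h ▸ hfB)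
      have hwv : w ≠ x := by
        rintro rfl
        exact htrip e (hAD heA) e'' (hAD he''A) f (hBD hfB) (Ne.symm he''ne) (Ne.symm hfe)
          (Ne.symm hfe'') (by rw [hev, he''w]) (by rw [hev, hfx])
      have hconuw : ¬ Con ends B u w := by
        intro h
        rcases con_trap2 ends hfx hufuniq hvfuniq h with rfl | rfl
        · exact hwu rfl
        · exact hwv rfl
      have hBw : deg ends B w ≤ 1 := by
        have hAw : 2 ≤ deg ends A w := by
          refine le_trans (hKreg e'' he''K w ?_) (deg_mono ends (core_subset ends A) w)
          rw [he''w]; exact Sym2.mem_mk_right _ _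
        have := hsum w
        omega
      exact move1 ends hl hd hAB hA2 hB2 he''K he''w hconuw (by omega) hBw
    case neg =>
      -- CASE 2b : swap f and e
      have hxe : x ∉ ends e := by
        rw [hev, Sym2.mem_iff]
        rintro (rfl | rfl)
        · exact hxu rfl
        · exact hxv rfl
      have hvf : v ∉ ends f := by
        rw [hfx, Sym2.mem_iff]
        rintro (rfl | rfl)
        · exact huv rfl
        · exact (hxv rfl).elim
      have hBx2 : deg ends B x = 2 := by
        refine le_antisymm (hB2 x) ?_
        by_contra hlt
        have hxle : deg ends B x ≤ 1 := by omega
        have hxf : x ∈ ends f := by rw [hfx]; exact Sym2.mem_mk_right _ _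
        have hxuniq : ∀ g ∈ B, x ∈ ends g → g = f :=
          fun g hg hxg => unique_edge_of_deg_le_one ends hxle hg hxg hfB hxf
        rcases con_trap2 ends hfx hufuniq hxuniq hcon with rfl | rfl
        · exact huv rfl
        · exact hxv rfl
      have hAx1 : deg ends A x ≤ 1 := by have := hsum x; omega
      -- witness for e in core A
      obtain ⟨heA', T₀, hT₀A, hT₀2, heT₀⟩ := mem_filter.1 heK
      have hfA : f ∉ A := fun h => (Finset.disjoint_left.1 hd) h hfB
      have hfe : f ≠ e := fun h => hfA (h ▸ heA)
      have heBf : e ∉ B.erase f := fun h =>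
        (Finset.disjoint_left.1 hd) heA (mem_of_mem_erase h)
      have hfAe : f ∉ A.erase e := fun h => hfA (mem_of_mem_erase h)
      -- the trap through the witness T₀
      have hF5 : ∀ z, Con ends (A.erase e) u z →
          z = u ∨ ∃ h' ∈ T₀.erase e, z ∈ ends h' := by
        intro z hz
        induction hz with
        | refl => exact Or.inl rfl
        | tail hyz hstep ih =>
          obtain ⟨h, hhA, hhe⟩ := hstep
          rename_i b c
          have hbh : b ∈ ends h := by rw [hhe]; exact Sym2.mem_mk_left _ _
          have hhT₀ : h ∈ T₀.erase e := by
            refine mem_erase.2 ⟨ne_of_mem_erase hhA, ?_⟩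
            rcases ih with rfl | hex
            · have hfeq := filter_eq_of_deg ends hT₀A (hT₀2 e heT₀ b hue) (hA2 b)
              have hmem : h ∈ A.filter (b ∈ ends ·) :=
                mem_filter.2 ⟨mem_of_mem_erase hhA, hbh⟩
              rw [hfeq] at hmem
              exact (mem_filter.1 hmem).1
            · obtain ⟨h'', hh'', hbh''⟩ := hex
              have hfeq := filter_eq_of_deg ends hT₀A
                (hT₀2 h'' (mem_of_mem_erase hh'') b hbh'') (hA2 b)
              have hmem : h ∈ A.filter (b ∈ ends ·) :=
                mem_filter.2 ⟨mem_of_mem_erase hhA, hbh⟩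
              rw [hfeq] at hmem
              exact (mem_filter.1 hmem).1
          exact Or.inr ⟨h, hhT₀, by rw [hhe]; exact Sym2.mem_mk_right _ _⟩
      have hconax : ¬ Con ends (A.erase e) u x := by
        intro h
        rcases hF5 x h with rfl | hex
        · exact hxu rfl
        · obtain ⟨h', hh', hxh'⟩ := hex
          have h2x : 2 ≤ deg ends T₀ x := hT₀2 h' (mem_of_mem_erase hh') x hxh'
          have : 2 ≤ deg ends A x := le_trans h2x (deg_mono ends hT₀A x)
          omega
      -- the move
      set A' : Finset E := insert f (A.erase e) with hA'
      set B' : Finset E := insert e (B.erase f) with hB'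
      have hA'2 : ∀ z, deg ends A' z ≤ 2 := by
        intro z
        by_cases hz : z ∈ ends f
        · rw [hA', deg_insert_of_mem ends hfAe hz]
          rw [hfx, Sym2.mem_iff] at hz
          rcases hz with rfl | rfl
          · rw [deg_erase_of_mem ends heA hue]; omega
          · rw [deg_erase_of_not_mem_ends ends hxe]; omega
        · rw [hA', deg_insert_of_not_mem_ends ends hz]
          exact le_trans (deg_erase_le ends A e z) (hA2 z)
      have hB'2 : ∀ z, deg ends B' z ≤ 2 := by
        intro z
        by_cases hz : z ∈ ends e
        · rw [hB', deg_insert_of_mem ends heBf hz]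
          rw [hev, Sym2.mem_iff] at hz
          rcases hz with rfl | rfl
          · rw [deg_erase_of_mem ends hfB huf]; omega
          · rw [deg_erase_of_not_mem_ends ends hvf]; omega
        · rw [hB', deg_insert_of_not_mem_ends ends hz]
          exact le_trans (deg_erase_le ends B f z) (hB2 z)
      refine ⟨A', B', ?_, ?_, hA'2, hB'2, ?_⟩
      · rw [Finset.disjoint_left]
        intro a ha hb
        rw [hA', mem_insert] at ha
        rw [hB', mem_insert] at hb
        rcases ha with rfl | ha <;> rcases hb with hb | hb
        · exact hfe hb
        · exact (notMem_erase _ _) hb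
        · exact (ne_of_mem_erase ha) hb
        · exact (Finset.disjoint_left.1 hd) (mem_of_mem_erase ha) (mem_of_mem_erase hb)
      · rw [hA', hB', ← hAB]
        ext a
        simp only [mem_union, mem_insert, mem_erase]
        constructor
        · rintro ((rfl | ⟨_, h⟩) | (rfl | ⟨_, h⟩))
          · exact Or.inr hfB
          · exact Or.inl h
          · exact Or.inl heA
          · exact Or.inr h
        · intro h
          by_cases hae : a = e
          · exact Or.inr (Or.inl hae)
          · by_cases haf : a = f
            · exact Or.inl (Or.inl haf)
            · rcases h with h | h
              · exact Or.inl (Or.inr ⟨hae, h⟩)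
              · exact Or.inr (Or.inr ⟨haf, h⟩)
      · -- cores
        have hcA : core ends A' ⊆ (core ends A).erase e := by
          intro g hg
          obtain ⟨hgA', T, hTA', hT2, hgT⟩ := mem_filter.1 hg
          by_cases hfT : f ∈ T
          · exfalso
            have hTdeg : ∀ h' ∈ T, ∀ z ∈ ends h', deg ends T z = 2 := by
              intro h' hh' z hz
              refine le_antisymm ?_ (hT2 h' hh' z hz)
              exact le_trans (deg_mono ends hTA' z) (hA'2 z)
            have hbr := bridge ends hl hTdeg hfT hfx
            have hTf : T.erase f ⊆ A.erase e := by
              intro g' hg'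
              have hmem := hTA' (mem_of_mem_erase hg')
              rw [hA', mem_insert] at hmem
              rcases hmem with rfl | h
              · exact absurd rfl (ne_of_mem_erase hg')
              · exact h
            exact hconax (con_mono ends hTf hbr)
          · have hTsub : T ⊆ A.erase e := by
              intro g' hg'
              have hmem := hTA' hg'
              rw [hA', mem_insert] at hmem
              rcases hmem with rfl | h
              · exact absurd hg' hfT
              · exact h
            refine mem_erase.2 ⟨ne_of_mem_erase (hTsub hgT), ?_⟩
            exact mem_filter.2 ⟨mem_of_mem_erase (hTsub hgT), T,
              hTsub.trans (erase_subset _ _), hT2, hgT⟩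
        have hcB : core ends B' ⊆ core ends B := by
          intro g hg
          obtain ⟨hgB', T, hTB', hT2, hgT⟩ := mem_filter.1 hg
          by_cases heT : e ∈ T
          · exfalso
            have hTdeg : ∀ h' ∈ T, ∀ z ∈ ends h', deg ends T z = 2 := by
              intro h' hh' z hz
              refine le_antisymm ?_ (hT2 h' hh' z hz)
              exact le_trans (deg_mono ends hTB' z) (hB'2 z)
            have hbr := bridge ends hl hTdeg heT hev
            have hTe : T.erase e ⊆ B.erase f := by
              intro g' hg'
              have hmem := hTB' (mem_of_mem_erase hg')
              rw [hB', mem_insert] at hmem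
              rcases hmem with rfl | h
              · exact absurd rfl (ne_of_mem_erase hg')
              · exact h
            have hconbf := con_mono ends hTe hbr
            have hnotouch : ∀ g' ∈ B.erase f, u ∉ ends g' := by
              intro g' hg' hug'
              exact (ne_of_mem_erase hg') (hufuniq g' (mem_of_mem_erase hg') hug')
            exact huv ((con_trap0 ends hnotouch hconbf).symm)
          · have hTsub : T ⊆ B.erase f := by
              intro g' hg'
              have hmem := hTB' hg'
              rw [hB', mem_insert] at hmem
              rcases hmem with rfl | h
              · exact absurd hg' heT
              · exact h
            exact mem_filter.2 ⟨mem_of_mem_erase (hTsub hgT), T,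
              hTsub.trans (erase_subset _ _), hT2, hgT⟩
        have h1 : #(core ends A') ≤ #((core ends A).erase e) := card_le_card hcA
        rw [card_erase_of_mem heK] at h1
        have h2' : #(core ends B') ≤ #(core ends B) := card_le_card hcB
        have hpos : 1 ≤ #(core ends A) := card_pos.2 ⟨e, heK⟩
        omega

lemma acyclify (hl : ∀ e : E, ¬ (ends e).IsDiag) {D : Finset E}
    (htrip : ∀ e₁ ∈ D, ∀ e₂ ∈ D, ∀ e₃ ∈ D, e₁ ≠ e₂ → e₁ ≠ e₃ → e₂ ≠ e₃ →
      ends e₁ = ends e₂ → ends e₁ = ends e₃ → False)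
    (hD3 : ∀ v, deg ends D v ≤ 3) :
    ∀ (n : ℕ) (A B : Finset E), Disjoint A B → A ∪ B = D →
      (∀ v, deg ends A v ≤ 2) → (∀ v, deg ends B v ≤ 2) →
      #(core ends A) + #(core ends B) ≤ n →
      ∃ A' B' : Finset E, Disjoint A' B' ∧ A' ∪ B' = D ∧
        (∀ v, deg ends A' v ≤ 2) ∧ (∀ v, deg ends B' v ≤ 2) ∧
        core ends A' = ∅ ∧ core ends B' = ∅ := by
  intro n
  induction n with
  | zero =>
    intro A B hd hAB hA2 hB2 hm
    refine ⟨A, B, hd, hAB, hA2, hB2, ?_, ?_⟩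
    · exact card_eq_zero.1 (by omega)
    · exact card_eq_zero.1 (by omega)
  | succ n ih =>
    intro A B hd hAB hA2 hB2 hm
    by_cases hA : (core ends A).Nonempty
    · obtain ⟨A', B', hd', hAB', hA2', hB2', hlt⟩ :=
        improve ends hl htrip hd hAB hA2 hB2 hD3 hA
      exact ih A' B' hd' hAB' hA2' hB2' (by omega)
    · by_cases hB : (core ends B).Nonempty
      · obtain ⟨B', A', hd', hBA', hB2', hA2', hlt⟩ :=
          improve ends hl htrip hd.symm (by rw [union_comm]; exact hAB) hB2 hA2 hD3 hB
        exact ih A' B' hd'.symm (by rw [union_comm]; exact hBA') hA2' hB2' (by omega)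
      · rw [not_nonempty_iff_eq_empty] at hA hB
        exact ⟨A, B, hd, hAB, hA2, hB2, hA, hB⟩

/-! ### Coloring a degenerate class with 3 colors -/

noncomputable instance : Fintype (Incidence ends) :=
  haveI : Finite (Incidence ends) := by unfold Incidence; infer_instance
  Fintype.ofFinite _

lemma incadj_symm {p q : Incidence ends} (h : IncAdj ends p q) : IncAdj ends q p := by
  obtain ⟨hne, hc⟩ := h
  refine ⟨hne.symm, ?_⟩
  rcases hc with h | h | h | h
  · exact Or.inl h.symm
  · exact Or.inr (Or.inl h.symm)
  · exact Or.inr (Or.inr (Or.inr (by rw [h, Sym2.eq_swap])))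
  · exact Or.inr (Or.inr (Or.inl (by rw [h, Sym2.eq_swap])))

lemma pick3 (s : Finset (Fin 3)) (h : #s ≤ 2) : ∃ x, x ∉ s := by
  by_contra h'
  push_neg at h'
  have hsub : (univ : Finset (Fin 3)) ⊆ s := fun x _ => h' x
  have := card_le_card hsub
  simp only [card_univ, Fintype.card_fin] at this
  omega

lemma class_color (hl : ∀ e : E, ¬ (ends e).IsDiag) :
    ∀ (n : ℕ) (A : Finset E), #A ≤ n → (∀ v, deg ends A v ≤ 2) → core ends A = ∅ →
    ∃ c : Incidence ends → Fin 3, ∀ p q : Incidence ends,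
      p.1.2 ∈ A → q.1.2 ∈ A → IncAdj ends p q → c p ≠ c q := by
  intro n
  induction n with
  | zero =>
    intro A hA _ _
    have : A = ∅ := card_eq_zero.1 (by omega)
    subst this
    exact ⟨fun _ => 0, fun p q hp => absurd hp (notMem_empty _)⟩
  | succ n ih =>
    intro A hcard hA2 hcore
    rcases A.eq_empty_or_nonempty with rfl | hAne
    · exact ⟨fun _ => 0, fun p q hp => absurd hp (notMem_empty _)⟩
    -- A is not Reg2, find a degree-1 endpoint
    have hnreg : ¬ Reg2 ends A := by
      intro hreg
      obtain ⟨e, he⟩ := hAne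
      have : e ∈ core ends A := witness_sub_core ends (subset_refl A) hreg he
      rw [hcore] at this
      exact notMem_empty _ this
    rw [Reg2] at hnreg
    push_neg at hnreg
    obtain ⟨e, heA, vv, hvve, hdeg1⟩ := hnreg
    obtain ⟨ww, hevw⟩ := other_end ends hvve
    have hvw : vv ≠ ww := by
      intro h
      exact hl e (hevw ▸ Sym2.mk_isDiag_iff.2 (h ▸ rfl))
    have hwe : ww ∈ ends e := by rw [hevw]; exact Sym2.mem_mk_right _ _
    have hdegvv : deg ends A vv = 1 :=
      le_antisymm (by omega) (card_pos.2 ⟨e, mem_filter.2 ⟨heA, hvve⟩⟩)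
    set A' : Finset E := A.erase e with hA'
    have hcard' : #A' ≤ n := by
      rw [hA', card_erase_of_mem heA]; omega
    have hA2' : ∀ v, deg ends A' v ≤ 2 :=
      fun v => le_trans (deg_erase_le ends A e v) (hA2 v)
    have hcore' : core ends A' = ∅ := by
      have := core_mono ends (erase_subset e A) (S' := A)
      rw [hcore] at this
      exact subset_empty.1 (hA' ▸ this)
    obtain ⟨c', hc'⟩ := ih A' hcard' hA2' hcore'
    -- vv has no other A-edges
    have hvvzero : deg ends A' vv = 0 := by
      rw [hA', deg_erase_of_mem ends heA hvve, hdegvv]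
    have hvvnone : ∀ f ∈ A', vv ∉ ends f := by
      intro f hf hvf
      have hmem : f ∈ A'.filter (vv ∈ ends ·) := mem_filter.2 ⟨hf, hvf⟩
      rw [card_eq_zero.1 hvvzero] at hmem
      exact notMem_empty _ hmem
    -- forbidden colors around ww
    set F1 : Finset (Incidence ends) :=
      (univ : Finset (Incidence ends)).filter (fun q => q.1.2 ∈ A' ∧ ww ∈ ends q.1.2) with hF1
    have hF1card : #F1 ≤ 2 := by
      rcases Nat.eq_zero_or_pos (deg ends A' ww) with h0 | hpos
      · have : F1 = ∅ := by
          rw [hF1, filter_eq_empty_iff]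
          rintro q _ ⟨hq1, hq2⟩
          have : q.1.2 ∈ A'.filter (ww ∈ ends ·) := mem_filter.2 ⟨hq1, hq2⟩
          rw [card_eq_zero.1 h0] at this
          exact notMem_empty _ this
        rw [this]; simp
      · obtain ⟨f₀, hf₀, hwf₀⟩ := exists_edge_of_deg_pos ends hpos
        have huniq : ∀ g ∈ A', ww ∈ ends g → g = f₀ := by
          intro g hg hwg
          have h1 : deg ends A' ww ≤ 1 := by
            have := deg_erase_of_mem ends heA hwe
            have h2 := hA2 ww
            rw [hA']
            omega
          exact unique_edge_of_deg_le_one ends h1 hg hwg hf₀ hwf₀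
        obtain ⟨a, b, hab, hf₀ends⟩ := exists_ends ends f₀ (hl f₀)
        have hsub : F1 ⊆ {⟨(a, f₀), by rw [hf₀ends]; exact Sym2.mem_mk_left _ _⟩,
            ⟨(b, f₀), by rw [hf₀ends]; exact Sym2.mem_mk_right _ _⟩} := by
          intro q hq
          obtain ⟨-, hq1, hq2⟩ := mem_filter.1 hq
          have hqf : q.1.2 = f₀ := huniq _ hq1 hq2
          have hqv : q.1.1 ∈ ends f₀ := hqf ▸ q.2
          rw [hf₀ends, Sym2.mem_iff] at hqv
          rcases hqv with h | h
          · exact mem_insert.2 (Or.inl (Subtype.ext (Prod.ext h hqf)))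
          · exact mem_insert.2 (Or.inr (mem_singleton.2 (Subtype.ext (Prod.ext h hqf))))
        exact le_trans (card_le_card hsub) (le_trans (card_insert_le _ _) (Nat.add_le_add_right (card_singleton _).le 1))
    obtain ⟨yc, hyc⟩ := pick3 (F1.image c') (le_trans card_image_le hF1card)
    set F2 : Finset (Incidence ends) :=
      (univ : Finset (Incidence ends)).filter
        (fun q => q.1.2 ∈ A' ∧ ww ∈ ends q.1.2 ∧ q.1.1 = ww) with hF2
    have hF2sub : F2 ⊆ F1 := by
      intro q hq
      obtain ⟨hu, h1, h2, _⟩ := mem_filter.1 hq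
      exact mem_filter.2 ⟨hu, h1, h2⟩
    have hF2card : #F2 ≤ 1 := by
      refine card_le_one.2 ?_
      intro q1 h1 q2 h2
      obtain ⟨-, ha1, hb1, hc1⟩ := mem_filter.1 h1
      obtain ⟨-, ha2, hb2, hc2⟩ := mem_filter.1 h2
      have hd1 : deg ends A' ww ≤ 1 := by
        have := deg_erase_of_mem ends heA hwe
        have h2' := hA2 ww
        rw [hA']
        omega
      have : q1.1.2 = q2.1.2 := unique_edge_of_deg_le_one ends hd1 ha1 hb1 ha2 hb2
      exact Subtype.ext (Prod.ext (hc1.trans hc2.symm) this)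
    obtain ⟨xc, hxc⟩ := pick3 (insert yc (F2.image c'))
      (le_trans (card_insert_le _ _) (by have := card_image_le (s := F2) (f := c'); omega))
    -- the new coloring
    set c : Incidence ends → Fin 3 :=
      fun p => if p.1.2 = e then (if p.1.1 = vv then xc else yc) else c' p with hc
    have hxcyc : xc ≠ yc := fun h => hxc (h ▸ mem_insert_self _ _)
    have hceval : ∀ p : Incidence ends, p.1.2 = e → p.1.1 ≠ vv → c p = yc := by
      intro p h1 h2
      rw [hc]
      simp only [h1, if_pos rfl, if_neg h2, if_true]
    have hcevalv : ∀ p : Incidence ends, p.1.2 = e → p.1.1 = vv → c p = xc := by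
      intro p h1 h2
      rw [hc]
      simp only [h1, h2, if_pos rfl, if_true]
    have hcold : ∀ p : Incidence ends, p.1.2 ≠ e → c p = c' p := by
      intro p h1
      rw [hc]
      simp only [if_neg h1]
    -- vertices of e-incidences
    have hvert : ∀ p : Incidence ends, p.1.2 = e → p.1.1 = vv ∨ p.1.1 = ww := by
      intro p h1
      have := p.2
      rw [h1, hevw, Sym2.mem_iff] at this
      exact this
    -- key asymmetric lemma
    have key : ∀ p q : Incidence ends, p.1.2 = e → q.1.2 ≠ e → q.1.2 ∈ A →
        IncAdj ends p q → c p ≠ c q := by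
      intro p q hpe hqe hqA hadj
      have hqA' : q.1.2 ∈ A' := by rw [hA']; exact mem_erase.2 ⟨hqe, hqA⟩
      obtain ⟨hne, hcases⟩ := hadj
      rw [hcold q hqe]
      rcases hvert p hpe with hpv | hpw
      · rw [hcevalv p hpe hpv]
        rcases hcases with h | h | h | h
        · exfalso
          have hmem : vv ∈ ends q.1.2 := by rw [← hpv, h]; exact q.2
          exact hvvnone _ hqA' hmem
        · exact absurd (hpe ▸ h.symm) hqe
        · have hq1 : q.1.1 = ww := by
            rw [hpe, hevw, hpv] at h
            exact Sym2.congr_right.1 h.symm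
          have hqF2 : q ∈ F2 := mem_filter.2 ⟨mem_univ _, hqA', hq1 ▸ q.2, hq1⟩
          intro hcontra
          exact hxc (hcontra ▸ mem_insert.2 (Or.inr (mem_image_of_mem c' hqF2)))
        · exfalso
          have : vv ∈ ends q.1.2 := by rw [h, hpv]; exact Sym2.mem_mk_left _ _
          exact hvvnone _ hqA' this
      · rw [hceval p hpe (by rw [hpw]; exact Ne.symm hvw)]
        rcases hcases with h | h | h | h
        · have hwq : ww ∈ ends q.1.2 := by rw [← hpw, h]; exact q.2
          have hqF1 : q ∈ F1 := mem_filter.2 ⟨mem_univ _, hqA', hwq⟩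
          intro hcontra
          exact hyc (hcontra ▸ mem_image_of_mem c' hqF1)
        · exact absurd (hpe ▸ h.symm) hqe
        · exfalso
          have hq1 : q.1.1 = vv := by
            rw [hpe, hevw, hpw] at h
            have : s(ww, vv) = s(ww, q.1.1) := by rw [← h, Sym2.eq_swap]
            exact (Sym2.congr_right.1 this).symm
          have : vv ∈ ends q.1.2 := hq1 ▸ q.2
          exact hvvnone _ hqA' this
        · have : ww ∈ ends q.1.2 := by rw [h, hpw]; exact Sym2.mem_mk_left _ _
          have hqF1 : q ∈ F1 := mem_filter.2 ⟨mem_univ _, hqA', this⟩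
          intro hcontra
          exact hyc (hcontra ▸ mem_image_of_mem c' hqF1)
    refine ⟨c, ?_⟩
    intro p q hp hq hadj
    by_cases hpe : p.1.2 = e <;> by_cases hqe : q.1.2 = e
    · -- both on e : different endpoints
      have hpq : p.1.1 ≠ q.1.1 := by
        intro h
        exact hadj.1 (Subtype.ext (Prod.ext h (hpe.trans hqe.symm)))
      rcases hvert p hpe with h1 | h1 <;> rcases hvert q hqe with h2 | h2
      · exact absurd (h1.trans h2.symm) hpq
      · rw [hcevalv p hpe h1, hceval q hqe (by rw [h2]; exact Ne.symm hvw)]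
        exact hxcyc
      · rw [hceval p hpe (by rw [h1]; exact Ne.symm hvw), hcevalv q hqe h2]
        exact hxcyc.symm
      · exact absurd (h1.trans h2.symm) hpq
    · exact key p q hpe hqe hq hadj
    · exact (key q p hqe hpe hp (incadj_symm ends hadj)).symm
    · rw [hcold p hpe, hcold q hqe]
      exact hc' p q (mem_erase.2 ⟨hpe, hp⟩) (mem_erase.2 ⟨hqe, hq⟩) hadj

end IncProof

open Finset IncProof in
theorem cubic_multigraph_incidence_six_colorable
    {V E : Type*} [Fintype V] [Fintype E] [DecidableEq V]
    (ends : E → Sym2 V)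
    (hloopless : ∀ e, ¬ (ends e).IsDiag)
    (hdeg : ∀ v : V, (Finset.univ.filter fun e : E => v ∈ ends e).card ≤ 3) :
    ∃ c : Incidence ends → Fin 6,
      ∀ p q : Incidence ends, IncAdj ends p q → c p ≠ c q := by
  classical
  set Cls : E → Finset E := fun e => univ.filter (fun f => ends f = ends e) with hCls
  have hdeg' : ∀ v, deg ends univ v ≤ 3 := fun v => hdeg v
  have hCls_sub : ∀ (e : E) (v : V), v ∈ ends e → Cls e ⊆ univ.filter (fun f => v ∈ ends f) := by
    intro e v hv f hf
    obtain ⟨-, hfe⟩ := mem_filter.1 hf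
    exact mem_filter.2 ⟨mem_univ _, hfe ▸ hv⟩
  have hmlt3 : ∀ e, #(Cls e) ≤ 3 := by
    intro e
    obtain ⟨a, b, hab, he⟩ := exists_ends ends e (hloopless e)
    have ha : a ∈ ends e := by rw [he]; exact Sym2.mem_mk_left _ _
    exact le_trans (card_le_card (hCls_sub e a ha)) (hdeg a)
  set D : Finset E := univ.filter (fun e => #(Cls e) ≤ 2) with hD
  have hD3 : ∀ v, deg ends D v ≤ 3 :=
    fun v => le_trans (deg_mono ends (subset_univ D) v) (hdeg' v)
  have htrip : ∀ e₁ ∈ D, ∀ e₂ ∈ D, ∀ e₃ ∈ D, e₁ ≠ e₂ → e₁ ≠ e₃ → e₂ ≠ e₃ →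
      ends e₁ = ends e₂ → ends e₁ = ends e₃ → False := by
    intro e₁ h₁ e₂ _ e₃ _ h12 h13 h23 he12 he13
    have hsub : ({e₁, e₂, e₃} : Finset E) ⊆ Cls e₁ := by
      intro a ha
      simp only [mem_insert, mem_singleton] at ha
      rcases ha with rfl | rfl | rfl
      · exact mem_filter.2 ⟨mem_univ _, rfl⟩
      · exact mem_filter.2 ⟨mem_univ _, he12.symm⟩
      · exact mem_filter.2 ⟨mem_univ _, he13.symm⟩
    have hcard : #({e₁, e₂, e₃} : Finset E) = 3 := by
      rw [card_insert_of_notMem (by simp [h12, h13]),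
        card_insert_of_notMem (by simp [h23]), card_singleton]
    have := card_le_card hsub
    rw [hcard] at this
    have := (mem_filter.1 h₁).2
    omega
  -- partition and acyclify
  obtain ⟨A₀, B₀, hd₀, hAB₀, hA₀2, hB₀2⟩ := exists_partition ends hloopless D hD3
  obtain ⟨A, B, hd, hAB, hA2, hB2, hcoreA, hcoreB⟩ :=
    acyclify ends hloopless htrip hD3 (#(core ends A₀) + #(core ends B₀)) A₀ B₀
      hd₀ hAB₀ hA₀2 hB₀2 le_rfl
  obtain ⟨cA, hcA⟩ := class_color ends hloopless (#A) A le_rfl hA2 hcoreA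
  obtain ⟨cB, hcB⟩ := class_color ends hloopless (#B) B le_rfl hB2 hcoreB
  -- triple edges
  have hDtrip : ∀ e, e ∉ D → #(Cls e) = 3 := by
    intro e he
    have h1 := hmlt3 e
    have h2 : ¬ #(Cls e) ≤ 2 := by
      intro h
      exact he (mem_filter.2 ⟨mem_univ _, h⟩)
    omega
  have htriple_iso : ∀ e, e ∉ D → ∀ v ∈ ends e, ∀ f, v ∈ ends f → ends f = ends e := by
    intro e he v hv f hvf
    have hsub := hCls_sub e v hv
    have hcard : #(univ.filter (fun f => v ∈ ends f)) ≤ #(Cls e) := by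
      rw [hDtrip e he]
      exact hdeg v
    have heq := eq_of_subset_of_card_le hsub hcard
    have : f ∈ univ.filter (fun f => v ∈ ends f) := mem_filter.2 ⟨mem_univ _, hvf⟩
    rw [← heq] at this
    exact (mem_filter.1 this).2
  have hsep : ∀ p q : Incidence ends, IncAdj ends p q → p.1.2 ∉ D →
      ends q.1.2 = ends p.1.2 := by
    intro p q hadj hp
    obtain ⟨hne, hc⟩ := hadj
    rcases hc with h | h | h | h
    · exact htriple_iso p.1.2 hp p.1.1 p.2 q.1.2 (h ▸ q.2)
    · rw [h]
    · exact htriple_iso p.1.2 hp q.1.1 (by rw [h]; exact Sym2.mem_mk_right _ _) q.1.2 q.2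
    · exact htriple_iso p.1.2 hp p.1.1 p.2 q.1.2 (by rw [h]; exact Sym2.mem_mk_left _ _)
  have hsame_notD : ∀ p q : Incidence ends, IncAdj ends p q → p.1.2 ∉ D → q.1.2 ∉ D := by
    intro p q hadj hp hq
    have hends := hsep p q hadj hp
    have hClseq : Cls q.1.2 = Cls p.1.2 := by
      rw [hCls]
      simp only [hends]
    have := (mem_filter.1 hq).2
    rw [hClseq] at this
    have h3 := hDtrip p.1.2 hp
    omega
  -- index functions and triple coloring data
  set eE := Fintype.equivFin E with heE
  set eV := Fintype.equivFin V with heV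
  set rnk : E → ℕ := fun e => #((Cls e).filter (fun f => (eE f : ℕ) < (eE e : ℕ))) with hrnk
  have hrnk2 : ∀ e, e ∉ D → rnk e ≤ 2 := by
    intro e he
    have hsub : (Cls e).filter (fun f => (eE f : ℕ) < (eE e : ℕ)) ⊆ (Cls e).erase e := by
      intro f hf
      obtain ⟨h1, h2⟩ := mem_filter.1 hf
      refine mem_erase.2 ⟨?_, h1⟩
      rintro rfl
      omega
    have h1 := card_le_card hsub
    have h2 : #((Cls e).erase e) = #(Cls e) - 1 :=
      card_erase_of_mem (show e ∈ Cls e from mem_filter.2 ⟨mem_univ _, rfl⟩)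
    have h3 := hDtrip e he
    rw [h2, h3] at h1
    exact h1
  have hrnkmono : ∀ e f, ends e = ends f → (eE e : ℕ) < (eE f : ℕ) → rnk e < rnk f := by
    intro e f hef hlt
    have hClseq : Cls e = Cls f := by
      rw [hCls]
      simp only [hef]
    refine card_lt_card ?_
    rw [hClseq]
    constructor
    · intro g hg
      obtain ⟨h1, h2⟩ := mem_filter.1 hg
      exact mem_filter.2 ⟨h1, by omega⟩
    · intro hsub
      have : e ∈ (Cls f).filter (fun g => (eE g : ℕ) < (eE e : ℕ)) := by
        refine hsub (mem_filter.2 ⟨?_, hlt⟩)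
        exact mem_filter.2 ⟨mem_univ _, hef⟩
      have := (mem_filter.1 this).2
      omega
  have hrnkinj : ∀ e f, ends e = ends f → e ≠ f → rnk e ≠ rnk f := by
    intro e f hef hne
    have : (eE e : ℕ) ≠ (eE f : ℕ) := by
      intro h
      exact hne (eE.injective (Fin.ext h))
    rcases Nat.lt_or_ge (eE e : ℕ) (eE f : ℕ) with h | h
    · exact Nat.ne_of_lt (hrnkmono e f hef h)
    · exact (Nat.ne_of_lt (hrnkmono f e hef.symm (by omega))).symm
  -- the final coloring
  set oth : Incidence ends → V := fun p => Sym2.Mem.other p.2 with hothdef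
  have hoth : ∀ p : Incidence ends, s(p.1.1, oth p) = ends p.1.2 :=
    fun p => Sym2.other_spec p.2
  set col : Incidence ends → Fin 6 := fun p =>
    if hp : p.1.2 ∈ D then
      (if p.1.2 ∈ A then ⟨(cA p : ℕ), by have := (cA p).2; omega⟩
        else ⟨(cB p : ℕ) + 3, by have := (cB p).2; omega⟩)
    else
      ⟨(if (eV p.1.1 : ℕ) ≤ (eV (oth p) : ℕ) then 0 else 3) + rnk p.1.2, by
        have := hrnk2 p.1.2 hp
        split <;> omega⟩
    with hcol
  refine ⟨col, ?_⟩
  intro p q hadj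
  by_cases hp : p.1.2 ∈ D <;> by_cases hq : q.1.2 ∈ D
  · -- both in D
    have hpu : p.1.2 ∈ A ∪ B := by rw [hAB]; exact hp
    have hqu : q.1.2 ∈ A ∪ B := by rw [hAB]; exact hq
    rw [hcol]
    simp only [dif_pos hp, dif_pos hq]
    rcases mem_union.1 hpu with hpA | hpB <;> rcases mem_union.1 hqu with hqA | hqB
    · rw [if_pos hpA, if_pos hqA]
      intro h
      have hval : (cA p : ℕ) = (cA q : ℕ) := by
        have := congrArg Fin.val h
        simpa using this
      exact hcA p q hpA hqA hadj (Fin.ext hval)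
    · rw [if_pos hpA, if_neg (fun h => (Finset.disjoint_left.1 hd) h hqB)]
      intro h
      have hval := congrArg Fin.val h
      simp only at hval
      have := (cA p).2
      omega
    · rw [if_neg (fun h => (Finset.disjoint_left.1 hd) h hpB), if_pos hqA]
      intro h
      have hval := congrArg Fin.val h
      simp only at hval
      have := (cA q).2
      omega
    · rw [if_neg (fun h => (Finset.disjoint_left.1 hd) h hpB),
        if_neg (fun h => (Finset.disjoint_left.1 hd) h hqB)]
      intro h
      have hval : (cB p : ℕ) = (cB q : ℕ) := by
        have := congrArg Fin.val h
        simpa using this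
      exact hcB p q hpB hqB hadj (Fin.ext hval)
  · exact absurd hp (hsame_notD q p (incadj_symm ends hadj) hq)
  · exact absurd hq (hsame_notD p q hadj hp)
  · -- both triple
    have hends : ends q.1.2 = ends p.1.2 := hsep p q hadj hp
    rw [hcol]
    simp only [dif_neg hp, dif_neg hq]
    intro h
    have hval := congrArg Fin.val h
    simp only at hval
    by_cases hpq : p.1.2 = q.1.2
    · -- same edge, different vertices
      have hvne : p.1.1 ≠ q.1.1 := by
        intro h'
        exact hadj.1 (Subtype.ext (Prod.ext h' hpq))
      have hqmem : q.1.1 ∈ ends p.1.2 := hpq ▸ q.2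
      have hep : ends p.1.2 = s(p.1.1, q.1.1) := ends_eq_of_two_mem ends p.2 hqmem hvne
      have hothp : oth p = q.1.1 := by
        have h1 := hoth p
        rw [hep] at h1
        exact Sym2.congr_right.1 h1
      have hothq : oth q = p.1.1 := by
        have h1 : s(q.1.1, oth q) = s(q.1.1, p.1.1) := by
          rw [hoth q, ← hpq, hep, Sym2.eq_swap]
        exact Sym2.congr_right.1 h1
      have hvalne : (eV p.1.1 : ℕ) ≠ (eV q.1.1 : ℕ) := by
        intro h'
        exact hvne (eV.injective (Fin.ext h'))
      rw [hothp, hothq, hpq] at hval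
      split_ifs at hval <;> omega
    · -- different edges: ranks differ
      have := hrnkinj p.1.2 q.1.2 hends.symm hpq
      have h2p := hrnk2 p.1.2 hp
      have h2q := hrnk2 q.1.2 hq
      split_ifs at hval <;> omega
end

section
/- Let G be the graph on 7 vertices u,v,w,x,y,z,t consisting of the path u–v–w–x–y together with edges vz and xt. Suppose lists of colors are assigned to its edges with |L(uv)|, |L(vw)|, |L(wx)|, |L(xy)| ≥ 5 and |L(vz)|, |L(xt)| ≥ 3, where all strong-coloring constraints among these 6 edges come from the graph structure. Then one can choose colors for uv, vz, xy, xt from their lists forming a partial strong edge-coloring such that, after removing the chosen colors of coloring-conflicting edges from the lists of vw and wx, at least 3 colors remain available for vw and at least 2 colors remain available for wx. -/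
set_option maxHeartbeats 2000000

private lemma pick_avoid {L T : Finset ℕ} (h : T.card < L.card) : ∃ a ∈ L, a ∉ T := by
  by_contra hc
  push_neg at hc
  exact absurd (Finset.card_le_card hc) (not_le.mpr h)

private lemma pick1 {L : Finset ℕ} (h : 1 ≤ L.card) : ∃ a, a ∈ L := by
  obtain ⟨a, ha, -⟩ := pick_avoid (L := L) (T := ∅) (by simpa using h)
  exact ⟨a, ha⟩

private lemma pick2 {L : Finset ℕ} (h : 2 ≤ L.card) (x : ℕ) : ∃ a ∈ L, a ≠ x := by
  obtain ⟨a, ha, hna⟩ := pick_avoid (L := L) (T := {x}) (by simp; omega)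
  exact ⟨a, ha, by simpa using hna⟩

private lemma pick3 {L : Finset ℕ} (h : 3 ≤ L.card) (x y : ℕ) : ∃ a ∈ L, a ≠ x ∧ a ≠ y := by
  have h2 : ({x, y} : Finset ℕ).card < 3 := by
    have := Finset.card_insert_le x ({y} : Finset ℕ)
    simp at this ⊢; omega
  obtain ⟨a, ha, hna⟩ := pick_avoid (L := L) (T := {x, y}) (by omega)
  simp only [Finset.mem_insert, Finset.mem_singleton] at hna
  push_neg at hna
  exact ⟨a, ha, hna⟩

private lemma leA {A : Finset ℕ} {c1 c2 c3 c4 : ℕ} (x y : ℕ)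
    (h : ∀ z, (z = c1 ∨ z = c2 ∨ z = c3 ∨ z = c4) → z ∈ A → z = x ∨ z = y) :
    (({c1, c2, c3, c4} : Finset ℕ) ∩ A).card ≤ 2 := by
  have hsub : ({c1, c2, c3, c4} : Finset ℕ) ∩ A ⊆ {x, y} := by
    intro z hz
    simp only [Finset.mem_inter, Finset.mem_insert, Finset.mem_singleton] at hz ⊢
    exact h z hz.1 hz.2
  have h2 : ({x, y} : Finset ℕ).card ≤ 2 := by
    refine le_trans (Finset.card_insert_le _ _) ?_
    simp
  exact le_trans (Finset.card_le_card hsub) h2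

private lemma leB {B : Finset ℕ} {c1 c2 c3 c4 : ℕ} (x y w : ℕ)
    (h : ∀ z, (z = c1 ∨ z = c2 ∨ z = c3 ∨ z = c4) → z ∈ B → z = x ∨ z = y ∨ z = w) :
    (({c1, c2, c3, c4} : Finset ℕ) ∩ B).card ≤ 3 := by
  have hsub : ({c1, c2, c3, c4} : Finset ℕ) ∩ B ⊆ {x, y, w} := by
    intro z hz
    simp only [Finset.mem_inter, Finset.mem_insert, Finset.mem_singleton] at hz ⊢
    exact h z hz.1 hz.2
  have h2 : ({x, y, w} : Finset ℕ).card ≤ 3 := by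
    refine le_trans (Finset.card_insert_le _ _) ?_
    have := Finset.card_insert_le y ({w} : Finset ℕ)
    simp at this ⊢; omega
  exact le_trans (Finset.card_le_card hsub) h2

/-- Core case: `Lvz ⊆ A`. -/
private lemma coreVZ (Luv Lvz Lxy Lxt A B : Finset ℕ)
    (huv : 5 ≤ Luv.card) (hvz : 3 ≤ Lvz.card) (hxy : 5 ≤ Lxy.card) (hxt : 3 ≤ Lxt.card)
    (hA : A.card = 5) (hB : B.card = 5) (hvzA : Lvz ⊆ A) :
    ∃ cuv ∈ Luv, ∃ cvz ∈ Lvz, ∃ cxy ∈ Lxy, ∃ cxt ∈ Lxt,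
      cuv ≠ cvz ∧ cxy ≠ cxt ∧
      (({cuv, cvz, cxy, cxt} : Finset ℕ) ∩ A).card ≤ 2 ∧
      (({cuv, cvz, cxy, cxt} : Finset ℕ) ∩ B).card ≤ 3 := by
  by_cases hxtA : Lxt ⊆ A
  · -- C2 : both pendant lists inside A, so they meet
    have hcard : 1 ≤ (Lvz ∩ Lxt).card := by
      have h1 := Finset.card_inter_add_card_union Lvz Lxt
      have h2 : (Lvz ∪ Lxt).card ≤ A.card := Finset.card_le_card (Finset.union_subset hvzA hxtA)
      omega
    obtain ⟨c, hc⟩ := pick1 hcard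
    have hcz : c ∈ Lvz := (Finset.mem_inter.mp hc).1
    have hct : c ∈ Lxt := (Finset.mem_inter.mp hc).2
    have hcA : c ∈ A := hvzA hcz
    by_cases hu : Luv ⊆ A
    · by_cases hx : Lxy ⊆ A
      · -- C2.c : use double coincidence
        have hcard2 : 2 ≤ (Luv ∩ Lxy).card := by
          have h1 := Finset.card_inter_add_card_union Luv Lxy
          have h2 : (Luv ∪ Lxy).card ≤ A.card := Finset.card_le_card (Finset.union_subset hu hx)
          omega
        obtain ⟨d, hd, hdc⟩ := pick2 hcard2 c
        exact ⟨d, (Finset.mem_inter.mp hd).1, c, hcz, d, (Finset.mem_inter.mp hd).2, c, hct,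
          hdc, hdc,
          leA c d (by rintro z (rfl | rfl | rfl | rfl) hz <;> tauto),
          leB c d d (by rintro z (rfl | rfl | rfl | rfl) hz <;> tauto)⟩
      · -- C2.b
        obtain ⟨e, he, heA⟩ := Finset.not_subset.mp hx
        obtain ⟨u, hu2, huc⟩ := pick2 (show 2 ≤ Luv.card by omega) c
        exact ⟨u, hu2, c, hcz, e, he, c, hct, huc, fun h => heA (h ▸ hcA),
          leA u c (by rintro z (rfl | rfl | rfl | rfl) hz <;> tauto),
          leB u c e (by rintro z (rfl | rfl | rfl | rfl) hz <;> tauto)⟩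
    · -- C2.a
      obtain ⟨u, hu2, huA⟩ := Finset.not_subset.mp hu
      obtain ⟨e, he, hec⟩ := pick2 (show 2 ≤ Lxy.card by omega) c
      exact ⟨u, hu2, c, hcz, e, he, c, hct, fun h => huA (h ▸ hcA), hec,
        leA c e (by rintro z (rfl | rfl | rfl | rfl) hz <;> tauto),
        leB u c e (by rintro z (rfl | rfl | rfl | rfl) hz <;> tauto)⟩
  · -- C3
    obtain ⟨b, hb, hbA⟩ := Finset.not_subset.mp hxtA
    by_cases hu : Luv ⊆ A
    · have hLuvA : Luv = A := Finset.eq_of_subset_of_card_le hu (by omega)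
      by_cases hx : Lxy ⊆ A
      · -- C3.2c
        have hLxyA : Lxy = A := Finset.eq_of_subset_of_card_le hx (by omega)
        obtain ⟨d, hd⟩ := pick1 (show 1 ≤ A.card by omega)
        obtain ⟨cvz, hcvz, hcvzd⟩ := pick2 (show 2 ≤ Lvz.card by omega) d
        exact ⟨d, by rw [hLuvA]; exact hd, cvz, hcvz, d, by rw [hLxyA]; exact hd, b, hb,
          hcvzd.symm, fun h => hbA (h ▸ hd),
          leA d cvz (by rintro z (rfl | rfl | rfl | rfl) hz <;> tauto),
          leB d cvz b (by rintro z (rfl | rfl | rfl | rfl) hz <;> tauto)⟩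
      · by_cases hx2 : ∃ e ∈ Lxy, e ∉ A ∧ e ≠ b
        · -- C3.2a
          obtain ⟨e, he, heA, heb⟩ := hx2
          by_cases hAB : A ⊆ B
          · have hABeq : A = B := Finset.eq_of_subset_of_card_le hAB (by omega)
            have heB : e ∉ B := by rw [← hABeq]; exact heA
            have hbB : b ∉ B := by rw [← hABeq]; exact hbA
            obtain ⟨cvz, hcvz⟩ := pick1 (show 1 ≤ Lvz.card by omega)
            obtain ⟨cuv, hcuv, hcuvz⟩ := pick2 (show 2 ≤ Luv.card by omega) cvz
            exact ⟨cuv, hcuv, cvz, hcvz, e, he, b, hb, hcuvz, heb,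
              leA cuv cvz (by rintro z (rfl | rfl | rfl | rfl) hz <;> tauto),
              leB cuv cvz cvz (by rintro z (rfl | rfl | rfl | rfl) hz <;> tauto)⟩
          · obtain ⟨a0, ha0A, ha0B⟩ := Finset.not_subset.mp hAB
            obtain ⟨cvz, hcvz, hcvza⟩ := pick2 (show 2 ≤ Lvz.card by omega) a0
            exact ⟨a0, by rw [hLuvA]; exact ha0A, cvz, hcvz, e, he, b, hb, hcvza.symm, heb,
              leA a0 cvz (by rintro z (rfl | rfl | rfl | rfl) hz <;> tauto),
              leB cvz e b (by rintro z (rfl | rfl | rfl | rfl) hz <;> tauto)⟩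
        · -- C3.2b : Lxy \ A = {b}
          push_neg at hx2
          obtain ⟨y0, hy0, hy0A⟩ := Finset.not_subset.mp hx
          have hbxy : b ∈ Lxy := by
            have h := hx2 y0 hy0 hy0A
            rwa [h] at hy0
          by_cases hxt2 : ∃ b2 ∈ Lxt, b2 ∉ A ∧ b2 ≠ b
          · obtain ⟨b2, hb2, hb2A, hb2b⟩ := hxt2
            by_cases hAB : A ⊆ B
            · have hABeq : A = B := Finset.eq_of_subset_of_card_le hAB (by omega)
              have hbB : b ∉ B := by rw [← hABeq]; exact hbA
              have hb2B : b2 ∉ B := by rw [← hABeq]; exact hb2A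
              obtain ⟨cvz, hcvz⟩ := pick1 (show 1 ≤ Lvz.card by omega)
              obtain ⟨cuv, hcuv, hcuvz⟩ := pick2 (show 2 ≤ Luv.card by omega) cvz
              exact ⟨cuv, hcuv, cvz, hcvz, b, hbxy, b2, hb2, hcuvz, hb2b.symm,
                leA cuv cvz (by rintro z (rfl | rfl | rfl | rfl) hz <;> tauto),
                leB cuv cvz cvz (by rintro z (rfl | rfl | rfl | rfl) hz <;> tauto)⟩
            · obtain ⟨a0, ha0A, ha0B⟩ := Finset.not_subset.mp hAB
              obtain ⟨cvz, hcvz, hcvza⟩ := pick2 (show 2 ≤ Lvz.card by omega) a0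
              exact ⟨a0, by rw [hLuvA]; exact ha0A, cvz, hcvz, b, hbxy, b2, hb2,
                hcvza.symm, hb2b.symm,
                leA a0 cvz (by rintro z (rfl | rfl | rfl | rfl) hz <;> tauto),
                leB cvz b b2 (by rintro z (rfl | rfl | rfl | rfl) hz <;> tauto)⟩
          · push_neg at hxt2
            obtain ⟨c, hcxt, hcb⟩ := pick2 (show 2 ≤ Lxt.card by omega) b
            have hcA : c ∈ A := by
              by_contra hcA
              exact hcb (hxt2 c hcxt hcA)
            obtain ⟨cvz, hcvz, hcvzc⟩ := pick2 (show 2 ≤ Lvz.card by omega) c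
            exact ⟨c, by rw [hLuvA]; exact hcA, cvz, hcvz, b, hbxy, c, hcxt,
              hcvzc.symm, fun h => hbA (h ▸ hcA),
              leA c cvz (by rintro z (rfl | rfl | rfl | rfl) hz <;> tauto),
              leB c cvz b (by rintro z (rfl | rfl | rfl | rfl) hz <;> tauto)⟩
    · -- C3.1
      obtain ⟨u0, hu0, hu0A⟩ := Finset.not_subset.mp hu
      by_cases h1a : Lvz ⊆ B
      · by_cases h1b : ∃ b1 ∈ Lxt, b1 ∉ A ∧ b1 ∉ B
        · obtain ⟨b1, hb1, hb1A, hb1B⟩ := h1b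
          obtain ⟨cvz, hcvz⟩ := pick1 (show 1 ≤ Lvz.card by omega)
          obtain ⟨cxy, hcxy, hcxyb⟩ := pick2 (show 2 ≤ Lxy.card by omega) b1
          exact ⟨u0, hu0, cvz, hcvz, cxy, hcxy, b1, hb1,
            fun h => hu0A (h ▸ hvzA hcvz), hcxyb,
            leA cvz cxy (by rintro z (rfl | rfl | rfl | rfl) hz <;> tauto),
            leB u0 cvz cxy (by rintro z (rfl | rfl | rfl | rfl) hz <;> tauto)⟩
        · by_cases h1c : ∃ u1 ∈ Luv, u1 ∉ A ∧ u1 ∉ B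
          · obtain ⟨u1, hu1, hu1A, hu1B⟩ := h1c
            obtain ⟨cvz, hcvz⟩ := pick1 (show 1 ≤ Lvz.card by omega)
            obtain ⟨cxy, hcxy, hcxyb⟩ := pick2 (show 2 ≤ Lxy.card by omega) b
            exact ⟨u1, hu1, cvz, hcvz, cxy, hcxy, b, hb,
              fun h => hu1A (h ▸ hvzA hcvz), hcxyb,
              leA cvz cxy (by rintro z (rfl | rfl | rfl | rfl) hz <;> tauto),
              leB cvz cxy b (by rintro z (rfl | rfl | rfl | rfl) hz <;> tauto)⟩
          · push_neg at h1c
            by_cases h1d : ∃ y1 ∈ Lxy, y1 ∉ B ∧ y1 ≠ b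
            · obtain ⟨y1, hy1, hy1B, hy1b⟩ := h1d
              obtain ⟨cvz, hcvz⟩ := pick1 (show 1 ≤ Lvz.card by omega)
              exact ⟨u0, hu0, cvz, hcvz, y1, hy1, b, hb,
                fun h => hu0A (h ▸ hvzA hcvz), hy1b,
                leA cvz y1 (by rintro z (rfl | rfl | rfl | rfl) hz <;> tauto),
                leB u0 cvz b (by rintro z (rfl | rfl | rfl | rfl) hz <;> tauto)⟩
            · push_neg at h1d
              by_cases hby : b ∈ Lxy ∧ b ∉ B
              · obtain ⟨cxt, hcxt, hcxtb⟩ := pick2 (show 2 ≤ Lxt.card by omega) b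
                obtain ⟨cvz, hcvz⟩ := pick1 (show 1 ≤ Lvz.card by omega)
                exact ⟨u0, hu0, cvz, hcvz, b, hby.1, cxt, hcxt,
                  fun h => hu0A (h ▸ hvzA hcvz), hcxtb.symm,
                  leA cvz cxt (by
                    have hbB := hby.2
                    rintro z (rfl | rfl | rfl | rfl) hz <;> tauto),
                  leB u0 cvz cxt (by
                    have hbB := hby.2
                    rintro z (rfl | rfl | rfl | rfl) hz <;> tauto)⟩
              · -- C3.1e : Lxy = B
                have hxyB : Lxy ⊆ B := by
                  intro y hy
                  by_contra hyB
                  have h := h1d y hy hyB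
                  exact hby ⟨h ▸ hy, h ▸ hyB⟩
                have hLxyB : Lxy = B := Finset.eq_of_subset_of_card_le hxyB (by omega)
                by_cases hu0b : ∃ d ∈ Luv, d ∉ A ∧ d ≠ b
                · obtain ⟨d, hd, hdA, hdb⟩ := hu0b
                  have hdB : d ∈ B := h1c d hd hdA
                  obtain ⟨cvz, hcvz⟩ := pick1 (show 1 ≤ Lvz.card by omega)
                  exact ⟨d, hd, cvz, hcvz, d, by rw [hLxyB]; exact hdB, b, hb,
                    fun h => hdA (h ▸ hvzA hcvz), hdb,
                    leA cvz cvz (by rintro z (rfl | rfl | rfl | rfl) hz <;> tauto),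
                    leB d cvz b (by rintro z (rfl | rfl | rfl | rfl) hz <;> tauto)⟩
                · push_neg at hu0b
                  have hbLuv : b ∈ Luv := by
                    have h := hu0b u0 hu0 hu0A
                    rwa [h] at hu0
                  obtain ⟨e, hcvz⟩ := pick1 (show 1 ≤ Lvz.card by omega)
                  have heLxy : e ∈ Lxy := by rw [hLxyB]; exact h1a hcvz
                  obtain ⟨cxt, hcxt, hcxte⟩ := pick2 (show 2 ≤ Lxt.card by omega) e
                  exact ⟨b, hbLuv, e, hcvz, e, heLxy, cxt, hcxt,
                    fun h => hbA (h ▸ hvzA hcvz), hcxte.symm,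
                    leA e cxt (by rintro z (rfl | rfl | rfl | rfl) hz <;> tauto),
                    leB b e cxt (by rintro z (rfl | rfl | rfl | rfl) hz <;> tauto)⟩
      · -- C3.1a
        obtain ⟨z0, hz0, hz0B⟩ := Finset.not_subset.mp h1a
        obtain ⟨cxy, hcxy, hcxyb⟩ := pick2 (show 2 ≤ Lxy.card by omega) b
        exact ⟨u0, hu0, z0, hz0, cxy, hcxy, b, hb,
          fun h => hu0A (h ▸ hvzA hz0), hcxyb,
          leA z0 cxy (by rintro z (rfl | rfl | rfl | rfl) hz <;> tauto),
          leB u0 cxy b (by rintro z (rfl | rfl | rfl | rfl) hz <;> tauto)⟩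

private lemma main5 (Luv Lvz Lxy Lxt A B : Finset ℕ)
    (huv : 5 ≤ Luv.card) (hvz : 3 ≤ Lvz.card) (hxy : 5 ≤ Lxy.card) (hxt : 3 ≤ Lxt.card)
    (hA : A.card = 5) (hB : B.card = 5) :
    ∃ cuv ∈ Luv, ∃ cvz ∈ Lvz, ∃ cxy ∈ Lxy, ∃ cxt ∈ Lxt,
      cuv ≠ cvz ∧ cxy ≠ cxt ∧
      (({cuv, cvz, cxy, cxt} : Finset ℕ) ∩ A).card ≤ 2 ∧
      (({cuv, cvz, cxy, cxt} : Finset ℕ) ∩ B).card ≤ 3 := by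
  by_cases hvzA : Lvz ⊆ A
  · exact coreVZ Luv Lvz Lxy Lxt A B huv hvz hxy hxt hA hB hvzA
  by_cases hxtA : Lxt ⊆ A
  · obtain ⟨cxy, h3, cxt, h4, cuv, h1, cvz, h2, hne2, hne1, hA2, hB2⟩ :=
      coreVZ Lxy Lxt Luv Lvz A B hxy hxt huv hvz hA hB hxtA
    have hset : ({cuv, cvz, cxy, cxt} : Finset ℕ) = {cxy, cxt, cuv, cvz} := by
      ext z
      simp only [Finset.mem_insert, Finset.mem_singleton]
      tauto
    exact ⟨cuv, h1, cvz, h2, cxy, h3, cxt, h4, hne1, hne2,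
      by rw [hset]; exact hA2, by rw [hset]; exact hB2⟩
  -- C1 : both pendant lists escape A
  obtain ⟨a, ha, haA⟩ := Finset.not_subset.mp hvzA
  obtain ⟨b, hb, hbA⟩ := Finset.not_subset.mp hxtA
  by_cases hc : ∃ c ∈ Lvz, c ∈ Lxt ∧ c ∉ A
  · obtain ⟨c, hc1, hc2, hcA⟩ := hc
    obtain ⟨cuv, hcuv, hcuvc⟩ := pick2 (show 2 ≤ Luv.card by omega) c
    obtain ⟨cxy, hcxy, hcxyc⟩ := pick2 (show 2 ≤ Lxy.card by omega) c
    exact ⟨cuv, hcuv, c, hc1, cxy, hcxy, c, hc2, hcuvc, hcxyc,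
      leA cuv cxy (by rintro z (rfl | rfl | rfl | rfl) hz <;> tauto),
      leB cuv cxy c (by rintro z (rfl | rfl | rfl | rfl) hz <;> tauto)⟩
  · push_neg at hc
    have hab : a ≠ b := fun h => haA (hc a ha (h ▸ hb))
    by_cases haB : a ∈ B
    · by_cases hbB : b ∈ B
      · by_cases h1 : ∃ u ∈ Luv, u ∉ B ∧ u ≠ a
        · obtain ⟨u, hu, huB, hua⟩ := h1
          obtain ⟨cxy, hcxy, hcxyb⟩ := pick2 (show 2 ≤ Lxy.card by omega) b
          exact ⟨u, hu, a, ha, cxy, hcxy, b, hb, hua, hcxyb,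
            leA u cxy (by rintro z (rfl | rfl | rfl | rfl) hz <;> tauto),
            leB a cxy b (by rintro z (rfl | rfl | rfl | rfl) hz <;> tauto)⟩
        · push_neg at h1
          by_cases h2 : ∃ y ∈ Lxy, y ∉ B ∧ y ≠ b
          · obtain ⟨y, hy, hyB, hyb⟩ := h2
            obtain ⟨cuv, hcuv, hcuva⟩ := pick2 (show 2 ≤ Luv.card by omega) a
            exact ⟨cuv, hcuv, a, ha, y, hy, b, hb, hcuva, hyb,
              leA cuv y (by rintro z (rfl | rfl | rfl | rfl) hz <;> tauto),
              leB cuv a b (by rintro z (rfl | rfl | rfl | rfl) hz <;> tauto)⟩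
          · push_neg at h2
            have h4u : 4 ≤ (Luv ∩ B).card := by
              have hsub : Luv \ {a} ⊆ Luv ∩ B := by
                intro z hz
                simp only [Finset.mem_sdiff, Finset.mem_singleton] at hz
                refine Finset.mem_inter.mpr ⟨hz.1, ?_⟩
                by_contra hzB
                exact hz.2 (h1 z hz.1 hzB)
              have h5 := Finset.card_le_card hsub
              have h6 : Luv.card ≤ (Luv \ {a}).card + ({a} : Finset ℕ).card :=
                Finset.card_le_card_sdiff_add_card
              simp only [Finset.card_singleton] at h6
              omega
            have h4x : 4 ≤ (Lxy ∩ B).card := by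
              have hsub : Lxy \ {b} ⊆ Lxy ∩ B := by
                intro z hz
                simp only [Finset.mem_sdiff, Finset.mem_singleton] at hz
                refine Finset.mem_inter.mpr ⟨hz.1, ?_⟩
                by_contra hzB
                exact hz.2 (h2 z hz.1 hzB)
              have h5 := Finset.card_le_card hsub
              have h6 : Lxy.card ≤ (Lxy \ {b}).card + ({b} : Finset ℕ).card :=
                Finset.card_le_card_sdiff_add_card
              simp only [Finset.card_singleton] at h6
              omega
            have h3 : 3 ≤ ((Luv ∩ B) ∩ (Lxy ∩ B)).card := by
              have hh := Finset.card_inter_add_card_union (Luv ∩ B) (Lxy ∩ B)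
              have hsub : (Luv ∩ B) ∪ (Lxy ∩ B) ⊆ B := by
                intro z hz
                rcases Finset.mem_union.mp hz with h | h
                exacts [(Finset.mem_inter.mp h).2, (Finset.mem_inter.mp h).2]
              have := Finset.card_le_card hsub
              omega
            obtain ⟨c, hcm, hca, hcb⟩ := pick3 h3 a b
            have hcu : c ∈ Luv := (Finset.mem_inter.mp (Finset.mem_inter.mp hcm).1).1
            have hcx : c ∈ Lxy := (Finset.mem_inter.mp (Finset.mem_inter.mp hcm).2).1
            exact ⟨c, hcu, a, ha, c, hcx, b, hb, hca, hcb,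
              leA c c (by rintro z (rfl | rfl | rfl | rfl) hz <;> tauto),
              leB c a b (by rintro z (rfl | rfl | rfl | rfl) hz <;> tauto)⟩
      · obtain ⟨cuv, hcuv, hcuva⟩ := pick2 (show 2 ≤ Luv.card by omega) a
        obtain ⟨cxy, hcxy, hcxyb⟩ := pick2 (show 2 ≤ Lxy.card by omega) b
        exact ⟨cuv, hcuv, a, ha, cxy, hcxy, b, hb, hcuva, hcxyb,
          leA cuv cxy (by rintro z (rfl | rfl | rfl | rfl) hz <;> tauto),
          leB a cuv cxy (by rintro z (rfl | rfl | rfl | rfl) hz <;> tauto)⟩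
    · obtain ⟨cuv, hcuv, hcuva⟩ := pick2 (show 2 ≤ Luv.card by omega) a
      obtain ⟨cxy, hcxy, hcxyb⟩ := pick2 (show 2 ≤ Lxy.card by omega) b
      exact ⟨cuv, hcuv, a, ha, cxy, hcxy, b, hb, hcuva, hcxyb,
        leA cuv cxy (by rintro z (rfl | rfl | rfl | rfl) hz <;> tauto),
        leB b cuv cxy (by rintro z (rfl | rfl | rfl | rfl) hz <;> tauto)⟩

/-- Lemma 3 of the note.  The six edges of the path `u-v-w-x-y` plus pendant edges
`vz`, `xt`; strong-coloring conflicts among the four edges `uv, vz, xy, xt` are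
exactly `{uv,vz}` and `{xy,xt}`, and both `vw` and `wx` conflict with all four. -/
theorem config1_precoloring
    (Luv Lvw Lwx Lxy Lvz Lxt : Finset ℕ)
    (huv : 5 ≤ Luv.card) (hvw : 5 ≤ Lvw.card) (hwx : 5 ≤ Lwx.card)
    (hxy : 5 ≤ Lxy.card) (hvz : 3 ≤ Lvz.card) (hxt : 3 ≤ Lxt.card) :
    ∃ cuv ∈ Luv, ∃ cvz ∈ Lvz, ∃ cxy ∈ Lxy, ∃ cxt ∈ Lxt,
      cuv ≠ cvz ∧ cxy ≠ cxt ∧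
      3 ≤ (Lvw \ {cuv, cvz, cxy, cxt}).card ∧
      2 ≤ (Lwx \ {cuv, cvz, cxy, cxt}).card := by
  obtain ⟨A, hAsub, hA⟩ := Finset.exists_subset_card_eq hvw
  obtain ⟨B, hBsub, hB⟩ := Finset.exists_subset_card_eq hwx
  obtain ⟨cuv, h1, cvz, h2, cxy, h3, cxt, h4, hne1, hne2, hA2, hB2⟩ :=
    main5 Luv Lvz Lxy Lxt A B huv hvz hxy hxt hA hB
  refine ⟨cuv, h1, cvz, h2, cxy, h3, cxt, h4, hne1, hne2, ?_, ?_⟩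
  · have key := Finset.card_inter_add_card_sdiff A ({cuv, cvz, cxy, cxt} : Finset ℕ)
    have hAc : (A ∩ ({cuv, cvz, cxy, cxt} : Finset ℕ)).card ≤ 2 := by
      rw [Finset.inter_comm]; exact hA2
    have hmono := Finset.card_le_card
      (Finset.sdiff_subset_sdiff hAsub (le_refl ({cuv, cvz, cxy, cxt} : Finset ℕ)))
    omega
  · have key := Finset.card_inter_add_card_sdiff B ({cuv, cvz, cxy, cxt} : Finset ℕ)
    have hBc : (B ∩ ({cuv, cvz, cxy, cxt} : Finset ℕ)).card ≤ 3 := by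
      rw [Finset.inter_comm]; exact hB2
    have hmono := Finset.card_le_card
      (Finset.sdiff_subset_sdiff hBsub (le_refl ({cuv, cvz, cxy, cxt} : Finset ℕ)))
    omega
end

section
/- Let n ≥ 5 be odd and let G be the graph formed from the path v1–v2–...–vn together with, for each even i in {2,4,...,n−1}, a pendant vertex v'_i adjacent to v_i. Suppose lists satisfy |L(v1v2)| ≥ 3, |L(v2v'2)| ≥ 2, |L(v2v3)| ≥ 4, |L(v_{n−2}v_{n−1})| ≥ 4, |L(v_{n−1}v'_{n−1})| ≥ 2, |L(v_{n−1}v_n)| ≥ 3, and (when n ≥ 7) |L(v_i v_{i+1})| ≥ 5 for all i in {3,...,n−3} and |L(v_j v'_j)| ≥ 3 for all even j in {4,...,n−3}. Then G admits a strong edge-coloring choosing each edge's color from its list. -/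
private lemma exists_avoid {s t : Finset ℕ} (h : t.card < s.card) : ∃ a ∈ s, a ∉ t := by
  by_contra hcon
  push_neg at hcon
  have hsub : s ⊆ t := fun x hx => hcon x hx
  have := Finset.card_le_card hsub
  omega

private lemma card2 (x y : ℕ) : ({x, y} : Finset ℕ).card ≤ 2 :=
  le_trans (Finset.card_insert_le _ _) (by simp)

private lemma card3 (x y z : ℕ) : ({x, y, z} : Finset ℕ).card ≤ 3 :=
  le_trans (Finset.card_insert_le _ _) (by have := card2 y z; omega)

private lemma card4 (x y z w : ℕ) : ({x, y, z, w} : Finset ℕ).card ≤ 4 :=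
  le_trans (Finset.card_insert_le _ _) (by have := card3 y z w; omega)

private lemma sdr3 {A B C : Finset ℕ} (hA : 1 ≤ A.card) (hB : 2 ≤ B.card) (hC : 2 ≤ C.card)
    (hBC : 3 ≤ (B ∪ C).card) :
    ∃ a ∈ A, ∃ b ∈ B, ∃ c ∈ C, a ≠ b ∧ a ≠ c ∧ b ≠ c := by
  obtain ⟨a, ha⟩ := Finset.card_pos.mp (show 0 < A.card by omega)
  obtain ⟨b0, hb0B, hb0a⟩ := exists_avoid (show ({a} : Finset ℕ).card < B.card by rw [Finset.card_singleton]; omega)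
  simp only [Finset.mem_singleton] at hb0a
  by_cases hex : ∃ c ∈ C, c ≠ a ∧ c ≠ b0
  · obtain ⟨c, hcC, hca, hcb⟩ := hex
    exact ⟨a, ha, b0, hb0B, c, hcC, Ne.symm hb0a, hca.symm, hcb.symm⟩
  · push_neg at hex
    obtain ⟨c0, hc0C, hc0a⟩ := exists_avoid (show ({a} : Finset ℕ).card < C.card by rw [Finset.card_singleton]; omega)
    simp only [Finset.mem_singleton] at hc0a
    have hc0b : c0 = b0 := hex c0 hc0C hc0a
    obtain ⟨e, heBC, he⟩ := exists_avoid
      (show ({a, b0} : Finset ℕ).card < (B ∪ C).card from lt_of_le_of_lt (card2 _ _) (by omega))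
    simp only [Finset.mem_insert, Finset.mem_singleton] at he
    push_neg at he
    have heB : e ∈ B := by
      rcases Finset.mem_union.mp heBC with h | h
      · exact h
      · exact absurd (hex e h he.1) he.2
    refine ⟨a, ha, e, heB, c0, hc0C, (he.1).symm, Ne.symm hc0a, ?_⟩
    rw [hc0b]
    exact he.2

private lemma base5 (L1 M2 L2 L3 M4 L4 : Finset ℕ)
    (h1 : 3 ≤ L1.card) (h2 : 2 ≤ M2.card) (h3 : 4 ≤ L2.card) (h4 : 4 ≤ L3.card)
    (h5 : 2 ≤ M4.card) (h6 : L4.card = 3) :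
    ∃ c1 d2 c2 c3 d4 c4, c1 ∈ L1 ∧ d2 ∈ M2 ∧ c2 ∈ L2 ∧ c3 ∈ L3 ∧ d4 ∈ M4 ∧ c4 ∈ L4 ∧
      c1 ≠ d2 ∧ c1 ≠ c2 ∧ c1 ≠ c3 ∧ d2 ≠ c2 ∧ d2 ≠ c3 ∧ c2 ≠ c3 ∧
      c2 ≠ d4 ∧ c2 ≠ c4 ∧ c3 ≠ d4 ∧ c3 ≠ c4 ∧ d4 ≠ c4 := by
  by_cases hz : ∃ z ∈ L2, z ∉ M4 ∪ L4
  · obtain ⟨z, hzL2, hzMU⟩ := hz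
    rw [Finset.mem_union] at hzMU
    push_neg at hzMU
    obtain ⟨hzM4, hzL4⟩ := hzMU
    obtain ⟨d2, hd2M, hd2⟩ := exists_avoid (show ({z} : Finset ℕ).card < M2.card by rw [Finset.card_singleton]; omega)
    simp only [Finset.mem_singleton] at hd2
    obtain ⟨c1, hc1L, hc1⟩ := exists_avoid
      (show ({z, d2} : Finset ℕ).card < L1.card from lt_of_le_of_lt (card2 _ _) (by omega))
    simp only [Finset.mem_insert, Finset.mem_singleton] at hc1
    push_neg at hc1
    obtain ⟨c3, hc3L, hc3⟩ := exists_avoid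
      (show ({c1, d2, z} : Finset ℕ).card < L3.card from lt_of_le_of_lt (card3 _ _ _) (by omega))
    simp only [Finset.mem_insert, Finset.mem_singleton] at hc3
    push_neg at hc3
    obtain ⟨d4, hd4M, hd4⟩ := exists_avoid (show ({c3} : Finset ℕ).card < M4.card by rw [Finset.card_singleton]; omega)
    simp only [Finset.mem_singleton] at hd4
    obtain ⟨c4, hc4L, hc4⟩ := exists_avoid
      (show ({c3, d4} : Finset ℕ).card < L4.card from lt_of_le_of_lt (card2 _ _) (by omega))
    simp only [Finset.mem_insert, Finset.mem_singleton] at hc4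
    push_neg at hc4
    exact ⟨c1, d2, z, c3, d4, c4, hc1L, hd2M, hzL2, hc3L, hd4M, hc4L,
      hc1.2, hc1.1, (hc3.1).symm, hd2, (hc3.2.1).symm, (hc3.2.2).symm,
      fun h => hzM4 (h ▸ hd4M), fun h => hzL4 (h ▸ hc4L),
      Ne.symm hd4, (hc4.1).symm, (hc4.2).symm⟩
  · push_neg at hz
    obtain ⟨a, haL2, haL4⟩ := exists_avoid (show L4.card < L2.card by omega)
    have haM4 : a ∈ M4 := by
      have := hz a haL2
      rw [Finset.mem_union] at this
      tauto
    obtain ⟨x, hxM4, hxa⟩ := exists_avoid (show ({a} : Finset ℕ).card < M4.card by rw [Finset.card_singleton]; omega)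
    simp only [Finset.mem_singleton] at hxa
    by_cases h3a : ∃ d2 ∈ M2, d2 ≠ a ∧ ∃ c1 ∈ L1, c1 ≠ a ∧ c1 ≠ d2 ∧
        ∃ c3 ∈ L3, c3 ∉ ({c1, d2, a, x} : Finset ℕ)
    · obtain ⟨d2, hd2M, hd2a, c1, hc1L, hc1a, hc1d2, c3, hc3L, hc3⟩ := h3a
      simp only [Finset.mem_insert, Finset.mem_singleton] at hc3
      push_neg at hc3
      obtain ⟨c4, hc4L, hc4⟩ := exists_avoid
        (show ({c3, x} : Finset ℕ).card < L4.card from lt_of_le_of_lt (card2 _ _) (by omega))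
      simp only [Finset.mem_insert, Finset.mem_singleton] at hc4
      push_neg at hc4
      exact ⟨c1, d2, a, c3, x, c4, hc1L, hd2M, haL2, hc3L, hxM4, hc4L,
        hc1d2, hc1a, (hc3.1).symm, hd2a, (hc3.2.1).symm, (hc3.2.2.1).symm,
        Ne.symm hxa, fun h => haL4 (by rw [h]; exact hc4L),
        hc3.2.2.2, (hc4.1).symm, (hc4.2).symm⟩
    · push_neg at h3a
      obtain ⟨d20, hd20M, hd20a⟩ := exists_avoid (show ({a} : Finset ℕ).card < M2.card by rw [Finset.card_singleton]; omega)
      simp only [Finset.mem_singleton] at hd20a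
      obtain ⟨c10, hc10L, hc10⟩ := exists_avoid
        (show ({a, d20} : Finset ℕ).card < L1.card from lt_of_le_of_lt (card2 _ _) (by omega))
      simp only [Finset.mem_insert, Finset.mem_singleton] at hc10
      push_neg at hc10
      have hsub : L3 ⊆ {c10, d20, a, x} :=
        fun y hy => h3a d20 hd20M hd20a c10 hc10L hc10.1 hc10.2 y hy
      have hL3eq : L3 = {c10, d20, a, x} :=
        Finset.eq_of_subset_of_card_le hsub (le_trans (card4 _ _ _ _) h4)
      have hxL3 : x ∈ L3 := by rw [hL3eq]; simp
      have hxd20 : x ≠ d20 := by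
        intro h
        have hss : L3 ⊆ {c10, a, x} := by
          intro y hy
          have := hsub hy
          simp only [Finset.mem_insert, Finset.mem_singleton] at this ⊢
          rcases this with h' | h' | h' | h'
          · tauto
          · rw [h', ← h]; tauto
          · tauto
          · tauto
        have := Finset.card_le_card hss
        have := card3 c10 a x
        omega
      have hxL1 : x ∉ L1 := by
        intro hxL1
        have hss : L3 ⊆ {x, d20, a} := by
          intro y hy
          have := h3a d20 hd20M hd20a x hxL1 hxa hxd20 y hy
          simp only [Finset.mem_insert, Finset.mem_singleton] at this ⊢
          tauto
        have := Finset.card_le_card hss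
        have := card3 x d20 a
        omega
      have hxM2 : x ∉ M2 := by
        intro hxM2
        obtain ⟨c1', hc1'L, hc1'⟩ := exists_avoid
          (show ({a, x} : Finset ℕ).card < L1.card from lt_of_le_of_lt (card2 _ _) (by omega))
        simp only [Finset.mem_insert, Finset.mem_singleton] at hc1'
        push_neg at hc1'
        have hss : L3 ⊆ {c1', x, a} := by
          intro y hy
          have := h3a x hxM2 hxa c1' hc1'L hc1'.1 (fun h => hc1'.2 h) y hy
          simp only [Finset.mem_insert, Finset.mem_singleton] at this ⊢
          tauto
        have := Finset.card_le_card hss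
        have := card3 c1' x a
        omega
      obtain ⟨c2, hc2L, hc2⟩ := exists_avoid
        (show ({a, x} : Finset ℕ).card < L2.card from lt_of_le_of_lt (card2 _ _) (by omega))
      simp only [Finset.mem_insert, Finset.mem_singleton] at hc2
      push_neg at hc2
      obtain ⟨d2, hd2M, hd2⟩ := exists_avoid (show ({c2} : Finset ℕ).card < M2.card by rw [Finset.card_singleton]; omega)
      simp only [Finset.mem_singleton] at hd2
      obtain ⟨c1, hc1L, hc1⟩ := exists_avoid
        (show ({c2, d2} : Finset ℕ).card < L1.card from lt_of_le_of_lt (card2 _ _) (by omega))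
      simp only [Finset.mem_insert, Finset.mem_singleton] at hc1
      push_neg at hc1
      obtain ⟨c4, hc4L, hc4⟩ := exists_avoid
        (show ({c2, x} : Finset ℕ).card < L4.card from lt_of_le_of_lt (card2 _ _) (by omega))
      simp only [Finset.mem_insert, Finset.mem_singleton] at hc4
      push_neg at hc4
      exact ⟨c1, d2, c2, x, a, c4, hc1L, hd2M, hc2L, hxL3, haM4, hc4L,
        hc1.2, hc1.1, fun h => hxL1 (h ▸ hc1L), hd2, fun h => hxM2 (h ▸ hd2M),
        hc2.2, hc2.1, (hc4.1).symm, hxa, (hc4.2).symm,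
        fun h => haL4 (by rw [h]; exact hc4L)⟩
private lemma auxmain : ∀ n : ℕ, 5 ≤ n → Odd n → ∀ L M : ℕ → Finset ℕ,
    3 ≤ (L 1).card → 2 ≤ (M 2).card → 4 ≤ (L 2).card →
    4 ≤ (L (n - 2)).card → 2 ≤ (M (n - 1)).card → 3 ≤ (L (n - 1)).card →
    (∀ i, 3 ≤ i → i ≤ n - 3 → 5 ≤ (L i).card) →
    (∀ j, 4 ≤ j → j ≤ n - 3 → Even j → 3 ≤ (M j).card) →
    ∃ c d : ℕ → ℕ,
      (∀ i, 1 ≤ i → i ≤ n - 1 → c i ∈ L i) ∧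
      (∀ j, 2 ≤ j → j ≤ n - 1 → Even j → d j ∈ M j) ∧
      (∀ i j, 1 ≤ i → i < j → j ≤ n - 1 → j ≤ i + 2 → c i ≠ c j) ∧
      (∀ i j, 1 ≤ i → i ≤ n - 1 → 2 ≤ j → j ≤ n - 1 → Even j →
        i ≤ j + 1 → j ≤ i + 2 → c i ≠ d j) := by
  intro n
  induction n using Nat.strong_induction_on with
  | _ n ih =>
  intro hn5 hodd L M h1 hM2 h2 hn2 hMn1 hn1 hmid hMmid
  obtain ⟨t, ht⟩ := hodd
  by_cases hbase : n = 5
  · subst hbase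
    norm_num at hn2 hMn1 hn1
    obtain ⟨L4', hL4sub, hL4card⟩ := Finset.exists_subset_card_eq (s := L 4) (n := 3) hn1
    obtain ⟨c1, d2, c2, c3, d4, c4, m1, m2', m3, m4, m5, m6,
      e1, e2', e3, e4, e5, e6, e7, e8, e9, e10, e11⟩ :=
      base5 (L 1) (M 2) (L 2) (L 3) (M 4) L4' h1 hM2 h2 hn2 hMn1 hL4card
    have m6' : c4 ∈ L 4 := hL4sub m6
    have f1 : d2 ≠ c1 := Ne.symm e1
    have f2 : c2 ≠ c1 := Ne.symm e2'
    have f3 : c3 ≠ c1 := Ne.symm e3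
    have f4 : c2 ≠ d2 := Ne.symm e4
    have f5 : c3 ≠ d2 := Ne.symm e5
    have f6 : c3 ≠ c2 := Ne.symm e6
    have f7 : d4 ≠ c2 := Ne.symm e7
    have f8 : c4 ≠ c2 := Ne.symm e8
    have f9 : d4 ≠ c3 := Ne.symm e9
    have f10 : c4 ≠ c3 := Ne.symm e10
    have f11 : c4 ≠ d4 := Ne.symm e11
    clear ih hmid hMmid ht hn5 h1 hM2 h2 hn2 hMn1 hn1 hL4sub hL4card m6
    refine ⟨fun i => if i = 1 then c1 else if i = 2 then c2 else if i = 3 then c3 else c4,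
      fun j => if j = 2 then d2 else d4, ?_, ?_, ?_, ?_⟩
    · intro i hi1 hi2
      norm_num at hi2
      interval_cases i <;> simp [*]
    · intro j hj1 hj2 hev
      norm_num at hj2
      interval_cases j
      · simpa using m2'
      · exact absurd hev (by decide)
      · simpa using m5
    · intro i j hi hij hj hj2
      norm_num at hj
      interval_cases j <;> interval_cases i <;> simp_all
    · intro i j hi hi2 hj hj2 hev hij1 hij2
      norm_num at hi2 hj2
      interval_cases j
      · interval_cases i <;> simp_all
      · exact absurd hev (by decide)
      · interval_cases i <;> simp_all
  · obtain ⟨m, rfl⟩ : ∃ m, n = m + 2 := ⟨n - 2, by omega⟩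
    have hm5 : 5 ≤ m := by omega
    have hmodd : Odd m := ⟨t - 1, by omega⟩
    have hev1 : Even (m - 1) := ⟨t - 1, by omega⟩
    rw [show m + 2 - 2 = m from by omega] at hn2
    rw [show m + 2 - 1 = m + 1 from by omega] at hMn1 hn1
    simp only [show m + 2 - 3 = m - 1 from by omega] at hmid hMmid
    have hLm1 : 5 ≤ (L (m - 1)).card := hmid (m - 1) (by omega) (by omega)
    have hLm2 : 5 ≤ (L (m - 2)).card := hmid (m - 2) (by omega) (by omega)
    have hMm1 : 3 ≤ (M (m - 1)).card := hMmid (m - 1) (by omega) (by omega) hev1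
    obtain ⟨S2, hS2card, hS2prop⟩ : ∃ S2 : Finset ℕ, S2.card ≤ 2 ∧
        ∀ u, u ∉ S2 → 2 ≤ (M (m + 1) \ {u}).card := by
      by_cases hq : (M (m + 1)).card ≤ 2
      · refine ⟨M (m + 1), hq, fun u hu => ?_⟩
        rw [Finset.sdiff_eq_self_iff_disjoint.mpr (by simp [hu])]
        exact hMn1
      · refine ⟨∅, by simp, fun u _ => ?_⟩
        have := Finset.card_le_card_sdiff_add_card (s := M (m + 1)) (t := ({u} : Finset ℕ))
        rw [Finset.card_singleton] at this
        omega
    obtain ⟨δ, hδ⟩ : ∃ δ, (L m \ (M (m + 1) ∪ L (m + 1))).Nonempty →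
        δ ∈ L m \ (M (m + 1) ∪ L (m + 1)) := by
      by_cases hne : (L m \ (M (m + 1) ∪ L (m + 1))).Nonempty
      · exact ⟨hne.choose, fun _ => hne.choose_spec⟩
      · exact ⟨0, fun h => absurd h hne⟩
    obtain ⟨c, d, hc, hd, hcc, hcd⟩ := ih m (by omega) hm5 hmodd
      (fun i => if i = m - 2 then L i \ {δ} else if i = m - 1 then L i \ S2 else L i)
      (fun j => if j = m - 1 then M j \ {δ} else M j)
      (by beta_reduce; rw [if_neg (by omega), if_neg (by omega)]; exact h1)
      (by beta_reduce; rw [if_neg (by omega)]; exact hM2)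
      (by beta_reduce; rw [if_neg (by omega), if_neg (by omega)]; exact h2)
      (by beta_reduce
          rw [if_pos rfl]
          have := Finset.card_le_card_sdiff_add_card (s := L (m - 2)) (t := ({δ} : Finset ℕ))
          rw [Finset.card_singleton] at this
          omega)
      (by beta_reduce
          rw [if_pos rfl]
          have := Finset.card_le_card_sdiff_add_card (s := M (m - 1)) (t := ({δ} : Finset ℕ))
          rw [Finset.card_singleton] at this
          omega)
      (by beta_reduce
          rw [if_neg (by omega), if_pos rfl]
          have := Finset.card_le_card_sdiff_add_card (s := L (m - 1)) (t := S2)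
          omega)
      (by intro i hi3 him
          beta_reduce
          rw [if_neg (by omega), if_neg (by omega)]
          exact hmid i hi3 (by omega))
      (by intro j hj4 hjm hev
          beta_reduce
          rw [if_neg (by omega)]
          exact hMmid j hj4 (by omega) hev)
    have hum := hc (m - 1) (by omega) (le_refl _)
    beta_reduce at hum
    rw [if_neg (by omega), if_pos rfl, Finset.mem_sdiff] at hum
    obtain ⟨huL, huS2⟩ := hum
    have hvm := hc (m - 2) (by omega) (by omega)
    beta_reduce at hvm
    rw [if_pos rfl, Finset.mem_sdiff, Finset.mem_singleton] at hvm
    obtain ⟨hvL, hvδ⟩ := hvm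
    have hwm := hd (m - 1) (by omega) (le_refl _) hev1
    beta_reduce at hwm
    rw [if_pos rfl, Finset.mem_sdiff, Finset.mem_singleton] at hwm
    obtain ⟨hwM, hwδ⟩ := hwm
    have hB2 : 2 ≤ (M (m + 1) \ {c (m - 1)}).card := hS2prop _ huS2
    have hC2 : 2 ≤ (L (m + 1) \ {c (m - 1)}).card := by
      have := Finset.card_le_card_sdiff_add_card (s := L (m + 1)) (t := ({c (m - 1)} : Finset ℕ))
      rw [Finset.card_singleton] at this
      omega
    have hA1 : 1 ≤ (L m \ {c (m - 2), c (m - 1), d (m - 1)}).card := by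
      have h' := Finset.card_le_card_sdiff_add_card (s := L m)
        (t := ({c (m - 2), c (m - 1), d (m - 1)} : Finset ℕ))
      have := card3 (c (m - 2)) (c (m - 1)) (d (m - 1))
      omega
    obtain ⟨a, b, cc, haP, hav, hau, haw, hbM, hbu, hccR, hccu, hab, hac, hbc⟩ :
        ∃ a b cc, a ∈ L m ∧ a ≠ c (m - 2) ∧ a ≠ c (m - 1) ∧ a ≠ d (m - 1) ∧
          b ∈ M (m + 1) ∧ b ≠ c (m - 1) ∧ cc ∈ L (m + 1) ∧ cc ≠ c (m - 1) ∧
          a ≠ b ∧ a ≠ cc ∧ b ≠ cc := by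
      by_cases hBC : 3 ≤ ((M (m + 1) \ {c (m - 1)}) ∪ (L (m + 1) \ {c (m - 1)})).card
      · obtain ⟨a, haA, b, hbB, cc, hccC, g1, g2, g3⟩ := sdr3 hA1 hB2 hC2 hBC
        rw [Finset.mem_sdiff] at haA hbB hccC
        have ha3 := haA.2
        simp only [Finset.mem_insert, Finset.mem_singleton] at ha3
        push_neg at ha3
        refine ⟨a, b, cc, haA.1, ha3.1, ha3.2.1, ha3.2.2, hbB.1, ?_, hccC.1, ?_, g1, g2, g3⟩
        · have hb' := hbB.2
          simp only [Finset.mem_singleton] at hb'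
          exact hb'
        · have hc' := hccC.2
          simp only [Finset.mem_singleton] at hc'
          exact hc'
      · have huR : c (m - 1) ∈ L (m + 1) := by
          by_contra hnot
          apply hBC
          calc (3 : ℕ) ≤ (L (m + 1)).card := hn1
            _ = (L (m + 1) \ {c (m - 1)}).card := by
                rw [Finset.sdiff_eq_self_iff_disjoint.mpr (by simp [hnot])]
            _ ≤ _ := Finset.card_le_card Finset.subset_union_right
        have hMR : (M (m + 1) ∪ L (m + 1)).card ≤ 3 := by
          have hsub : M (m + 1) ∪ L (m + 1) ⊆
              insert (c (m - 1)) ((M (m + 1) \ {c (m - 1)}) ∪ (L (m + 1) \ {c (m - 1)})) := by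
            intro y hy
            by_cases hyc : y = c (m - 1)
            · simp [hyc]
            · rw [Finset.mem_union] at hy
              simp only [Finset.mem_insert, Finset.mem_union, Finset.mem_sdiff,
                Finset.mem_singleton]
              tauto
          have h2' := Finset.card_le_card hsub
          have h3' := Finset.card_insert_le (c (m - 1))
            ((M (m + 1) \ {c (m - 1)}) ∪ (L (m + 1) \ {c (m - 1)}))
          omega
        have hNon : (L m \ (M (m + 1) ∪ L (m + 1))).Nonempty := by
          rw [← Finset.card_pos]
          have := Finset.card_le_card_sdiff_add_card (s := L m) (t := M (m + 1) ∪ L (m + 1))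
          omega
        have hδ' := hδ hNon
        rw [Finset.mem_sdiff, Finset.mem_union] at hδ'
        push_neg at hδ'
        obtain ⟨hδL, hδM, hδR⟩ := hδ'
        obtain ⟨b, hbB⟩ := Finset.card_pos.mp
          (show 0 < (M (m + 1) \ {c (m - 1)}).card by omega)
        obtain ⟨cc, hccC, hccb⟩ := exists_avoid
          (show ({b} : Finset ℕ).card < (L (m + 1) \ {c (m - 1)}).card by
            rw [Finset.card_singleton]; omega)
        rw [Finset.mem_sdiff, Finset.mem_singleton] at hbB hccC
        simp only [Finset.mem_singleton] at hccb
        exact ⟨δ, b, cc, hδL, Ne.symm hvδ, fun h => hδR (h ▸ huR), Ne.symm hwδ,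
          hbB.1, hbB.2, hccC.1, hccC.2, fun h => hδM (h ▸ hbB.1), fun h => hδR (h ▸ hccC.1),
          Ne.symm hccb⟩
    refine ⟨fun i => if i = m then a else if i = m + 1 then cc else c i,
      fun j => if j = m + 1 then b else d j, ?_, ?_, ?_, ?_⟩
    · intro i hi1 hi2
      beta_reduce
      rcases eq_or_ne i m with hie | him
      · rw [if_pos hie, hie]
        exact haP
      · rcases eq_or_ne i (m + 1) with hie1 | him1
        · rw [if_neg him, if_pos hie1, hie1]
          exact hccR
        · rw [if_neg him, if_neg him1]
          have hthis := hc i hi1 (by omega)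
          beta_reduce at hthis
          split_ifs at hthis with g1 g2
          · exact (Finset.mem_sdiff.mp hthis).1
          · exact (Finset.mem_sdiff.mp hthis).1
          · exact hthis
    · intro j hj2 hjn hev
      beta_reduce
      rcases eq_or_ne j (m + 1) with hje | hjm1
      · rw [if_pos hje, hje]
        exact hbM
      · rw [if_neg hjm1]
        obtain ⟨s, hs⟩ := hev
        have hthis := hd j hj2 (by omega) ⟨s, hs⟩
        beta_reduce at hthis
        split_ifs at hthis with g1
        · exact (Finset.mem_sdiff.mp hthis).1
        · exact hthis
    · intro i j hi hij hjn hj2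
      beta_reduce
      rcases eq_or_ne j (m + 1) with hje | hjm1
      · rcases eq_or_ne i m with hie | him
        · rw [if_pos hie, if_neg (by omega : j ≠ m), if_pos hje]
          exact hac
        · have hieq : i = m - 1 := by omega
          rw [if_neg him, if_neg (by omega : i ≠ m + 1), if_neg (by omega : j ≠ m),
            if_pos hje, hieq]
          exact Ne.symm hccu
      · rcases eq_or_ne j m with hje2 | hjm
        · have hcase : i = m - 2 ∨ i = m - 1 := by omega
          rw [if_neg (by omega : i ≠ m), if_neg (by omega : i ≠ m + 1), if_pos hje2]
          rcases hcase with hieq | hieq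
          · rw [hieq]
            exact Ne.symm hav
          · rw [hieq]
            exact Ne.symm hau
        · rw [if_neg (by omega : i ≠ m), if_neg (by omega : i ≠ m + 1),
            if_neg hjm, if_neg hjm1]
          exact hcc i j hi hij (by omega) hj2
    · intro i j hi him2 hj2 hjn hev hij1 hij2
      beta_reduce
      obtain ⟨s, hs⟩ := hev
      rcases eq_or_ne j (m + 1) with hje | hjne
      · rw [if_pos hje]
        rcases eq_or_ne i m with hie | him
        · rw [if_pos hie]
          exact hab
        · rcases eq_or_ne i (m + 1) with hie1 | him1
          · rw [if_neg him, if_pos hie1]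
            exact Ne.symm hbc
          · have hieq : i = m - 1 := by omega
            rw [if_neg him, if_neg him1, hieq]
            exact Ne.symm hbu
      · rw [if_neg hjne]
        rcases eq_or_ne i m with hie | him
        · have hje2 : j = m - 1 := by omega
          rw [if_pos hie, hje2]
          exact haw
        · rw [if_neg him, if_neg (by omega : i ≠ m + 1)]
          exact hcd i j hi (by omega) hj2 (by omega) ⟨s, hs⟩ hij1 hij2

/-- Lemma 5 of the note.  `G` is the path `v1-v2-...-vn` (`n ≥ 5` odd) together
with a pendant vertex `v'_j` attached to `v_j` for each even `j` with
`2 ≤ j ≤ n-1`.  Here `L i` is the list of the path edge `v_i v_{i+1}`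
(`1 ≤ i ≤ n-1`) and `M j` the list of the pendant edge `v_j v'_j`.
Two path edges `e_i, e_j` (`i < j`) conflict iff `j ≤ i + 2`; a path edge `e_i`
conflicts with a pendant edge `p_j` iff `i ≤ j + 1 ∧ j ≤ i + 2`; two pendant
edges never conflict.  Under the stated list sizes a strong edge-coloring from
the lists exists. -/
theorem config2_general_colorable
    (n : ℕ) (hn5 : 5 ≤ n) (hodd : Odd n)
    (L M : ℕ → Finset ℕ)
    (h1 : 3 ≤ (L 1).card) (hM2 : 2 ≤ (M 2).card) (h2 : 4 ≤ (L 2).card)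
    (hn2 : 4 ≤ (L (n - 2)).card) (hMn1 : 2 ≤ (M (n - 1)).card)
    (hn1 : 3 ≤ (L (n - 1)).card)
    (hmid : ∀ i, 3 ≤ i → i ≤ n - 3 → 5 ≤ (L i).card)
    (hMmid : ∀ j, 4 ≤ j → j ≤ n - 3 → Even j → 3 ≤ (M j).card) :
    ∃ c d : ℕ → ℕ,
      (∀ i, 1 ≤ i → i ≤ n - 1 → c i ∈ L i) ∧
      (∀ j, 2 ≤ j → j ≤ n - 1 → Even j → d j ∈ M j) ∧
      (∀ i j, 1 ≤ i → i < j → j ≤ n - 1 → j ≤ i + 2 → c i ≠ c j) ∧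
      (∀ i j, 1 ≤ i → i ≤ n - 1 → 2 ≤ j → j ≤ n - 1 → Even j →
        i ≤ j + 1 → j ≤ i + 2 → c i ≠ d j) :=
  auxmain n hn5 hodd L M h1 hM2 h2 hn2 hMn1 hn1 hmid hMmid
end

section
/- A minimal counterexample to the statement 'every (2,3)-bipartite graph is strongly 6-edge-choosable' contains no 4-cycle. Equivalently: let G be a (2,3)-bipartite graph containing a 4-cycle u,v,w,x where u and w have degree at most 2, and suppose every proper subgraph obtained by deleting vertices is strongly 6-edge-choosable; then G is strongly 6-edge-choosable. -/
/-- Strong conflict between two edges of a simple graph. -/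
def StrongConflict {V : Type*} (G : SimpleGraph V) (e f : Sym2 V) : Prop :=
  e ≠ f ∧ ((∃ v, v ∈ e ∧ v ∈ f) ∨ (∃ u v, u ∈ e ∧ v ∈ f ∧ G.Adj u v))

/-- `G` is strongly `k`-edge-choosable. -/
def StrongEdgeChoosable {V : Type*} (G : SimpleGraph V) (k : ℕ) : Prop :=
  ∀ L : Sym2 V → Finset ℕ, (∀ e ∈ G.edgeSet, k ≤ (L e).card) →
    ∃ c : Sym2 V → ℕ, (∀ e ∈ G.edgeSet, c e ∈ L e) ∧
      ∀ e ∈ G.edgeSet, ∀ f ∈ G.edgeSet, StrongConflict G e f → c e ≠ c f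

lemma conflict_symm {V : Type*} {G : SimpleGraph V} {e f : Sym2 V}
    (h : StrongConflict G e f) : StrongConflict G f e := by
  obtain ⟨hne, h⟩ := h
  refine ⟨hne.symm, ?_⟩
  rcases h with ⟨a, h1, h2⟩ | ⟨a, b, h1, h2, h3⟩
  · exact Or.inl ⟨a, h2, h1⟩
  · exact Or.inr ⟨b, a, h2, h1, h3.symm⟩

lemma edge_other {V : Type*} {G : SimpleGraph V} {f : Sym2 V}
    (hf : f ∈ G.edgeSet) {a : V} (ha : a ∈ f) : ∃ b, G.Adj a b ∧ f = s(a, b) := by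
  induction f with
  | _ p q =>
    rw [SimpleGraph.mem_edgeSet] at hf
    rcases Sym2.mem_iff.mp ha with rfl | rfl
    · exact ⟨q, hf, rfl⟩
    · exact ⟨p, hf.symm, Sym2.eq_swap.symm⟩

lemma hall4 (l : Fin 4 → Finset ℕ) (h3 : ∀ i, 3 ≤ (l i).card)
    (h4 : 4 ≤ (Finset.univ.biUnion l).card) :
    ∃ g : Fin 4 → ℕ, Function.Injective g ∧ ∀ i, g i ∈ l i := by
  rw [← Finset.all_card_le_biUnion_card_iff_exists_injective]
  intro s
  rcases s.eq_empty_or_nonempty with rfl | ⟨i, hi⟩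
  · simp
  by_cases hs : s = Finset.univ
  · subst hs
    simpa using h4
  · have hlt : s.card < 4 := by
      have := Finset.card_lt_card (Finset.ssubset_univ_iff.mpr hs)
      simpa using this
    calc s.card ≤ 3 := by omega
    _ ≤ (l i).card := h3 i
    _ ≤ (s.biUnion l).card := Finset.card_le_card (Finset.subset_biUnion_of_mem l hi)

lemma ncard3' {α : Type*} {a b c : α} (hab : a ≠ b) (hac : a ≠ c) (hbc : b ≠ c) :
    ({a, b, c} : Set α).ncard = 3 := by
  rw [Set.ncard_insert_of_notMem (by simp [hab, hac]) ((Set.finite_singleton c).insert b),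
    Set.ncard_pair hbc]

lemma three_le_ncard {α : Type*} [Finite α] {s : Set α} {a b c : α}
    (ha : a ∈ s) (hb : b ∈ s) (hc : c ∈ s) (hab : a ≠ b) (hac : a ≠ c) (hbc : b ≠ c) :
    3 ≤ s.ncard := by
  rw [← ncard3' hab hac hbc]
  refine Set.ncard_le_ncard ?_ (Set.toFinite s)
  intro y hy
  simp only [Set.mem_insert_iff, Set.mem_singleton_iff] at hy
  rcases hy with rfl|rfl|rfl <;> assumption

lemma four_le_ncard {α : Type*} [Finite α] {s : Set α} {a b c d : α}
    (ha : a ∈ s) (hb : b ∈ s) (hc : c ∈ s) (hd : d ∈ s)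
    (hab : a ≠ b) (hac : a ≠ c) (had : a ≠ d) (hbc : b ≠ c) (hbd : b ≠ d) (hcd : c ≠ d) :
    4 ≤ s.ncard := by
  have h4 : ({a, b, c, d} : Set α).ncard = 4 := by
    rw [Set.ncard_insert_of_notMem (by simp [hab, hac, had])
      (((Set.finite_singleton d).insert c).insert b), ncard3' hbc hbd hcd]
  rw [← h4]
  refine Set.ncard_le_ncard ?_ (Set.toFinite s)
  intro y hy
  simp only [Set.mem_insert_iff, Set.mem_singleton_iff] at hy
  rcases hy with rfl|rfl|rfl|rfl <;> assumption

lemma card_triple_le {α : Type*} [DecidableEq α] (a b c : α) :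
    ({a, b, c} : Finset α).card ≤ 3 := by
  have h1 := Finset.card_insert_le a ({b, c} : Finset α)
  have h2 := Finset.card_insert_le b ({c} : Finset α)
  simp only [Finset.card_singleton] at h2
  omega

lemma card3_distinct {α : Type*} [DecidableEq α] {a b c : α}
    (h : 3 ≤ ({a, b, c} : Finset α).card) : a ≠ b ∧ a ≠ c ∧ b ≠ c := by
  have key : ∀ (p q : α) (s : Finset α), s ⊆ {p, q} → s.card ≤ 2 := by
    intro p q s hs
    have h2 : ({p, q} : Finset α).card ≤ 2 := by
      have := Finset.card_insert_le p ({q} : Finset α)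
      simp only [Finset.card_singleton] at this
      omega
    exact (Finset.card_le_card hs).trans h2
  refine ⟨?_, ?_, ?_⟩
  · rintro rfl
    have := key a c {a, a, c} (by intro y hy; simp at hy ⊢; tauto)
    omega
  · rintro rfl
    have := key a b {a, b, a} (by intro y hy; simp at hy ⊢; tauto)
    omega
  · rintro rfl
    have := key a b {a, b, b} (by intro y hy; simp at hy ⊢; tauto)
    omega

lemma card_triple_eq {α : Type*} [DecidableEq α] {a b c : α}
    (hab : a ≠ b) (hac : a ≠ c) (hbc : b ≠ c) : ({a, b, c} : Finset α).card = 3 := by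
  rw [Finset.card_insert_of_notMem (by simp [hab, hac]), Finset.card_pair hbc]
/-- A minimal counterexample contains no 4-cycle: if a (2,3)-bipartite graph `G`
contains a 4-cycle `u v w x` with `u, w` of degree at most 2, and every proper
induced subgraph of `G` is strongly 6-edge-choosable, then so is `G`. -/
theorem no_four_cycle_in_minimal_counterexample
    {V : Type*} [Fintype V] (G : SimpleGraph V) (A B : Set V)
    (hpart : ∀ v, v ∈ A ∨ v ∈ B) (hdisj : Disjoint A B)
    (hbip : ∀ a b, G.Adj a b → (a ∈ A ∧ b ∈ B) ∨ (a ∈ B ∧ b ∈ A))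
    (hA : ∀ v ∈ A, (G.neighborSet v).ncard ≤ 2)
    (hB : ∀ v ∈ B, (G.neighborSet v).ncard ≤ 3)
    (u v w x : V)
    (hdist : u ≠ v ∧ u ≠ w ∧ u ≠ x ∧ v ≠ w ∧ v ≠ x ∧ w ≠ x)
    (huv : G.Adj u v) (hvw : G.Adj v w) (hwx : G.Adj w x) (hxu : G.Adj x u)
    (hdu : (G.neighborSet u).ncard ≤ 2) (hdw : (G.neighborSet w).ncard ≤ 2)
    (hmin : ∀ S : Set V, S ≠ Set.univ → StrongEdgeChoosable (G.induce S) 6) :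
    StrongEdgeChoosable G 6 := by
  classical
  obtain ⟨duv, duw, dux, dvw, dvx, dwx⟩ := hdist
  intro L h6
  have hABne : ∀ a : V, a ∈ A → a ∈ B → False :=
    fun a ha hb => (Set.disjoint_left.mp hdisj ha) hb
  set S : Set V := {a | a ≠ u ∧ a ≠ w} with hSdef
  have hSne : S ≠ Set.univ := by
    intro h
    have : u ∈ S := h ▸ Set.mem_univ u
    exact this.1 rfl
  have hNu : G.neighborSet u = {v, x} := by
    apply Set.Subset.antisymm
    · intro c hc
      by_contra hcon
      simp only [Set.mem_insert_iff, Set.mem_singleton_iff, not_or] at hcon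
      have h3 : 3 ≤ (G.neighborSet u).ncard :=
        three_le_ncard (a := v) (b := x) (c := c) huv hxu.symm hc dvx
          (Ne.symm hcon.1) (Ne.symm hcon.2)
      omega
    · rintro c (rfl | rfl)
      · exact huv
      · exact hxu.symm
  have hNw : G.neighborSet w = {v, x} := by
    apply Set.Subset.antisymm
    · intro c hc
      by_contra hcon
      simp only [Set.mem_insert_iff, Set.mem_singleton_iff, not_or] at hcon
      have h3 : 3 ≤ (G.neighborSet w).ncard :=
        three_le_ncard (a := v) (b := x) (c := c) hvw.symm hwx hc dvx
          (Ne.symm hcon.1) (Ne.symm hcon.2)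
      omega
    · rintro c (rfl | rfl)
      · exact hvw.symm
      · exact hwx
  have hN3 : ∀ c : V, (G.neighborSet c).ncard ≤ 3 := by
    intro c
    rcases hpart c with h | h
    · exact (hA c h).trans (by norm_num)
    · exact hB c h
  -- conflicting old edges
  set ConflOld : Sym2 V → Set (Sym2 V) :=
    fun e => {f | (f ∈ G.edgeSet ∧ u ∉ f ∧ w ∉ f) ∧ StrongConflict G e f} with hCOdef
  set F : (Sym2 V → ℕ) → Sym2 V → Finset ℕ :=
    fun c₁ e => ((Set.toFinite (ConflOld e)).image c₁).toFinset with hFdef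
  have hFmem : ∀ (c₁ : Sym2 V → ℕ) (e : Sym2 V) (n : ℕ),
      n ∈ F c₁ e ↔ ∃ f ∈ ConflOld e, c₁ f = n := by
    intro c₁ e n
    rw [hFdef]
    simp [Set.Finite.mem_toFinset]
  have hFcard : ∀ (c₁ : Sym2 V → ℕ) (e : Sym2 V), (F c₁ e).card ≤ (ConflOld e).ncard := by
    intro c₁ e
    rw [hFdef]
    rw [← Set.ncard_eq_toFinset_card _ ((Set.toFinite (ConflOld e)).image c₁)]
    exact Set.ncard_image_le (Set.toFinite _)
  -- the four new edges
  set EE : Fin 4 → Sym2 V := ![s(u,v), s(u,x), s(w,v), s(w,x)] with hEEdef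
  have hEE0 : EE 0 = s(u,v) := rfl
  have hEE1 : EE 1 = s(u,x) := rfl
  have hEE2 : EE 2 = s(w,v) := rfl
  have hEE3 : EE 3 = s(w,x) := rfl
  have he1 : s(u,v) ∈ G.edgeSet := huv
  have he2 : s(u,x) ∈ G.edgeSet := hxu.symm
  have he3 : s(w,v) ∈ G.edgeSet := hvw.symm
  have he4 : s(w,x) ∈ G.edgeSet := hwx
  have hd12 : s(u,v) ≠ s(u,x) := by simp [Sym2.eq_iff, dvx, dux]
  have hd13 : s(u,v) ≠ s(w,v) := by simp [Sym2.eq_iff, duw, duv, dvw]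
  have hd14 : s(u,v) ≠ s(w,x) := by simp [Sym2.eq_iff, duw, dux, dvx, dvw]
  have hd23 : s(u,x) ≠ s(w,v) := by simp [Sym2.eq_iff, duw, duv, dvx, dwx]
  have hd24 : s(u,x) ≠ s(w,x) := by simp [Sym2.eq_iff, duw, dux, dwx]
  have hd34 : s(w,v) ≠ s(w,x) := by simp [Sym2.eq_iff, dvx, dwx, dvw]
  -- the extension device
  have key : ∀ c₁ : Sym2 V → ℕ,
      (∀ f, f ∈ G.edgeSet → u ∉ f → w ∉ f → c₁ f ∈ L f) →
      (∀ f g, f ∈ G.edgeSet → u ∉ f → w ∉ f → g ∈ G.edgeSet → u ∉ g → w ∉ g →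
        StrongConflict G f g → c₁ f ≠ c₁ g) →
      (∀ i : Fin 4, 3 ≤ ((L (EE i)) \ (F c₁ (EE i))).card) →
      (4 ≤ (Finset.univ.biUnion (fun i : Fin 4 => (L (EE i)) \ (F c₁ (EE i)))).card) →
      ∃ c : Sym2 V → ℕ, (∀ e ∈ G.edgeSet, c e ∈ L e) ∧
        ∀ e ∈ G.edgeSet, ∀ f ∈ G.edgeSet, StrongConflict G e f → c e ≠ c f := by
    intro c₁ hc1 hc2 h3 h4
    obtain ⟨g, hginj, hg⟩ := hall4 _ h3 h4
    have hgl : ∀ i, g i ∈ L (EE i) ∧ g i ∉ F c₁ (EE i) := fun i => Finset.mem_sdiff.mp (hg i)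
    set cc : Sym2 V → ℕ := fun e =>
      if e = s(u,v) then g 0 else if e = s(u,x) then g 1
      else if e = s(w,v) then g 2 else if e = s(w,x) then g 3 else c₁ e with hccdef
    have hv1 : cc s(u,v) = g 0 := by simp [hccdef]
    have hv2 : cc s(u,x) = g 1 := by simp [hccdef, Ne.symm hd12]
    have hv3 : cc s(w,v) = g 2 := by simp [hccdef, Ne.symm hd13, Ne.symm hd23]
    have hv4 : cc s(w,x) = g 3 := by simp [hccdef, Ne.symm hd14, Ne.symm hd24, Ne.symm hd34]
    have hvold : ∀ f, u ∉ f → w ∉ f → cc f = c₁ f := by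
      intro f hfu hfw
      have n1 : f ≠ s(u,v) := by rintro rfl; exact hfu (Sym2.mem_iff.mpr (Or.inl rfl))
      have n2 : f ≠ s(u,x) := by rintro rfl; exact hfu (Sym2.mem_iff.mpr (Or.inl rfl))
      have n3 : f ≠ s(w,v) := by rintro rfl; exact hfw (Sym2.mem_iff.mpr (Or.inl rfl))
      have n4 : f ≠ s(w,x) := by rintro rfl; exact hfw (Sym2.mem_iff.mpr (Or.inl rfl))
      simp only [hccdef]
      rw [if_neg n1, if_neg n2, if_neg n3, if_neg n4]
    have hvE : ∀ i, cc (EE i) = g i := by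
      intro i
      fin_cases i
      · exact hv1
      · exact hv2
      · exact hv3
      · exact hv4
    have hcls : ∀ e, e ∈ G.edgeSet → (∃ i : Fin 4, e = EE i) ∨ (u ∉ e ∧ w ∉ e) := by
      intro e he
      by_cases hu' : u ∈ e
      · obtain ⟨c, hc, rfl⟩ := edge_other he hu'
        have hcN : c ∈ G.neighborSet u := hc
        rw [hNu] at hcN
        simp only [Set.mem_insert_iff, Set.mem_singleton_iff] at hcN
        rcases hcN with rfl | rfl
        · exact Or.inl ⟨0, rfl⟩
        · exact Or.inl ⟨1, rfl⟩
      · by_cases hw' : w ∈ e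
        · obtain ⟨c, hc, rfl⟩ := edge_other he hw'
          have hcN : c ∈ G.neighborSet w := hc
          rw [hNw] at hcN
          simp only [Set.mem_insert_iff, Set.mem_singleton_iff] at hcN
          rcases hcN with rfl | rfl
          · exact Or.inl ⟨2, rfl⟩
          · exact Or.inl ⟨3, rfl⟩
        · exact Or.inr ⟨hu', hw'⟩
    refine ⟨cc, ?_, ?_⟩
    · intro e he
      rcases hcls e he with ⟨i, rfl⟩ | ⟨hu', hw'⟩
      · rw [hvE i]; exact (hgl i).1
      · rw [hvold e hu' hw']; exact hc1 e he hu' hw'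
    · intro e he f hf hconf
      rcases hcls e he with ⟨i, rfl⟩ | ⟨heu, hew⟩ <;> rcases hcls f hf with ⟨j, rfl⟩ | ⟨hfu, hfw⟩
      · have hij : i ≠ j := by rintro rfl; exact hconf.1 rfl
        rw [hvE i, hvE j]
        exact fun h => hij (hginj h)
      · rw [hvE i, hvold f hfu hfw]
        intro hEq
        apply (hgl i).2
        rw [hFmem]
        exact ⟨f, ⟨⟨hf, hfu, hfw⟩, hconf⟩, hEq.symm⟩
      · rw [hvold e heu hew, hvE j]
        intro hEq
        apply (hgl j).2
        rw [hFmem]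
        exact ⟨e, ⟨⟨he, heu, hew⟩, conflict_symm hconf⟩, hEq⟩
      · rw [hvold e heu hew, hvold f hfu hfw]
        exact hc2 e f he heu hew hf hfu hfw hconf
    -- the coloring of the graph with u, w deleted
  obtain ⟨c₀, hc₀mem, hc₀conf⟩ :=
    hmin S hSne (fun e' => L (Sym2.map (Subtype.val) e')) (by
      intro e'
      induction e' using Sym2.ind with
      | _ p q =>
        intro he'
        apply h6
        rw [SimpleGraph.mem_edgeSet] at he'
        rw [Sym2.map_pair_eq, SimpleGraph.mem_edgeSet]
        simpa using he')
  have hmapinj : Function.Injective (Sym2.map (Subtype.val : S → V)) :=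
    Sym2.map.injective Subtype.val_injective
  set cOld : Sym2 V → ℕ := fun e =>
    if h : ∃ e' : Sym2 S, Sym2.map Subtype.val e' = e then c₀ h.choose else 0 with hcOlddef
  have hcOldeq : ∀ e' : Sym2 S, cOld (Sym2.map Subtype.val e') = c₀ e' := by
    intro e'
    have hex : ∃ e'' : Sym2 S, Sym2.map Subtype.val e'' = Sym2.map Subtype.val e' := ⟨e', rfl⟩
    simp only [hcOlddef, dif_pos hex]
    exact congrArg c₀ (hmapinj hex.choose_spec)
  have hlift : ∀ f, f ∈ G.edgeSet → u ∉ f → w ∉ f →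
      ∃ e' : Sym2 S, Sym2.map Subtype.val e' = f ∧ e' ∈ (G.induce S).edgeSet := by
    intro f
    induction f using Sym2.ind with
    | _ p q =>
      intro hf hfu hfw
      have hp : p ∈ S := ⟨fun h => hfu (by rw [← h]; exact Sym2.mem_iff.mpr (Or.inl rfl)),
        fun h => hfw (by rw [← h]; exact Sym2.mem_iff.mpr (Or.inl rfl))⟩
      have hq : q ∈ S := ⟨fun h => hfu (by rw [← h]; exact Sym2.mem_iff.mpr (Or.inr rfl)),
        fun h => hfw (by rw [← h]; exact Sym2.mem_iff.mpr (Or.inr rfl))⟩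
      refine ⟨s(⟨p, hp⟩, ⟨q, hq⟩), Sym2.map_pair_eq _ _ _, ?_⟩
      rw [SimpleGraph.mem_edgeSet] at hf ⊢
      simpa using hf
  have hcOldmem : ∀ f, f ∈ G.edgeSet → u ∉ f → w ∉ f → cOld f ∈ L f := by
    intro f hf hfu hfw
    obtain ⟨e', hmap, hE⟩ := hlift f hf hfu hfw
    have := hc₀mem e' hE
    rw [← hmap, hcOldeq]
    exact this
  have hconf_transfer : ∀ (e' f' : Sym2 S),
      StrongConflict G (Sym2.map Subtype.val e') (Sym2.map Subtype.val f') →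
      StrongConflict (G.induce S) e' f' := by
    intro e' f' hcf
    obtain ⟨hne, hcase⟩ := hcf
    refine ⟨fun h => hne (by rw [h]), ?_⟩
    rcases hcase with ⟨c, hce, hcf'⟩ | ⟨c, d, hce, hdf, hcd⟩
    · obtain ⟨c', hc'e, rfl⟩ := Sym2.mem_map.mp hce
      obtain ⟨c'', hc''f, hval⟩ := Sym2.mem_map.mp hcf'
      exact Or.inl ⟨c', hc'e, Subtype.val_injective hval ▸ hc''f⟩
    · obtain ⟨c', hc'e, rfl⟩ := Sym2.mem_map.mp hce
      obtain ⟨d', hd'f, rfl⟩ := Sym2.mem_map.mp hdf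
      exact Or.inr ⟨c', d', hc'e, hd'f, by simpa using hcd⟩
  have hcOldconf : ∀ f g, f ∈ G.edgeSet → u ∉ f → w ∉ f → g ∈ G.edgeSet → u ∉ g → w ∉ g →
      StrongConflict G f g → cOld f ≠ cOld g := by
    intro f g hf hfu hfw hg hgu hgw hconf
    obtain ⟨e', hmape, hEe⟩ := hlift f hf hfu hfw
    obtain ⟨f', hmapf, hEf⟩ := hlift g hg hgu hgw
    rw [← hmape, ← hmapf, hcOldeq, hcOldeq]
    exact hc₀conf e' hEe f' hEf (hconf_transfer e' f' (by rwa [hmape, hmapf]))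
    -- structural sets around the 4-cycle
  set Zv : Set V := {c | G.Adj v c ∧ c ≠ u ∧ c ≠ w} with hZvdef
  set Yx : Set V := {c | G.Adj x c ∧ c ≠ u ∧ c ≠ w} with hYxdef
  set EAt : V → Set (Sym2 V) :=
    fun a => {f | (f ∈ G.edgeSet ∧ u ∉ f ∧ w ∉ f) ∧ a ∈ f} with hEAtdef
  set P : V → Set (Sym2 V) := fun a =>
    {f | (f ∈ G.edgeSet ∧ u ∉ f ∧ w ∉ f) ∧ a ∉ f ∧ ∃ c, c ∈ f ∧ G.Adj a c ∧ c ≠ u ∧ c ≠ w}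
    with hPdef
  have hZsub : ∀ c1 ∈ Zv, ∀ c2 ∈ Zv, c1 = c2 := by
    rintro c1 ⟨h1, h1u, h1w⟩ c2 ⟨h2, h2u, h2w⟩
    by_contra hne
    have h4 : 4 ≤ (G.neighborSet v).ncard :=
      four_le_ncard (a := u) (b := w) (c := c1) (d := c2) huv.symm hvw h1 h2
        duw (Ne.symm h1u) (Ne.symm h2u) (Ne.symm h1w) (Ne.symm h2w) hne
    have := hN3 v
    omega
  have hYsub : ∀ c1 ∈ Yx, ∀ c2 ∈ Yx, c1 = c2 := by
    rintro c1 ⟨h1, h1u, h1w⟩ c2 ⟨h2, h2u, h2w⟩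
    by_contra hne
    have h4 : 4 ≤ (G.neighborSet x).ncard :=
      four_le_ncard (a := u) (b := w) (c := c1) (d := c2) hxu hwx.symm h1 h2
        duw (Ne.symm h1u) (Ne.symm h2u) (Ne.symm h1w) (Ne.symm h2w) hne
    have := hN3 x
    omega
  have hEvsub : ∀ f1 ∈ EAt v, ∀ f2 ∈ EAt v, f1 = f2 := by
    rintro f1 ⟨⟨h1E, h1u, h1w⟩, h1v⟩ f2 ⟨⟨h2E, h2u, h2w⟩, h2v⟩
    obtain ⟨c1, hc1, rfl⟩ := edge_other h1E h1v
    obtain ⟨c2, hc2, rfl⟩ := edge_other h2E h2v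
    have hc1Z : c1 ∈ Zv := ⟨hc1, fun h => h1u (by rw [← h]; exact Sym2.mem_iff.mpr (Or.inr rfl)),
      fun h => h1w (by rw [← h]; exact Sym2.mem_iff.mpr (Or.inr rfl))⟩
    have hc2Z : c2 ∈ Zv := ⟨hc2, fun h => h2u (by rw [← h]; exact Sym2.mem_iff.mpr (Or.inr rfl)),
      fun h => h2w (by rw [← h]; exact Sym2.mem_iff.mpr (Or.inr rfl))⟩
    rw [hZsub c1 hc1Z c2 hc2Z]
  have hExsub : ∀ f1 ∈ EAt x, ∀ f2 ∈ EAt x, f1 = f2 := by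
    rintro f1 ⟨⟨h1E, h1u, h1w⟩, h1v⟩ f2 ⟨⟨h2E, h2u, h2w⟩, h2v⟩
    obtain ⟨c1, hc1, rfl⟩ := edge_other h1E h1v
    obtain ⟨c2, hc2, rfl⟩ := edge_other h2E h2v
    have hc1Z : c1 ∈ Yx := ⟨hc1, fun h => h1u (by rw [← h]; exact Sym2.mem_iff.mpr (Or.inr rfl)),
      fun h => h1w (by rw [← h]; exact Sym2.mem_iff.mpr (Or.inr rfl))⟩
    have hc2Z : c2 ∈ Yx := ⟨hc2, fun h => h2u (by rw [← h]; exact Sym2.mem_iff.mpr (Or.inr rfl)),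
      fun h => h2w (by rw [← h]; exact Sym2.mem_iff.mpr (Or.inr rfl))⟩
    rw [hYsub c1 hc1Z c2 hc2Z]
  -- subsingleton of P, generic in the "anchor" vertex
  have hPsub_gen : ∀ a0 : V, a0 ∈ B → (∀ c ∈ ({c | G.Adj a0 c ∧ c ≠ u ∧ c ≠ w} : Set V),
        ∀ c' ∈ ({c | G.Adj a0 c ∧ c ≠ u ∧ c ≠ w} : Set V), c = c') →
      ∀ f1 ∈ P a0, ∀ f2 ∈ P a0, f1 = f2 := by
    rintro a0 ha0B hsub f1 ⟨⟨h1E, h1u, h1w⟩, h1v, c1, hc1f, hc1a, hc1u, hc1w⟩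
      f2 ⟨⟨h2E, h2u, h2w⟩, h2v, c2, hc2f, hc2a, hc2u, hc2w⟩
    have hcc : c1 = c2 := hsub c1 ⟨hc1a, hc1u, hc1w⟩ c2 ⟨hc2a, hc2u, hc2w⟩
    subst hcc
    obtain ⟨d1, hd1, rfl⟩ := edge_other h1E hc1f
    obtain ⟨d2, hd2, rfl⟩ := edge_other h2E hc2f
    have hc1A : c1 ∈ A := by
      rcases hbip a0 c1 hc1a with ⟨h1, _⟩ | ⟨_, h2⟩
      · exact absurd ha0B (fun hb => hABne a0 h1 hb)
      · exact h2
    have hd1v : d1 ≠ a0 := fun h => h1v (by rw [← h]; exact Sym2.mem_iff.mpr (Or.inr rfl))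
    have hd2v : d2 ≠ a0 := fun h => h2v (by rw [← h]; exact Sym2.mem_iff.mpr (Or.inr rfl))
    have : d1 = d2 := by
      by_contra hne
      have h3 : 3 ≤ (G.neighborSet c1).ncard :=
        three_le_ncard (a := a0) (b := d1) (c := d2) hc1a.symm hd1 hd2
          (Ne.symm hd1v) (Ne.symm hd2v) hne
      have := hA c1 hc1A
      omega
    rw [this]
  -- classification of conflicts of a cycle edge with old edges
  have hclsgen : ∀ r c d : V, (r = u ∨ r = w) → G.neighborSet r = {c, d} →
      ∀ f ∈ ConflOld s(r, c), f ∈ EAt c ∪ EAt d ∪ P c := by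
    rintro r c d hr hNr f ⟨⟨hfE, hfu, hfw⟩, hne, hcase⟩
    have hrf : r ∉ f := by
      rcases hr with rfl | rfl
      · exact hfu
      · exact hfw
    rcases hcase with ⟨a', ha'e, ha'f⟩ | ⟨a', b', ha'e, hb'f, hab'⟩
    · rcases Sym2.mem_iff.mp ha'e with rfl | rfl
      · exact absurd ha'f hrf
      · exact Or.inl (Or.inl ⟨⟨hfE, hfu, hfw⟩, ha'f⟩)
    · rcases Sym2.mem_iff.mp ha'e with rfl | rfl
      · have hbN : b' ∈ G.neighborSet a' := hab'
        rw [hNr] at hbN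
        simp only [Set.mem_insert_iff, Set.mem_singleton_iff] at hbN
        rcases hbN with rfl | rfl
        · exact Or.inl (Or.inl ⟨⟨hfE, hfu, hfw⟩, hb'f⟩)
        · exact Or.inl (Or.inr ⟨⟨hfE, hfu, hfw⟩, hb'f⟩)
      · by_cases hcf : a' ∈ f
        · exact Or.inl (Or.inl ⟨⟨hfE, hfu, hfw⟩, hcf⟩)
        · refine Or.inr ⟨⟨hfE, hfu, hfw⟩, hcf, b', hb'f, hab', ?_, ?_⟩
          · rintro rfl; exact hfu hb'f
          · rintro rfl; exact hfw hb'f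
  have hPsub_full : ∀ a0 : V, G.Adj a0 u → G.Adj a0 w →
      (∀ c ∈ ({c | G.Adj a0 c ∧ c ≠ u ∧ c ≠ w} : Set V),
        ∀ c' ∈ ({c | G.Adj a0 c ∧ c ≠ u ∧ c ≠ w} : Set V), c = c') →
      ∀ f1 ∈ P a0, ∀ f2 ∈ P a0, f1 = f2 := by
    intro a0 hau haw hsub
    rcases hpart a0 with hA0 | hB0
    · rintro f1 ⟨_, _, c1, hc1f, hc1a, hc1u, hc1w⟩ f2 _
      exfalso
      have h3 : 3 ≤ (G.neighborSet a0).ncard :=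
        three_le_ncard (a := u) (b := w) (c := c1) hau haw hc1a duw
          (Ne.symm hc1u) (Ne.symm hc1w)
      have := hA a0 hA0
      omega
    · exact hPsub_gen a0 hB0 hsub
  have hPvsub : ∀ f1 ∈ P v, ∀ f2 ∈ P v, f1 = f2 := hPsub_full v huv.symm hvw hZsub
  have hPxsub : ∀ f1 ∈ P x, ∀ f2 ∈ P x, f1 = f2 := hPsub_full x hxu hwx.symm hYsub
  have hsub_card : ∀ (T : Set (Sym2 V)), (∀ f1 ∈ T, ∀ f2 ∈ T, f1 = f2) → T.ncard ≤ 1 := by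
    intro T hT
    exact (Set.ncard_le_one (Set.toFinite T)).mpr hT
  have hCO_le : ∀ (ee : Sym2 V) (X Y Z : Set (Sym2 V)), ConflOld ee ⊆ X ∪ Y ∪ Z →
      X.ncard ≤ 1 → Y.ncard ≤ 1 → Z.ncard ≤ 1 → (ConflOld ee).ncard ≤ 3 := by
    intro ee X Y Z hsub hX hY hZ
    have h1 : (ConflOld ee).ncard ≤ (X ∪ Y ∪ Z).ncard :=
      Set.ncard_le_ncard hsub (Set.toFinite _)
    have h2 := Set.ncard_union_le (X ∪ Y) Z
    have h3 := Set.ncard_union_le X Y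
    omega
  have hCO1sub : ConflOld s(u,v) ⊆ EAt v ∪ EAt x ∪ P v :=
    fun f hf => hclsgen u v x (Or.inl rfl) hNu f hf
  have hCO2sub : ConflOld s(u,x) ⊆ EAt x ∪ EAt v ∪ P x :=
    fun f hf => hclsgen u x v (Or.inl rfl) (by rw [hNu, Set.pair_comm]) f hf
  have hCO3sub : ConflOld s(w,v) ⊆ EAt v ∪ EAt x ∪ P v :=
    fun f hf => hclsgen w v x (Or.inr rfl) hNw f hf
  have hCO4sub : ConflOld s(w,x) ⊆ EAt x ∪ EAt v ∪ P x :=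
    fun f hf => hclsgen w x v (Or.inr rfl) (by rw [hNw, Set.pair_comm]) f hf
  have hncEv := hsub_card _ hEvsub
  have hncEx := hsub_card _ hExsub
  have hncPv := hsub_card _ hPvsub
  have hncPx := hsub_card _ hPxsub
  have hCO1 : (ConflOld s(u,v)).ncard ≤ 3 := hCO_le _ _ _ _ hCO1sub hncEv hncEx hncPv
  have hCO2 : (ConflOld s(u,x)).ncard ≤ 3 := hCO_le _ _ _ _ hCO2sub hncEx hncEv hncPx
  have hCO3 : (ConflOld s(w,v)).ncard ≤ 3 := hCO_le _ _ _ _ hCO3sub hncEv hncEx hncPv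
  have hCO4 : (ConflOld s(w,x)).ncard ≤ 3 := hCO_le _ _ _ _ hCO4sub hncEx hncEv hncPx
  have h3gen : ∀ (c₁ : Sym2 V → ℕ) (i : Fin 4), 3 ≤ ((L (EE i)) \ (F c₁ (EE i))).card := by
    intro c₁ i
    have hle := Finset.le_card_sdiff (F c₁ (EE i)) (L (EE i))
    have hFc : (F c₁ (EE i)).card ≤ 3 := by
      fin_cases i
      · exact (hFcard c₁ _).trans hCO1
      · exact (hFcard c₁ _).trans hCO2
      · exact (hFcard c₁ _).trans hCO3
      · exact (hFcard c₁ _).trans hCO4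
    have h6' : 6 ≤ (L (EE i)).card := by
      fin_cases i
      · exact h6 _ he1
      · exact h6 _ he2
      · exact h6 _ he3
      · exact h6 _ he4
    omega
  by_cases hU4 : 4 ≤ (Finset.univ.biUnion (fun i : Fin 4 => (L (EE i)) \ (F cOld (EE i)))).card
  · exact key cOld hcOldmem hcOldconf (h3gen cOld) hU4
  · -- the bad case
    push_neg at hU4
    set U : Finset ℕ :=
      Finset.univ.biUnion (fun i : Fin 4 => (L (EE i)) \ (F cOld (EE i))) with hUdef
    have hUle : U.card ≤ 3 := by omega
    have hleq : ∀ i : Fin 4, (L (EE i)) \ (F cOld (EE i)) = U := by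
      intro i
      refine Finset.eq_of_subset_of_card_le ?_ (hUle.trans (h3gen cOld i))
      exact Finset.subset_biUnion_of_mem (fun i : Fin 4 => (L (EE i)) \ (F cOld (EE i))) (Finset.mem_univ i)
    have hUcard : U.card = 3 := by
      have := h3gen cOld 0
      rw [hleq 0] at this
      omega
    have hsd0 : L s(u,v) \ F cOld s(u,v) = U := hleq 0
    have hsd1 : L s(u,x) \ F cOld s(u,x) = U := hleq 1
    have hF3 : ∀ i : Fin 4, 3 ≤ (F cOld (EE i)).card := by
      intro i
      have hsub : L (EE i) ⊆ U ∪ F cOld (EE i) := by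
        intro n hn
        by_cases h : n ∈ F cOld (EE i)
        · exact Finset.mem_union_right _ h
        · exact Finset.mem_union_left _ (by rw [← hleq i]; exact Finset.mem_sdiff.mpr ⟨hn, h⟩)
      have h1 := Finset.card_le_card hsub
      have h2 := Finset.card_union_le U (F cOld (EE i))
      have h6' : 6 ≤ (L (EE i)).card := by
        fin_cases i
        · exact h6 _ he1
        · exact h6 _ he2
        · exact h6 _ he3
        · exact h6 _ he4
      omega
    have hnonempty : ∀ (ee : Sym2 V) (X Y Z : Set (Sym2 V)), ConflOld ee ⊆ X ∪ Y ∪ Z →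
        X.ncard ≤ 1 → Y.ncard ≤ 1 → Z.ncard ≤ 1 → 3 ≤ (ConflOld ee).ncard →
        X.Nonempty ∧ Y.Nonempty ∧ Z.Nonempty := by
      intro ee X Y Z hsub hX hY hZ h3'
      have h1 : (ConflOld ee).ncard ≤ (X ∪ Y ∪ Z).ncard :=
        Set.ncard_le_ncard hsub (Set.toFinite _)
      have h2 := Set.ncard_union_le (X ∪ Y) Z
      have h3'' := Set.ncard_union_le X Y
      refine ⟨?_, ?_, ?_⟩ <;>
        · apply Set.nonempty_of_ncard_ne_zero
          omega
    have h3CO1 : 3 ≤ (ConflOld s(u,v)).ncard := le_trans (hF3 0) (hFcard cOld _)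
    have h3CO2 : 3 ≤ (ConflOld s(u,x)).ncard := le_trans (hF3 1) (hFcard cOld _)
    obtain ⟨hEvne, hExne, hPvne⟩ := hnonempty _ _ _ _ hCO1sub hncEv hncEx hncPv h3CO1
    obtain ⟨-, -, hPxne⟩ := hnonempty _ _ _ _ hCO2sub hncEx hncEv hncPx h3CO2
    -- extract z
    obtain ⟨fz, hfzmem⟩ := hEvne
    obtain ⟨z, hvz, hfzeq⟩ := edge_other hfzmem.1.1 hfzmem.2
    have hzu : z ≠ u := by
      rintro rfl
      exact hfzmem.1.2.1 (by rw [hfzeq]; exact Sym2.mem_iff.mpr (Or.inr rfl))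
    have hzw : z ≠ w := by
      rintro rfl
      exact hfzmem.1.2.2 (by rw [hfzeq]; exact Sym2.mem_iff.mpr (Or.inr rfl))
    have hzZ : z ∈ Zv := ⟨hvz, hzu, hzw⟩
    have hvzmem : s(v,z) ∈ EAt v := by rw [← hfzeq]; exact hfzmem
    have hEveq : ∀ f ∈ EAt v, f = s(v,z) := fun f hf => hEvsub f hf _ hvzmem
    -- extract y
    obtain ⟨fy, hfymem⟩ := hExne
    obtain ⟨y, hxy, hfyeq⟩ := edge_other hfymem.1.1 hfymem.2
    have hyu : y ≠ u := by
      rintro rfl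
      exact hfymem.1.2.1 (by rw [hfyeq]; exact Sym2.mem_iff.mpr (Or.inr rfl))
    have hyw : y ≠ w := by
      rintro rfl
      exact hfymem.1.2.2 (by rw [hfyeq]; exact Sym2.mem_iff.mpr (Or.inr rfl))
    have hyY : y ∈ Yx := ⟨hxy, hyu, hyw⟩
    have hxymem : s(x,y) ∈ EAt x := by rw [← hfyeq]; exact hfymem
    have hExeq : ∀ f ∈ EAt x, f = s(x,y) := fun f hf => hExsub f hf _ hxymem
    -- extract t
    obtain ⟨ft, hftmem⟩ := hPvne
    obtain ⟨hftold, hftv, b0, hb0f, hb0a, hb0u, hb0w⟩ := hftmem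
    have hb0z : b0 = z := hZsub b0 ⟨hb0a, hb0u, hb0w⟩ z hzZ
    rw [hb0z] at hb0f
    obtain ⟨t, hzt, hfteq⟩ := edge_other hftold.1 hb0f
    have htv : t ≠ v := by
      rintro rfl
      exact hftv (by rw [hfteq]; exact Sym2.mem_iff.mpr (Or.inr rfl))
    have hztmem : s(z,t) ∈ P v := by
      rw [← hfteq]; exact ⟨hftold, hftv, z, hb0f, hvz, hzu, hzw⟩
    have hPveq : ∀ f ∈ P v, f = s(z,t) := fun f hf => hPvsub f hf _ hztmem
    -- extract t'
    obtain ⟨ft', hft'mem⟩ := hPxne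
    obtain ⟨hft'old, hft'x, b1, hb1f, hb1a, hb1u, hb1w⟩ := hft'mem
    have hb1y : b1 = y := hYsub b1 ⟨hb1a, hb1u, hb1w⟩ y hyY
    rw [hb1y] at hb1f
    obtain ⟨t', hyt', hft'eq⟩ := edge_other hft'old.1 hb1f
    have ht'x : t' ≠ x := by
      rintro rfl
      exact hft'x (by rw [hft'eq]; exact Sym2.mem_iff.mpr (Or.inr rfl))
    have hyt'mem : s(y,t') ∈ P x := by
      rw [← hft'eq]; exact ⟨hft'old, hft'x, y, hb1f, hxy, hyu, hyw⟩
    have hPxeq : ∀ f ∈ P x, f = s(y,t') := fun f hf => hPxsub f hf _ hyt'mem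
    -- sides of the bipartition
    have hvB : v ∈ B := by
      rcases hpart v with h | h
      · exfalso
        have h3 : 3 ≤ (G.neighborSet v).ncard :=
          three_le_ncard (a := u) (b := w) (c := z) huv.symm hvw hvz duw
            (Ne.symm hzu) (Ne.symm hzw)
        have := hA v h
        omega
      · exact h
    have huA : u ∈ A := by
      rcases hbip u v huv with ⟨h1, _⟩ | ⟨_, h2⟩
      · exact h1
      · exact absurd hvB (fun hb => hABne v h2 hb)
    have hwA : w ∈ A := by
      rcases hbip v w hvw with ⟨h1, _⟩ | ⟨_, h2⟩
      · exact absurd hvB (fun hb => hABne v h1 hb)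
      · exact h2
    have hxB : x ∈ B := by
      rcases hbip x u hxu with ⟨_, h1⟩ | ⟨h1, _⟩
      · exact absurd h1 (fun hb => hABne u huA hb)
      · exact h1
    have hzA : z ∈ A := by
      rcases hbip v z hvz with ⟨h1, _⟩ | ⟨_, h2⟩
      · exact absurd hvB (fun hb => hABne v h1 hb)
      · exact h2
    have hyA : y ∈ A := by
      rcases hbip x y hxy with ⟨h1, _⟩ | ⟨_, h2⟩
      · exact absurd hxB (fun hb => hABne x h1 hb)
      · exact h2
    have htB : t ∈ B := by
      rcases hbip z t hzt with ⟨_, h2⟩ | ⟨h1, _⟩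
      · exact h2
      · exact absurd hzA (fun ha => hABne z ha h1)
    have ht'B : t' ∈ B := by
      rcases hbip y t' hyt' with ⟨_, h2⟩ | ⟨h1, _⟩
      · exact h2
      · exact absurd hyA (fun ha => hABne y ha h1)
    have hzx : z ≠ x := fun h => hABne x (h ▸ hzA) hxB
    have hzv : z ≠ v := fun h => hABne v (h ▸ hzA) hvB
    have hyv : y ≠ v := fun h => hABne v (h ▸ hyA) hvB
    have hyx : y ≠ x := fun h => hABne x (h ▸ hyA) hxB
    -- the three colors blocking s(u,v) and s(u,x)
    set ca := cOld s(v,z) with hcadef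
    set cb := cOld s(x,y) with hcbdef
    set cp := cOld s(z,t) with hcpdef
    set cq := cOld s(y,t') with hcqdef
    have hFsubE1 : ∀ c₁ : Sym2 V → ℕ,
        F c₁ s(u,v) ⊆ {c₁ s(v,z), c₁ s(x,y), c₁ s(z,t)} := by
      intro c₁ n hn
      rw [hFmem] at hn
      obtain ⟨f, hfC, rfl⟩ := hn
      rcases hCO1sub hfC with (hf | hf) | hf
      · rw [hEveq f hf]; exact Finset.mem_insert_self _ _
      · rw [hExeq f hf]; simp
      · rw [hPveq f hf]; simp
    have hFsubE3 : ∀ c₁ : Sym2 V → ℕ,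
        F c₁ s(w,v) ⊆ {c₁ s(v,z), c₁ s(x,y), c₁ s(z,t)} := by
      intro c₁ n hn
      rw [hFmem] at hn
      obtain ⟨f, hfC, rfl⟩ := hn
      rcases hCO3sub hfC with (hf | hf) | hf
      · rw [hEveq f hf]; exact Finset.mem_insert_self _ _
      · rw [hExeq f hf]; simp
      · rw [hPveq f hf]; simp
    have hFsubE2 : ∀ c₁ : Sym2 V → ℕ,
        F c₁ s(u,x) ⊆ {c₁ s(x,y), c₁ s(v,z), c₁ s(y,t')} := by
      intro c₁ n hn
      rw [hFmem] at hn
      obtain ⟨f, hfC, rfl⟩ := hn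
      rcases hCO2sub hfC with (hf | hf) | hf
      · rw [hExeq f hf]; exact Finset.mem_insert_self _ _
      · rw [hEveq f hf]; simp
      · rw [hPxeq f hf]; simp
    have hFsubE4 : ∀ c₁ : Sym2 V → ℕ,
        F c₁ s(w,x) ⊆ {c₁ s(x,y), c₁ s(v,z), c₁ s(y,t')} := by
      intro c₁ n hn
      rw [hFmem] at hn
      obtain ⟨f, hfC, rfl⟩ := hn
      rcases hCO4sub hfC with (hf | hf) | hf
      · rw [hExeq f hf]; exact Finset.mem_insert_self _ _
      · rw [hEveq f hf]; simp
      · rw [hPxeq f hf]; simp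
    -- the structure of the forbidden sets
    have hF1eq : F cOld s(u,v) = {ca, cb, cp} :=
      Finset.eq_of_subset_of_card_le (hFsubE1 cOld) ((card_triple_le _ _ _).trans (hF3 0))
    have hF2eq : F cOld s(u,x) = {cb, ca, cq} :=
      Finset.eq_of_subset_of_card_le (hFsubE2 cOld) ((card_triple_le _ _ _).trans (hF3 1))
    obtain ⟨hab1, hap1, hbp1⟩ := card3_distinct (a := ca) (b := cb) (c := cp)
      (by rw [← hF1eq]; exact hF3 0)
    obtain ⟨hba2, hbq2, haq2⟩ := card3_distinct (a := cb) (b := ca) (c := cq)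
      (by rw [← hF2eq]; exact hF3 1)
    have hFLgen : ∀ ee : Sym2 V, ee ∈ G.edgeSet → (F cOld ee).card = 3 →
        L ee \ F cOld ee = U → F cOld ee ⊆ L ee := by
      intro ee hee hcard3 hsd
      have h1 := Finset.card_inter_add_card_sdiff (L ee) (F cOld ee)
      have h2 : (L ee \ F cOld ee).card = 3 := by rw [hsd, hUcard]
      have h6' := h6 _ hee
      have h4 : (L ee).card ≤ 6 := by
        have hsub : L ee ⊆ (L ee \ F cOld ee) ∪ F cOld ee := by
          intro n hn
          by_cases h : n ∈ F cOld ee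
          · exact Finset.mem_union_right _ h
          · exact Finset.mem_union_left _ (Finset.mem_sdiff.mpr ⟨hn, h⟩)
        have hc1 := Finset.card_le_card hsub
        have hc2 := Finset.card_union_le (L ee \ F cOld ee) (F cOld ee)
        omega
      have h5 : (F cOld ee).card ≤ (L ee ∩ F cOld ee).card := by omega
      have heq := Finset.eq_of_subset_of_card_le Finset.inter_subset_right h5
      rw [← heq]
      exact Finset.inter_subset_left
    have hF1L : F cOld s(u,v) ⊆ L s(u,v) :=
      hFLgen _ he1 (by rw [hF1eq]; exact card_triple_eq hab1 hap1 hbp1) hsd0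
    have hF2L : F cOld s(u,x) ⊆ L s(u,x) :=
      hFLgen _ he2 (by rw [hF2eq]; exact card_triple_eq hba2 hbq2 haq2) hsd1
    have hUsubL0 : U ⊆ L s(u,v) := by rw [← hsd0]; exact Finset.sdiff_subset
    have hUsubL1 : U ⊆ L s(u,x) := by rw [← hsd1]; exact Finset.sdiff_subset
    have hUF0 : ∀ n ∈ U, n ∉ F cOld s(u,v) := by
      intro n hn
      rw [← hsd0] at hn
      exact (Finset.mem_sdiff.mp hn).2
    have hUF1 : ∀ n ∈ U, n ∉ F cOld s(u,x) := by
      intro n hn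
      rw [← hsd1] at hn
      exact (Finset.mem_sdiff.mp hn).2
    -- y and z are different
    have hyz : y ≠ z := by
      intro hyz0
      have hxz : G.Adj z x := (hyz0 ▸ hxy).symm
      have htx : t = x := by
        by_contra hne
        have h3 : 3 ≤ (G.neighborSet z).ncard :=
          three_le_ncard (a := v) (b := t) (c := x) hvz.symm hzt hxz
            (Ne.symm htv) dvx hne
        have := hA z hzA
        omega
      apply hbp1
      rw [hcbdef, hcpdef, htx, hyz0]
      exact congrArg cOld Sym2.eq_swap
    have hnoconf : ¬ StrongConflict G s(v,z) s(x,y) := by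
      rintro ⟨hne, ⟨c, hc1, hc2⟩ | ⟨c, d, hc1, hc2, hcd⟩⟩
      · rcases Sym2.mem_iff.mp hc1 with rfl | rfl <;> rcases Sym2.mem_iff.mp hc2 with h | h
        · exact dvx h
        · exact hyv h.symm
        · exact hzx h
        · exact hyz h.symm
      · rcases Sym2.mem_iff.mp hc1 with rfl | rfl <;> rcases Sym2.mem_iff.mp hc2 with rfl | rfl
        · rcases hbip c d hcd with ⟨h1, _⟩ | ⟨_, h2⟩
          · exact hABne c h1 hvB
          · exact hABne d h2 hxB
        · exact hyz (hZsub d ⟨hcd, hyu, hyw⟩ z hzZ)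
        · exact hyz ((hYsub c ⟨hcd.symm, hzu, hzw⟩ y hyY).symm)
        · rcases hbip c d hcd with ⟨_, h2⟩ | ⟨h1, _⟩
          · exact hABne d hyA h2
          · exact hABne c hzA h1
    -- uniqueness of the second neighbours
    have huniq_t : ∀ d, G.Adj z d → d ≠ v → d = t := by
      intro d h1 h2
      by_contra hne
      have h3 : 3 ≤ (G.neighborSet z).ncard :=
        three_le_ncard (a := v) (b := d) (c := t) hvz.symm h1 hzt
          (Ne.symm h2) (Ne.symm htv) hne
      have := hA z hzA
      omega
    have huniq_t' : ∀ d, G.Adj y d → d ≠ x → d = t' := by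
      intro d h1 h2
      by_contra hne
      have h3 : 3 ≤ (G.neighborSet y).ncard :=
        three_le_ncard (a := x) (b := d) (c := t') hxy.symm h1 hyt'
          (Ne.symm h2) (Ne.symm ht'x) hne
      have := hA y hyA
      omega
    -- all old edges in conflict with s(v,z) contain t, similarly for s(x,y)
    have hclsvz : ∀ f ∈ ConflOld s(v,z), t ∈ f := by
      rintro f ⟨⟨hfE, hfu, hfw⟩, hne, hcase⟩
      have hvf : v ∈ f → False := by
        intro hvf
        exact hne (hEveq f ⟨⟨hfE, hfu, hfw⟩, hvf⟩).symm
      have hzf : z ∈ f → t ∈ f := by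
        intro hzf
        obtain ⟨d, hd, hfeq⟩ := edge_other hfE hzf
        have hdv : d ≠ v := fun h => hvf (by rw [hfeq, h]; exact Sym2.mem_iff.mpr (Or.inr rfl))
        rw [hfeq, huniq_t d hd hdv]
        exact Sym2.mem_iff.mpr (Or.inr rfl)
      rcases hcase with ⟨c, hc1, hc2⟩ | ⟨c, d, hc1, hc2, hcd⟩
      · rcases Sym2.mem_iff.mp hc1 with rfl | rfl
        · exact (hvf hc2).elim
        · exact hzf hc2
      · rcases Sym2.mem_iff.mp hc1 with rfl | rfl
        · have hdZ : d ∈ Zv := ⟨hcd, fun h => hfu (h ▸ hc2), fun h => hfw (h ▸ hc2)⟩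
          rw [hZsub d hdZ z hzZ] at hc2
          exact hzf hc2
        · by_cases hdv : d = v
          · exact (hvf (hdv ▸ hc2)).elim
          · rw [← huniq_t d hcd hdv]
            exact hc2
    have hclsxy : ∀ f ∈ ConflOld s(x,y), t' ∈ f := by
      rintro f ⟨⟨hfE, hfu, hfw⟩, hne, hcase⟩
      have hvf : x ∈ f → False := by
        intro hvf
        exact hne (hExeq f ⟨⟨hfE, hfu, hfw⟩, hvf⟩).symm
      have hzf : y ∈ f → t' ∈ f := by
        intro hzf
        obtain ⟨d, hd, hfeq⟩ := edge_other hfE hzf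
        have hdv : d ≠ x := fun h => hvf (by rw [hfeq, h]; exact Sym2.mem_iff.mpr (Or.inr rfl))
        rw [hfeq, huniq_t' d hd hdv]
        exact Sym2.mem_iff.mpr (Or.inr rfl)
      rcases hcase with ⟨c, hc1, hc2⟩ | ⟨c, d, hc1, hc2, hcd⟩
      · rcases Sym2.mem_iff.mp hc1 with rfl | rfl
        · exact (hvf hc2).elim
        · exact hzf hc2
      · rcases Sym2.mem_iff.mp hc1 with rfl | rfl
        · have hdZ : d ∈ Yx := ⟨hcd, fun h => hfu (h ▸ hc2), fun h => hfw (h ▸ hc2)⟩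
          rw [hYsub d hdZ y hyY] at hc2
          exact hzf hc2
        · by_cases hdv : d = x
          · exact (hvf (hdv ▸ hc2)).elim
          · rw [← huniq_t' d hcd hdv]
            exact hc2
    have hFvz3 : (F cOld s(v,z)).card ≤ 3 := by
      have hCOsub : ConflOld s(v,z) ⊆ (fun d => s(t, d)) '' (G.neighborSet t) := by
        intro f hf
        obtain ⟨d, hd, hfeq⟩ := edge_other hf.1.1 (hclsvz f hf)
        exact ⟨d, hd, hfeq.symm⟩
      have h1 := hFcard cOld s(v,z)
      have h2 : (ConflOld s(v,z)).ncard ≤ ((fun d => s(t, d)) '' (G.neighborSet t)).ncard :=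
        Set.ncard_le_ncard hCOsub (Set.toFinite _)
      have h3' : ((fun d => s(t, d)) '' (G.neighborSet t)).ncard ≤ (G.neighborSet t).ncard :=
        Set.ncard_image_le (Set.toFinite _)
      have := hB t htB
      omega
    have hFxy3 : (F cOld s(x,y)).card ≤ 3 := by
      have hCOsub : ConflOld s(x,y) ⊆ (fun d => s(t', d)) '' (G.neighborSet t') := by
        intro f hf
        obtain ⟨d, hd, hfeq⟩ := edge_other hf.1.1 (hclsxy f hf)
        exact ⟨d, hd, hfeq.symm⟩
      have h1 := hFcard cOld s(x,y)
      have h2 : (ConflOld s(x,y)).ncard ≤ ((fun d => s(t', d)) '' (G.neighborSet t')).ncard :=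
        Set.ncard_le_ncard hCOsub (Set.toFinite _)
      have h3' : ((fun d => s(t', d)) '' (G.neighborSet t')).ncard ≤ (G.neighborSet t').ncard :=
        Set.ncard_image_le (Set.toFinite _)
      have := hB t' ht'B
      omega
    have hevz : s(v,z) ∈ G.edgeSet := hvz
    have hexy : s(x,y) ∈ G.edgeSet := hxy
    have hAvz3 : 3 ≤ ((L s(v,z)) \ (F cOld s(v,z))).card := by
      have := Finset.le_card_sdiff (F cOld s(v,z)) (L s(v,z))
      have h6' := h6 _ hevz
      omega
    have hAxy3 : 3 ≤ ((L s(x,y)) \ (F cOld s(x,y))).card := by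
      have := Finset.le_card_sdiff (F cOld s(x,y)) (L s(x,y))
      have h6' := h6 _ hexy
      omega
    -- inequalities between the relevant Sym2 elements
    have hne_xy_vz : s(x,y) ≠ s(v,z) := by
      simp [Sym2.eq_iff, Ne.symm dvx, Ne.symm hzx]
    have hne_zt_vz : s(z,t) ≠ s(v,z) := by
      simp [Sym2.eq_iff, hzv, htv]
    have hne_zt_xy : s(z,t) ≠ s(x,y) := by
      simp [Sym2.eq_iff, hzx, Ne.symm hyz]
    have hne_yt'_vz : s(y,t') ≠ s(v,z) := by
      simp [Sym2.eq_iff, hyv, hyz]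
    have hne_yt'_xy : s(y,t') ≠ s(x,y) := by
      simp [Sym2.eq_iff, hyx, ht'x]
    by_cases hx1 : ∃ a', a' ∈ (L s(v,z) \ F cOld s(v,z)) ∧ a' ∉ insert ca U
    · -- Branch 1: recolor s(v,z) with a new color a'
      obtain ⟨a', ha'mem, ha'notin⟩ := hx1
      obtain ⟨ha'L, ha'F⟩ := Finset.mem_sdiff.mp ha'mem
      have ha'U : a' ∉ U := fun h => ha'notin (Finset.mem_insert_of_mem h)
      have ha'a : a' ≠ ca := fun h => ha'notin (h ▸ Finset.mem_insert_self _ _)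
      set c1 : Sym2 V → ℕ := fun e => if e = s(v,z) then a' else cOld e with hc1def
      have hc1vz : c1 s(v,z) = a' := by simp [hc1def]
      have hc1other : ∀ f, f ≠ s(v,z) → c1 f = cOld f := by
        intro f hf
        simp [hc1def, hf]
      have hc1xy : c1 s(x,y) = cb := (hc1other _ hne_xy_vz).trans hcbdef.symm
      have hc1zt : c1 s(z,t) = cp := (hc1other _ hne_zt_vz).trans hcpdef.symm
      have hc1mem : ∀ f, f ∈ G.edgeSet → u ∉ f → w ∉ f → c1 f ∈ L f := by
        intro f hf hfu hfw
        by_cases h : f = s(v,z)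
        · subst h
          rw [hc1vz]
          exact ha'L
        · rw [hc1other f h]
          exact hcOldmem f hf hfu hfw
      have hc1conf : ∀ f g, f ∈ G.edgeSet → u ∉ f → w ∉ f → g ∈ G.edgeSet → u ∉ g → w ∉ g →
          StrongConflict G f g → c1 f ≠ c1 g := by
        intro f g hf hfu hfw hg hgu hgw hconf
        by_cases h1 : f = s(v,z) <;> by_cases h2 : g = s(v,z)
        · subst h1; subst h2; exact absurd rfl hconf.1
        · subst h1
          rw [hc1vz, hc1other g h2]
          intro hEq
          apply ha'F
          rw [hFmem]
          exact ⟨g, ⟨⟨hg, hgu, hgw⟩, hconf⟩, hEq.symm⟩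
        · subst h2
          rw [hc1other f h1, hc1vz]
          intro hEq
          apply ha'F
          rw [hFmem]
          exact ⟨f, ⟨⟨hf, hfu, hfw⟩, conflict_symm hconf⟩, hEq⟩
        · rw [hc1other f h1, hc1other g h2]
          exact hcOldconf f g hf hfu hfw hg hgu hgw hconf
      apply key c1 hc1mem hc1conf (h3gen c1)
      have hsub : insert ca U ⊆ L (EE 0) \ F c1 (EE 0) := by
        intro n hn
        rw [Finset.mem_sdiff]
        constructor
        · rcases Finset.mem_insert.mp hn with rfl | hn'
          · exact hF1L (by rw [hF1eq]; exact Finset.mem_insert_self _ _)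
          · exact hUsubL0 hn'
        · intro hnF
          have hmem3 := hFsubE1 c1 hnF
          rw [hc1vz, hc1xy, hc1zt] at hmem3
          simp only [Finset.mem_insert, Finset.mem_singleton] at hmem3
          rcases Finset.mem_insert.mp hn with rfl | hn'
          · rcases hmem3 with h | h | h
            · exact ha'a h.symm
            · exact hab1 h
            · exact hap1 h
          · rcases hmem3 with h | h | h
            · exact ha'U (h ▸ hn')
            · exact hUF0 n hn' (by rw [hF1eq, h]; simp)
            · exact hUF0 n hn' (by rw [hF1eq, h]; simp)
      have hcaU : ca ∉ U := fun h =>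
        hUF0 ca h (by rw [hF1eq]; exact Finset.mem_insert_self _ _)
      have hc4 : (insert ca U).card = 4 := by
        rw [Finset.card_insert_of_notMem hcaU, hUcard]
      calc (4:ℕ) = (insert ca U).card := hc4.symm
      _ ≤ (L (EE 0) \ F c1 (EE 0)).card := Finset.card_le_card hsub
      _ ≤ _ := Finset.card_le_card
          (Finset.subset_biUnion_of_mem (fun i : Fin 4 => (L (EE i)) \ (F c1 (EE i)))
            (Finset.mem_univ 0))
    by_cases hx2 : ∃ b', b' ∈ (L s(x,y) \ F cOld s(x,y)) ∧ b' ∉ insert cb U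
    · -- Branch 2: recolor s(x,y) with a new color b'
      obtain ⟨b', hb'mem, hb'notin⟩ := hx2
      obtain ⟨hb'L, hb'F⟩ := Finset.mem_sdiff.mp hb'mem
      have hb'U : b' ∉ U := fun h => hb'notin (Finset.mem_insert_of_mem h)
      have hb'b : b' ≠ cb := fun h => hb'notin (h ▸ Finset.mem_insert_self _ _)
      set c1 : Sym2 V → ℕ := fun e => if e = s(x,y) then b' else cOld e with hc1def
      have hc1xy : c1 s(x,y) = b' := by simp [hc1def]
      have hc1other : ∀ f, f ≠ s(x,y) → c1 f = cOld f := by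
        intro f hf
        simp [hc1def, hf]
      have hc1vz : c1 s(v,z) = ca := (hc1other _ (Ne.symm hne_xy_vz)).trans hcadef.symm
      have hc1yt' : c1 s(y,t') = cq := (hc1other _ hne_yt'_xy).trans hcqdef.symm
      have hc1mem : ∀ f, f ∈ G.edgeSet → u ∉ f → w ∉ f → c1 f ∈ L f := by
        intro f hf hfu hfw
        by_cases h : f = s(x,y)
        · subst h
          rw [hc1xy]
          exact hb'L
        · rw [hc1other f h]
          exact hcOldmem f hf hfu hfw
      have hc1conf : ∀ f g, f ∈ G.edgeSet → u ∉ f → w ∉ f → g ∈ G.edgeSet → u ∉ g → w ∉ g →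
          StrongConflict G f g → c1 f ≠ c1 g := by
        intro f g hf hfu hfw hg hgu hgw hconf
        by_cases h1 : f = s(x,y) <;> by_cases h2 : g = s(x,y)
        · subst h1; subst h2; exact absurd rfl hconf.1
        · subst h1
          rw [hc1xy, hc1other g h2]
          intro hEq
          apply hb'F
          rw [hFmem]
          exact ⟨g, ⟨⟨hg, hgu, hgw⟩, hconf⟩, hEq.symm⟩
        · subst h2
          rw [hc1other f h1, hc1xy]
          intro hEq
          apply hb'F
          rw [hFmem]
          exact ⟨f, ⟨⟨hf, hfu, hfw⟩, conflict_symm hconf⟩, hEq⟩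
        · rw [hc1other f h1, hc1other g h2]
          exact hcOldconf f g hf hfu hfw hg hgu hgw hconf
      apply key c1 hc1mem hc1conf (h3gen c1)
      have hsub : insert cb U ⊆ L (EE 1) \ F c1 (EE 1) := by
        intro n hn
        rw [Finset.mem_sdiff]
        constructor
        · rcases Finset.mem_insert.mp hn with rfl | hn'
          · exact hF2L (by rw [hF2eq]; exact Finset.mem_insert_self _ _)
          · exact hUsubL1 hn'
        · intro hnF
          have hmem3 := hFsubE2 c1 hnF
          rw [hc1vz, hc1xy, hc1yt'] at hmem3
          simp only [Finset.mem_insert, Finset.mem_singleton] at hmem3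
          rcases Finset.mem_insert.mp hn with rfl | hn'
          · rcases hmem3 with h | h | h
            · exact hb'b h.symm
            · exact hba2 h
            · exact hbq2 h
          · rcases hmem3 with h | h | h
            · exact hb'U (h ▸ hn')
            · exact hUF1 n hn' (by rw [hF2eq, h]; simp)
            · exact hUF1 n hn' (by rw [hF2eq, h]; simp)
      have hcbU : cb ∉ U := fun h =>
        hUF1 cb h (by rw [hF2eq]; exact Finset.mem_insert_self _ _)
      have hc4 : (insert cb U).card = 4 := by
        rw [Finset.card_insert_of_notMem hcbU, hUcard]
      calc (4:ℕ) = (insert cb U).card := hc4.symm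
      _ ≤ (L (EE 1) \ F c1 (EE 1)).card := Finset.card_le_card hsub
      _ ≤ _ := Finset.card_le_card
          (Finset.subset_biUnion_of_mem (fun i : Fin 4 => (L (EE i)) \ (F c1 (EE i)))
            (Finset.mem_univ 1))
    · -- Branch 3: recolor both s(v,z) and s(x,y) with a common color γ
      push_neg at hx1 hx2
      set A1 : Finset ℕ := (L s(v,z) \ F cOld s(v,z)).erase ca with hA1def
      set A2 : Finset ℕ := (L s(x,y) \ F cOld s(x,y)).erase cb with hA2def
      have hA1sub : A1 ⊆ U := by
        intro n hn
        obtain ⟨hne, hn'⟩ := Finset.mem_erase.mp hn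
        rcases Finset.mem_insert.mp (hx1 n hn') with h | h
        · exact absurd h hne
        · exact h
      have hA2sub : A2 ⊆ U := by
        intro n hn
        obtain ⟨hne, hn'⟩ := Finset.mem_erase.mp hn
        rcases Finset.mem_insert.mp (hx2 n hn') with h | h
        · exact absurd h hne
        · exact h
      have hA1card : 2 ≤ A1.card := by
        have h := Finset.pred_card_le_card_erase (a := ca) (s := L s(v,z) \ F cOld s(v,z))
        rw [← hA1def] at h
        omega
      have hA2card : 2 ≤ A2.card := by
        have h := Finset.pred_card_le_card_erase (a := cb) (s := L s(x,y) \ F cOld s(x,y))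
        rw [← hA2def] at h
        omega
      have hinter : 1 ≤ (A1 ∩ A2).card := by
        have h1 := Finset.card_union_add_card_inter A1 A2
        have h2 : (A1 ∪ A2).card ≤ 3 := by
          have hsub := Finset.union_subset hA1sub hA2sub
          have := Finset.card_le_card hsub
          omega
        omega
      obtain ⟨γ, hγ⟩ := Finset.card_pos.mp (by omega : 0 < (A1 ∩ A2).card)
      have hγ1 := Finset.mem_inter.mp hγ |>.1
      have hγ2 := Finset.mem_inter.mp hγ |>.2
      have hγU : γ ∈ U := hA1sub hγ1
      have hγa : γ ≠ ca := (Finset.mem_erase.mp hγ1).1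
      have hγb : γ ≠ cb := (Finset.mem_erase.mp hγ2).1
      have hγvz := Finset.mem_sdiff.mp (Finset.mem_erase.mp hγ1).2
      have hγxy := Finset.mem_sdiff.mp (Finset.mem_erase.mp hγ2).2
      set c1 : Sym2 V → ℕ :=
        fun e => if e = s(v,z) then γ else if e = s(x,y) then γ else cOld e with hc1def
      have hc1vz : c1 s(v,z) = γ := by simp [hc1def]
      have hc1xy : c1 s(x,y) = γ := by simp [hc1def, hne_xy_vz]
      have hc1other : ∀ f, f ≠ s(v,z) → f ≠ s(x,y) → c1 f = cOld f := by
        intro f h1 h2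
        simp [hc1def, h1, h2]
      have hc1zt : c1 s(z,t) = cp := (hc1other _ hne_zt_vz hne_zt_xy).trans hcpdef.symm
      have hc1yt' : c1 s(y,t') = cq := (hc1other _ hne_yt'_vz hne_yt'_xy).trans hcqdef.symm
      have hc1mem : ∀ f, f ∈ G.edgeSet → u ∉ f → w ∉ f → c1 f ∈ L f := by
        intro f hf hfu hfw
        by_cases h1 : f = s(v,z)
        · subst h1
          rw [hc1vz]
          exact hγvz.1
        · by_cases h2 : f = s(x,y)
          · subst h2
            rw [hc1xy]
            exact hγxy.1
          · rw [hc1other f h1 h2]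
            exact hcOldmem f hf hfu hfw
      have hc1conf : ∀ f g, f ∈ G.edgeSet → u ∉ f → w ∉ f → g ∈ G.edgeSet → u ∉ g → w ∉ g →
          StrongConflict G f g → c1 f ≠ c1 g := by
        intro f g hf hfu hfw hg hgu hgw hconf
        have hval : ∀ e, (c1 e = cOld e ∧ e ≠ s(v,z) ∧ e ≠ s(x,y)) ∨
            (c1 e = γ ∧ (e = s(v,z) ∨ e = s(x,y))) := by
          intro e
          by_cases h1 : e = s(v,z)
          · exact Or.inr ⟨by rw [h1, hc1vz], Or.inl h1⟩
          · by_cases h2 : e = s(x,y)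
            · exact Or.inr ⟨by rw [h2, hc1xy], Or.inr h2⟩
            · exact Or.inl ⟨hc1other e h1 h2, h1, h2⟩
        rcases hval f with ⟨hf1, hfn1, hfn2⟩ | ⟨hf1, hfor⟩ <;>
          rcases hval g with ⟨hg1, hgn1, hgn2⟩ | ⟨hg1, hgor⟩
        · rw [hf1, hg1]
          exact hcOldconf f g hf hfu hfw hg hgu hgw hconf
        · rw [hf1, hg1]
          intro hEq
          rcases hgor with rfl | rfl
          · apply hγvz.2
            rw [hFmem]
            exact ⟨f, ⟨⟨hf, hfu, hfw⟩, conflict_symm hconf⟩, hEq⟩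
          · apply hγxy.2
            rw [hFmem]
            exact ⟨f, ⟨⟨hf, hfu, hfw⟩, conflict_symm hconf⟩, hEq⟩
        · rw [hf1, hg1]
          intro hEq
          rcases hfor with rfl | rfl
          · apply hγvz.2
            rw [hFmem]
            exact ⟨g, ⟨⟨hg, hgu, hgw⟩, hconf⟩, hEq.symm⟩
          · apply hγxy.2
            rw [hFmem]
            exact ⟨g, ⟨⟨hg, hgu, hgw⟩, hconf⟩, hEq.symm⟩
        · exfalso
          rcases hfor with rfl | rfl <;> rcases hgor with rfl | rfl
          · exact hconf.1 rfl
          · exact hnoconf hconf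
          · exact hnoconf (conflict_symm hconf)
          · exact hconf.1 rfl
      apply key c1 hc1mem hc1conf (h3gen c1)
      have hsub : insert ca (insert cb (U.erase γ)) ⊆ L (EE 0) \ F c1 (EE 0) := by
        intro n hn
        rw [Finset.mem_sdiff]
        have hnL : n ∈ L s(u,v) := by
          rcases Finset.mem_insert.mp hn with rfl | hn'
          · exact hF1L (by rw [hF1eq]; exact Finset.mem_insert_self _ _)
          · rcases Finset.mem_insert.mp hn' with rfl | hn''
            · exact hF1L (by rw [hF1eq]; simp)
            · exact hUsubL0 (Finset.mem_of_mem_erase hn'')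
        refine ⟨hnL, ?_⟩
        intro hnF
        have hmem3 := hFsubE1 c1 hnF
        rw [hc1vz, hc1xy, hc1zt] at hmem3
        simp only [Finset.mem_insert, Finset.mem_singleton] at hmem3
        rcases Finset.mem_insert.mp hn with rfl | hn'
        · rcases hmem3 with h | h | h
          · exact hγa h.symm
          · exact hγa h.symm
          · exact hap1 h
        · rcases Finset.mem_insert.mp hn' with rfl | hn''
          · rcases hmem3 with h | h | h
            · exact hγb h.symm
            · exact hγb h.symm
            · exact hbp1 h
          · obtain ⟨hnγ, hnU⟩ := Finset.mem_erase.mp hn''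
            rcases hmem3 with h | h | h
            · exact hnγ h
            · exact hnγ h
            · exact hUF0 n hnU (by rw [hF1eq, h]; simp)
      have hcbU : cb ∉ U := fun h => hUF0 cb h (by rw [hF1eq]; simp)
      have hcaU : ca ∉ U := fun h =>
        hUF0 ca h (by rw [hF1eq]; exact Finset.mem_insert_self _ _)
      have hc4 : (insert ca (insert cb (U.erase γ))).card = 4 := by
        rw [Finset.card_insert_of_notMem, Finset.card_insert_of_notMem,
          Finset.card_erase_of_mem hγU, hUcard]
        · exact fun h => hcbU (Finset.mem_of_mem_erase h)
        · intro h
          rcases Finset.mem_insert.mp h with h' | h'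
          · exact hab1 h'
          · exact hcaU (Finset.mem_of_mem_erase h')
      calc (4:ℕ) = (insert ca (insert cb (U.erase γ))).card := hc4.symm
      _ ≤ (L (EE 0) \ F c1 (EE 0)).card := Finset.card_le_card hsub
      _ ≤ _ := Finset.card_le_card
          (Finset.subset_biUnion_of_mem (fun i : Fin 4 => (L (EE i)) \ (F c1 (EE i)))
            (Finset.mem_univ 0))
end

section
/- Let the 9 edges consisting of a 6-cycle u–v–w–x–y–z–u together with pendant edges uu', ww', yy' be given lists with |L(uu')|, |L(ww')|, |L(yy')| ≥ 3 and lists of size ≥ 5 on the six cycle edges, where the conflict relation is induced by strong edge-coloring in this graph (two edges conflict if adjacent or joined by a third edge). Then there is a choice of colors from the lists giving a strong edge-coloring of these 9 edges. -/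
/-- From a list strictly bigger than a forbidden set, we can pick an element avoiding it. -/
lemma scc_pick_avoid (S T : Finset ℕ) (h : T.card < S.card) : ∃ x ∈ S, x ∉ T := by
  by_contra hcon
  push_neg at hcon
  exact absurd (Finset.card_le_card hcon) (not_le.mpr h)

/-- The 4-cycle `a-b-c-d-a` is 2-choosable. -/
lemma scc_c4 (A B C D : Finset ℕ) (hA : 2 ≤ A.card) (hB : 2 ≤ B.card)
    (hC : 2 ≤ C.card) (hD : 2 ≤ D.card) :
    ∃ a ∈ A, ∃ b ∈ B, ∃ c ∈ C, ∃ d ∈ D, a ≠ b ∧ b ≠ c ∧ c ≠ d ∧ d ≠ a := by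
  have hone : ∀ x : ℕ, ({x} : Finset ℕ).card < 2 := by simp
  by_cases hAC : (A ∩ C).Nonempty
  · obtain ⟨x, hx⟩ := hAC
    rw [Finset.mem_inter] at hx
    obtain ⟨b, hbB, hb⟩ := scc_pick_avoid B {x} (lt_of_lt_of_le (hone x) hB)
    obtain ⟨d, hdD, hd⟩ := scc_pick_avoid D {x} (lt_of_lt_of_le (hone x) hD)
    simp only [Finset.mem_singleton] at hb hd
    exact ⟨x, hx.1, b, hbB, x, hx.2, d, hdD, fun h => hb h.symm, hb, fun h => hd h.symm, hd⟩
  · have hACempty : ∀ x, x ∈ A → x ∉ C := by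
      intro x hxA hxC
      exact hAC ⟨x, Finset.mem_inter.2 ⟨hxA, hxC⟩⟩
    by_cases hAD : ∃ x ∈ A, x ∉ D
    · obtain ⟨a, haA, haD⟩ := hAD
      obtain ⟨b, hbB, hb⟩ := scc_pick_avoid B {a} (lt_of_lt_of_le (hone a) hB)
      obtain ⟨c, hcC, hc⟩ := scc_pick_avoid C {b} (lt_of_lt_of_le (hone b) hC)
      obtain ⟨d, hdD, hd⟩ := scc_pick_avoid D {c} (lt_of_lt_of_le (hone c) hD)
      simp only [Finset.mem_singleton] at hb hc hd
      exact ⟨a, haA, b, hbB, c, hcC, d, hdD, fun h => hb h.symm, fun h => hc h.symm,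
        fun h => hd h.symm, fun h => haD (h ▸ hdD)⟩
    · push_neg at hAD  -- A ⊆ D
      by_cases hCD : ∃ x ∈ C, x ∉ D
      · obtain ⟨c, hcC, hcD⟩ := hCD
        obtain ⟨b, hbB, hb⟩ := scc_pick_avoid B {c} (lt_of_lt_of_le (hone c) hB)
        obtain ⟨a, haA, ha⟩ := scc_pick_avoid A {b} (lt_of_lt_of_le (hone b) hA)
        obtain ⟨d, hdD, hd⟩ := scc_pick_avoid D {a} (lt_of_lt_of_le (hone a) hD)
        simp only [Finset.mem_singleton] at hb ha hd
        exact ⟨a, haA, b, hbB, c, hcC, d, hdD, ha, hb,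
          fun h => hcD (by rw [h]; exact hdD), hd⟩
      · push_neg at hCD  -- C ⊆ D
        -- then D has at least 4 elements
        have hsub : A ∪ C ⊆ D := Finset.union_subset hAD hCD
        have hdisj : Disjoint A C := Finset.disjoint_left.2 hACempty
        have hDcard : 4 ≤ D.card := by
          have h1 := Finset.card_le_card hsub
          rw [Finset.card_union_of_disjoint hdisj] at h1
          omega
        obtain ⟨a, haA⟩ := Finset.card_pos.1 (by omega : 0 < A.card)
        obtain ⟨b, hbB, hb⟩ := scc_pick_avoid B {a} (lt_of_lt_of_le (hone a) hB)
        obtain ⟨c, hcC, hc⟩ := scc_pick_avoid C {b} (lt_of_lt_of_le (hone b) hC)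
        obtain ⟨d, hdD, hd⟩ := scc_pick_avoid D {a, c} (by
          have : ({a, c} : Finset ℕ).card ≤ 2 := by
            apply le_trans (Finset.card_insert_le _ _); simp
          omega)
        simp only [Finset.mem_singleton] at hb hc
        simp only [Finset.mem_insert, Finset.mem_singleton, not_or] at hd
        exact ⟨a, haA, b, hbB, c, hcC, d, hdD, fun h => hb h.symm, fun h => hc h.symm,
          fun h => hd.2 h.symm, fun h => hd.1 h⟩

/-- If not both `i` and `j` are in `s`, then `s ∩ {i,j}` has at most one element. -/
lemma scc_inter_pair (s : Finset (Fin 6)) (i j : Fin 6) (h : ¬(i ∈ s ∧ j ∈ s)) :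
    (s ∩ {i, j}).card ≤ 1 := by
  apply Finset.card_le_one.2
  intro x hx y hy
  simp only [Finset.mem_inter, Finset.mem_insert, Finset.mem_singleton] at hx hy
  rcases hx.2 with rfl | rfl <;> rcases hy.2 with rfl | rfl
  · rfl
  · exact absurd ⟨hx.1, hy.1⟩ h
  · exact absurd ⟨hy.1, hx.1⟩ h
  · rfl

/-- The octahedron `K_{2,2,2}` with parts `{a,d}, {b,e}, {c,f}` is 3-choosable. -/
lemma scc_octa (A B C D E F : Finset ℕ) (hA : 3 ≤ A.card) (hB : 3 ≤ B.card)
    (hC : 3 ≤ C.card) (hD : 3 ≤ D.card) (hE : 3 ≤ E.card) (hF : 3 ≤ F.card) :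
    ∃ a ∈ A, ∃ b ∈ B, ∃ c ∈ C, ∃ d ∈ D, ∃ e ∈ E, ∃ f ∈ F,
      a ≠ b ∧ a ≠ c ∧ a ≠ e ∧ a ≠ f ∧
      b ≠ c ∧ b ≠ d ∧ b ≠ f ∧
      c ≠ d ∧ c ≠ e ∧ d ≠ e ∧ d ≠ f ∧ e ≠ f := by
  have hsdiff : ∀ (S : Finset ℕ) (x : ℕ), 3 ≤ S.card → 2 ≤ (S \ {x}).card := by
    intro S x hS
    have h1 : S.card - ({x} : Finset ℕ).card ≤ (S \ {x}).card := Finset.le_card_sdiff _ _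
    simp only [Finset.card_singleton] at h1
    omega
  by_cases hAD : (A ∩ D).Nonempty
  · obtain ⟨x, hx⟩ := hAD
    rw [Finset.mem_inter] at hx
    obtain ⟨b, hb, c, hc, e, he, f, hf, hbc, hce, hef, hfb⟩ :=
      scc_c4 (B \ {x}) (C \ {x}) (E \ {x}) (F \ {x})
        (hsdiff B x hB) (hsdiff C x hC) (hsdiff E x hE) (hsdiff F x hF)
    rw [Finset.mem_sdiff, Finset.mem_singleton] at hb hc he hf
    exact ⟨x, hx.1, b, hb.1, c, hc.1, x, hx.2, e, he.1, f, hf.1,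
      fun h => hb.2 h.symm, fun h => hc.2 h.symm, fun h => he.2 h.symm, fun h => hf.2 h.symm,
      hbc, fun h => hb.2 h, fun h => hfb h.symm,
      fun h => hc.2 h, hce, fun h => he.2 h.symm, fun h => hf.2 h.symm, hef⟩
  · by_cases hBE : (B ∩ E).Nonempty
    · obtain ⟨x, hx⟩ := hBE
      rw [Finset.mem_inter] at hx
      obtain ⟨a, ha, c, hc, d, hd, f, hf, hac, hcd, hdf, hfa⟩ :=
        scc_c4 (A \ {x}) (C \ {x}) (D \ {x}) (F \ {x})
          (hsdiff A x hA) (hsdiff C x hC) (hsdiff D x hD) (hsdiff F x hF)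
      rw [Finset.mem_sdiff, Finset.mem_singleton] at ha hc hd hf
      exact ⟨a, ha.1, x, hx.1, c, hc.1, d, hd.1, x, hx.2, f, hf.1,
        fun h => ha.2 h, hac, fun h => ha.2 h, fun h => hfa h.symm,
        fun h => hc.2 h.symm, fun h => hd.2 h.symm, fun h => hf.2 h.symm,
        hcd, fun h => hc.2 h, fun h => hd.2 h, hdf, fun h => hf.2 h.symm⟩
    · by_cases hCF : (C ∩ F).Nonempty
      · obtain ⟨x, hx⟩ := hCF
        rw [Finset.mem_inter] at hx
        obtain ⟨a, ha, b, hb, d, hd, e, he, hab, hbd, hde, hea⟩ :=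
          scc_c4 (A \ {x}) (B \ {x}) (D \ {x}) (E \ {x})
            (hsdiff A x hA) (hsdiff B x hB) (hsdiff D x hD) (hsdiff E x hE)
        rw [Finset.mem_sdiff, Finset.mem_singleton] at ha hb hd he
        exact ⟨a, ha.1, b, hb.1, x, hx.1, d, hd.1, e, he.1, x, hx.2,
          hab, fun h => ha.2 h, fun h => hea h.symm, fun h => ha.2 h,
          fun h => hb.2 h, hbd, fun h => hb.2 h,
          fun h => hd.2 h.symm, fun h => he.2 h.symm, hde, fun h => hd.2 h, fun h => he.2 h⟩
      · -- all three opposite pairs have disjoint lists: use Hall's theorem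
        have dAD : Disjoint A D := by
          rw [Finset.disjoint_iff_inter_eq_empty, ← Finset.not_nonempty_iff_eq_empty]
          exact hAD
        have dBE : Disjoint B E := by
          rw [Finset.disjoint_iff_inter_eq_empty, ← Finset.not_nonempty_iff_eq_empty]
          exact hBE
        have dCF : Disjoint C F := by
          rw [Finset.disjoint_iff_inter_eq_empty, ← Finset.not_nonempty_iff_eq_empty]
          exact hCF
        set t : Fin 6 → Finset ℕ := ![A, B, C, D, E, F] with ht
        have htcard : ∀ i : Fin 6, 3 ≤ (t i).card := by
          intro i
          fin_cases i <;> simpa [ht] using by assumption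
        have hall : ∀ s : Finset (Fin 6), s.card ≤ (s.biUnion t).card := by
          intro s
          by_cases hsc : s.card ≤ 3
          · rcases s.eq_empty_or_nonempty with rfl | ⟨i, hi⟩
            · simp
            · have h2 := Finset.card_le_card (Finset.subset_biUnion_of_mem t hi)
              have := htcard i
              omega
          · push_neg at hsc
            have hs6 : s.card ≤ 6 := by
              have := Finset.card_le_univ s
              simpa using this
            have key : ∃ i j : Fin 6, i ∈ s ∧ j ∈ s ∧ Disjoint (t i) (t j) := by
              by_cases h03 : (0 : Fin 6) ∈ s ∧ (3 : Fin 6) ∈ s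
              · exact ⟨0, 3, h03.1, h03.2, by simpa [ht] using dAD⟩
              by_cases h14 : (1 : Fin 6) ∈ s ∧ (4 : Fin 6) ∈ s
              · exact ⟨1, 4, h14.1, h14.2, by simpa [ht] using dBE⟩
              by_cases h25 : (2 : Fin 6) ∈ s ∧ (5 : Fin 6) ∈ s
              · exact ⟨2, 5, h25.1, h25.2, by simpa [ht] using dCF⟩
              exfalso
              have hsub : s ⊆ (s ∩ {0, 3}) ∪ (s ∩ {1, 4}) ∪ (s ∩ {2, 5}) := by
                intro x hx
                fin_cases x <;> simp_all
              have hcard := Finset.card_le_card hsub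
              have h1 := Finset.card_union_le ((s ∩ {0, 3}) ∪ (s ∩ {1, 4})) (s ∩ {2, 5})
              have h2 := Finset.card_union_le (s ∩ ({0, 3} : Finset (Fin 6))) (s ∩ {1, 4})
              have c1 := scc_inter_pair s 0 3 h03
              have c2 := scc_inter_pair s 1 4 h14
              have c3 := scc_inter_pair s 2 5 h25
              omega
            obtain ⟨i, j, hi, hj, hdisj⟩ := key
            have hsub : t i ∪ t j ⊆ s.biUnion t :=
              Finset.union_subset (Finset.subset_biUnion_of_mem t hi)
                (Finset.subset_biUnion_of_mem t hj)
            have h1 := Finset.card_le_card hsub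
            rw [Finset.card_union_of_disjoint hdisj] at h1
            have := htcard i
            have := htcard j
            omega
        obtain ⟨g, hginj, hgmem⟩ :=
          (Finset.all_card_le_biUnion_card_iff_exists_injective t).1 hall
        have hne : ∀ i j : Fin 6, i ≠ j → g i ≠ g j := fun i j hij => fun h => hij (hginj h)
        refine ⟨g 0, by simpa [ht] using hgmem 0, g 1, by simpa [ht] using hgmem 1,
          g 2, by simpa [ht] using hgmem 2, g 3, by simpa [ht] using hgmem 3,
          g 4, by simpa [ht] using hgmem 4, g 5, by simpa [ht] using hgmem 5,
          ?_, ?_, ?_, ?_, ?_, ?_, ?_, ?_, ?_, ?_, ?_, ?_⟩ <;>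
          exact hne _ _ (by decide)

/-- The 6-cycle `u-v-w-x-y-z-u` with pendant edges `uu'`, `ww'`, `yy'`.
Denoting the cycle edges `a = uv, b = vw, c = wx, d = xy, e = yz, f = zu`, the
strong-coloring conflicts are: all pairs of cycle edges except the opposite
pairs `{a,d}, {b,e}, {c,f}`; `uu'` conflicts with `f, a, b, e`; `ww'` with
`a, b, c, d`; `yy'` with `c, d, e, f`; pendant edges do not conflict with each
other.  Given the stated list sizes, a coloring from the lists exists. -/
theorem six_cycle_configuration_colorable
    (Lu' Lw' Ly' La Lb Lc Ld Le Lf : Finset ℕ)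
    (hu' : 3 ≤ Lu'.card) (hw' : 3 ≤ Lw'.card) (hy' : 3 ≤ Ly'.card)
    (ha : 5 ≤ La.card) (hb : 5 ≤ Lb.card) (hc : 5 ≤ Lc.card)
    (hd : 5 ≤ Ld.card) (he : 5 ≤ Le.card) (hf : 5 ≤ Lf.card) :
    ∃ pu ∈ Lu', ∃ pw ∈ Lw', ∃ py ∈ Ly',
      ∃ a ∈ La, ∃ b ∈ Lb, ∃ c ∈ Lc, ∃ d ∈ Ld, ∃ e ∈ Le, ∃ f ∈ Lf,
      a ≠ b ∧ a ≠ c ∧ a ≠ e ∧ a ≠ f ∧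
      b ≠ c ∧ b ≠ d ∧ b ≠ f ∧
      c ≠ d ∧ c ≠ e ∧ d ≠ e ∧ d ≠ f ∧ e ≠ f ∧
      pu ≠ f ∧ pu ≠ a ∧ pu ≠ b ∧ pu ≠ e ∧
      pw ≠ a ∧ pw ≠ b ∧ pw ≠ c ∧ pw ≠ d ∧
      py ≠ c ∧ py ≠ d ∧ py ≠ e ∧ py ≠ f := by
  obtain ⟨pu, hpu⟩ := Finset.card_pos.1 (by omega : 0 < Lu'.card)
  obtain ⟨pw, hpw⟩ := Finset.card_pos.1 (by omega : 0 < Lw'.card)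
  obtain ⟨py, hpy⟩ := Finset.card_pos.1 (by omega : 0 < Ly'.card)
  have hsdiff : ∀ (S : Finset ℕ) (x y : ℕ), 5 ≤ S.card → 3 ≤ (S \ {x, y}).card := by
    intro S x y hS
    have h1 : S.card - ({x, y} : Finset ℕ).card ≤ (S \ {x, y}).card := Finset.le_card_sdiff _ _
    have h2 : ({x, y} : Finset ℕ).card ≤ 2 := by
      apply le_trans (Finset.card_insert_le _ _); simp
    omega
  obtain ⟨a, haa, b, hbb, c, hcc, d, hdd, e, hee, f, hff, H⟩ :=
    scc_octa (La \ {pu, pw}) (Lb \ {pu, pw}) (Lc \ {pw, py}) (Ld \ {pw, py})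
      (Le \ {pu, py}) (Lf \ {pu, py})
      (hsdiff _ _ _ ha) (hsdiff _ _ _ hb) (hsdiff _ _ _ hc)
      (hsdiff _ _ _ hd) (hsdiff _ _ _ he) (hsdiff _ _ _ hf)
  simp only [Finset.mem_sdiff, Finset.mem_insert, Finset.mem_singleton, not_or] at haa hbb hcc hdd hee hff
  obtain ⟨h1, h2, h3, h4, h5, h6, h7, h8, h9, h10, h11, h12⟩ := H
  exact ⟨pu, hpu, pw, hpw, py, hpy, a, haa.1, b, hbb.1, c, hcc.1, d, hdd.1, e, hee.1, f, hff.1,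
    h1, h2, h3, h4, h5, h6, h7, h8, h9, h10, h11, h12,
    fun h => hff.2.1 h.symm, fun h => haa.2.1 h.symm, fun h => hbb.2.1 h.symm,
    fun h => hee.2.1 h.symm,
    fun h => haa.2.2 h.symm, fun h => hbb.2.2 h.symm, fun h => hcc.2.1 h.symm,
    fun h => hdd.2.1 h.symm,
    fun h => hcc.2.2 h.symm, fun h => hdd.2.2 h.symm, fun h => hee.2.2 h.symm,
    fun h => hff.2.2 h.symm⟩
end
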